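/- arXiv:1908.09030 — 3 statements merged into one kernel-verified Lean document; each statement's English description precedes it below -/
import Mathlib

section
/- Let H = (E, {X_1, …, X_n}) be a hypergraph and t_1, …, t_n integers with 0 ≤ t_i ≤ |X_i| such that properties (H2), (H3), and (T) hold, and let ρ be the polymatroid on E given by ρ(A) = Σ_{i=1}^n min(|A ∩ X_i|, t_i). Then for every positive integer k there is a bijection from the set of proper k-colorings of the line graph G_H onto Δ_ρ^k. Consequently, the least k for which ρ is k-decomposable equals the chromatic number χ(G_H), and for every positive integer k the cardinality of Δ_ρ^k equals the number of proper k-colorings of G_H. -/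
variable {α : Type*}

/-- `ρ` is an (integer) polymatroid on ground set `E`. -/
def IsPolymatroidOn [DecidableEq α] (E : Finset α) (ρ : Finset α → ℤ) : Prop :=
  ρ ∅ = 0 ∧
  (∀ A B : Finset α, A ⊆ B → B ⊆ E → ρ A ≤ ρ B) ∧
  (∀ A B : Finset α, A ⊆ E → B ⊆ E → ρ (A ∪ B) + ρ (A ∩ B) ≤ ρ A + ρ B)

/-- `r` is the rank function of a matroid on `E` (matroids are exactly the
`1`-polymatroids). -/
def IsMatroidRankOn [DecidableEq α] (E : Finset α) (r : Finset α → ℤ) : Prop :=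
  IsPolymatroidOn E r ∧ ∀ e ∈ E, r {e} ≤ 1

/-- `ρ` is a sum of `k` matroid rank functions on `E`. -/
def KDecomposable [DecidableEq α] (k : ℕ) (E : Finset α) (ρ : Finset α → ℤ) : Prop :=
  ∃ M : Fin k → Finset α → ℤ,
    (∀ i, IsMatroidRankOn E (M i)) ∧ ∀ X ⊆ E, ρ X = ∑ i, M i X

/-- `Δ_ρ^k`: the set of `k`-tuples of matroids on `E` whose rank functions sum to `ρ`.
(Matroids on `E` are recorded via their canonical extension `X ↦ r (X ∩ E)`, so that
each matroid on `E` corresponds to exactly one function.) -/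
def Delta [DecidableEq α] (k : ℕ) (E : Finset α) (ρ : Finset α → ℤ) :
    Set (Fin k → Finset α → ℤ) :=
  {M | (∀ i, IsMatroidRankOn E (M i)) ∧ (∀ i X, M i X = M i (X ∩ E)) ∧
    ∀ X ⊆ E, ρ X = ∑ i, M i X}

/-- The line graph of the (multi-)hypergraph with hyperedges `X 0, …, X (n-1)`. -/
def lineGraph [DecidableEq α] {n : ℕ} (X : Fin n → Finset α) : SimpleGraph (Fin n) where
  Adj i j := i ≠ j ∧ (X i ∩ X j).Nonempty
  symm := by
    refine ⟨?_⟩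
    rintro i j ⟨hij, hne⟩
    exact ⟨hij.symm, by rwa [Finset.inter_comm]⟩
  loopless := by refine ⟨?_⟩; rintro i ⟨h, -⟩; exact h rfl

/-- A proper `k`-coloring of a graph. -/
def ProperColoring {V : Type*} (G : SimpleGraph V) {k : ℕ} (c : V → Fin k) : Prop :=
  ∀ u v, G.Adj u v → c u ≠ c v

/-- `w e`: the number of hyperedges containing `e`. -/
def hypW [DecidableEq α] {n : ℕ} (X : Fin n → Finset α) (e : α) : ℕ :=
  (Finset.univ.filter fun i => e ∈ X i).card

/-- The polymatroid `ρ(A) = Σ_i min(|A ∩ X_i|, t_i)`. -/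
def hypRho [DecidableEq α] {n : ℕ} (X : Fin n → Finset α) (t : Fin n → ℤ) :
    Finset α → ℤ :=
  fun A => ∑ i, min (((A ∩ X i).card : ℤ)) (t i)

namespace HypDev

open Finset

/-- the rank function tuple associated with a coloring -/
def phi [DecidableEq α] {n k : ℕ} (X : Fin n → Finset α) (t : Fin n → ℤ)
    (c : Fin n → Fin k) (j : Fin k) (A : Finset α) : ℤ :=
  ∑ i ∈ Finset.univ.filter (fun i => c i = j), min (((A ∩ X i).card : ℤ)) (t i)

lemma phi_sum [DecidableEq α] {n k : ℕ} (X : Fin n → Finset α) (t : Fin n → ℤ)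
    (c : Fin n → Fin k) (A : Finset α) :
    ∑ j, phi X t c j A = hypRho X t A :=
  Finset.sum_fiberwise _ _ _

/-- Context: a hypergraph satisfying (H2),(H3),(T) together with a `k`-tuple of
matroid rank functions decomposing `ρ`. -/
structure DCtx (α : Type*) [DecidableEq α] where
  n : ℕ
  E : Finset α
  X : Fin n → Finset α
  t : Fin n → ℤ
  k : ℕ
  M : Fin k → Finset α → ℤ
  hXsub : ∀ i, X i ⊆ E
  hXne : ∀ i, (X i).Nonempty
  hXinj : Function.Injective X
  ht2 : ∀ i, t i ≤ ((X i).card : ℤ)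
  hH2 : ∀ i j, i ≠ j → (X i ∩ X j).card ≤ 1
  hH3 : ¬ ∃ (a b c : α) (i j l : Fin n),
      a ≠ b ∧ a ≠ c ∧ b ≠ c ∧ X i = {a, b} ∧ X j = {a, c} ∧ X l = {b, c}
  hT : ∀ i, t i = 1 ∨
      ((∃ e ∈ X i, (hypW X e : ℤ) ≤ t i) ∧ t i < ((X i).card : ℤ))
  hM0 : ∀ j, M j ∅ = 0
  hMmono : ∀ j A B, A ⊆ B → B ⊆ E → M j A ≤ M j B
  hMsub : ∀ j A B, A ⊆ E → B ⊆ E → M j (A ∪ B) + M j (A ∩ B) ≤ M j A + M j B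
  hM1 : ∀ j e, e ∈ E → M j {e} ≤ 1
  hsum : ∀ A ⊆ E, hypRho X t A = ∑ j, M j A

namespace DCtx

variable {α : Type*} [DecidableEq α] (C : DCtx α)

lemma ht1 : ∀ i, 1 ≤ C.t i := by
  intro i
  rcases C.hT i with h | ⟨⟨e, he, hw⟩, -⟩
  · omega
  · refine le_trans ?_ hw
    have : 0 < hypW C.X e := by
      apply Finset.card_pos.2 ⟨i, by simp [hypW, he]⟩
    exact_mod_cast this

lemma hM_nonneg (j : Fin C.k) {A : Finset α} (hA : A ⊆ C.E) : 0 ≤ C.M j A := by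
  have := C.hMmono j ∅ A (Finset.empty_subset _) hA
  rw [C.hM0] at this; exact this

lemma hM01 (j : Fin C.k) {e : α} (he : e ∈ C.E) :
    C.M j {e} = 0 ∨ C.M j {e} = 1 := by
  have h1 := C.hM1 j e he
  have h0 := C.hM_nonneg j (A := {e}) (by simpa using he)
  omega

lemma subadd (j : Fin C.k) : ∀ (A : Finset α), A ⊆ C.E →
    C.M j A ≤ ∑ e ∈ A, C.M j {e} := by
  intro A
  induction A using Finset.induction with
  | empty => intro _; simp [C.hM0]
  | @insert e A he ih =>
    intro hsub
    have hA : A ⊆ C.E := (Finset.subset_insert e A).trans hsub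
    have hsub' := C.hMsub j {e} A (by
      intro x hx; simp at hx; subst hx; exact hsub (mem_insert_self _ _)) hA
    have hins : ({e} : Finset α) ∪ A = insert e A := by
      ext x; simp
    have hint : ({e} : Finset α) ∩ A = ∅ := by
      ext x; simp; rintro rfl; exact he
    rw [hins, hint, C.hM0] at hsub'
    rw [Finset.sum_insert he]
    have := ih hA
    omega

/-- deficiency of a set in matroid `j` -/
def defc (j : Fin C.k) (A : Finset α) : ℤ := (∑ e ∈ A, C.M j {e}) - C.M j A

lemma defc_nonneg (j : Fin C.k) {A : Finset α} (hA : A ⊆ C.E) : 0 ≤ C.defc j A := by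
  have := C.subadd j A hA
  unfold defc; omega

lemma defc_submod (j : Fin C.k) {A B : Finset α} (hA : A ⊆ C.E) (hB : B ⊆ C.E) :
    C.defc j A + C.defc j B ≤ C.defc j (A ∪ B) + C.defc j (A ∩ B) := by
  have h1 := C.hMsub j A B hA hB
  have h2 : (∑ e ∈ A ∪ B, C.M j {e}) + (∑ e ∈ A ∩ B, C.M j {e})
      = (∑ e ∈ A, C.M j {e}) + (∑ e ∈ B, C.M j {e}) :=
    Finset.sum_union_inter
  unfold defc; omega

lemma defc_le_insert (j : Fin C.k) {A : Finset α} {e : α} (hA : A ⊆ C.E)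
    (he : e ∈ C.E) : C.defc j A ≤ C.defc j (insert e A) := by
  by_cases hmem : e ∈ A
  · rw [Finset.insert_eq_self.2 hmem]
  · have h := C.defc_submod j (A := A) (B := {e}) hA (by simpa using he)
    have h0 : A ∩ {e} = ∅ := by ext x; simp; rintro hx rfl; exact hmem hx
    have h1 : A ∪ {e} = insert e A := by ext x; simp [or_comm]
    rw [h0, h1] at h
    have h2 : C.defc j ∅ = 0 := by simp [defc, C.hM0]
    have h3 : C.defc j {e} = 0 := by
      simp [defc]
    omega

lemma defc_mono (j : Fin C.k) {A B : Finset α} (hAB : A ⊆ B) (hB : B ⊆ C.E) :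
    C.defc j A ≤ C.defc j B := by
  classical
  have key : ∀ (s : Finset α), s ⊆ C.E → ∀ A ⊆ C.E, C.defc j A ≤ C.defc j (A ∪ s) := by
    intro s
    induction s using Finset.induction with
    | empty => intro _ A hA; simp
    | @insert e s he ih =>
      intro hsub A hA
      have hs : s ⊆ C.E := (Finset.subset_insert e s).trans hsub
      have h1 := ih hs A hA
      have h2 : A ∪ insert e s = insert e (A ∪ s) := Finset.union_insert e A s
      rw [h2]
      refine h1.trans (C.defc_le_insert j ?_ (hsub (mem_insert_self _ _)))
      exact Finset.union_subset hA hs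
  have := key B hB A (hAB.trans hB)
  rwa [Finset.union_eq_right.2 hAB] at this

lemma rank_erase_of_zero (j : Fin C.k) {A : Finset α} {e : α} (hA : A ⊆ C.E)
    (he : e ∈ A) (hz : C.M j {e} = 0) :
    C.M j A = C.M j (A.erase e) ∧ C.defc j A = C.defc j (A.erase e) := by
  have hsub := C.hMsub j (A.erase e) {e} ((Finset.erase_subset _ _).trans hA)
    (by simpa using hA he)
  have h1 : A.erase e ∪ {e} = A := by
    ext x; simp [Finset.mem_erase]
    constructor
    · rintro (rfl | ⟨-, h⟩) <;> [exact he; exact h]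
    · intro hx; by_cases hxe : x = e <;> simp [hxe, hx]
  have h2 : A.erase e ∩ {e} = ∅ := by ext x; simp
  rw [h1, h2, C.hM0, hz] at hsub
  have hmono := C.hMmono j (A.erase e) A (Finset.erase_subset _ _) hA
  have hrank : C.M j A = C.M j (A.erase e) := by omega
  refine ⟨hrank, ?_⟩
  have hsumer : (∑ x ∈ A.erase e, C.M j {x}) + C.M j {e} = ∑ x ∈ A, C.M j {x} :=
    Finset.sum_erase_add _ _ he
  unfold defc; omega


/-- combinatorial excess of hyperedge `l` on a set `A` -/
def excess (l : Fin C.n) (A : Finset α) : ℤ :=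
  ((A ∩ C.X l).card : ℤ) - min ((A ∩ C.X l).card : ℤ) (C.t l)

lemma excess_nonneg (l : Fin C.n) (A : Finset α) : 0 ≤ C.excess l A := by
  unfold excess; omega

lemma excess_eq_zero {l : Fin C.n} {A : Finset α}
    (h : ((A ∩ C.X l).card : ℤ) ≤ C.t l) : C.excess l A = 0 := by
  unfold excess; omega

lemma rho_singleton (e : α) : hypRho C.X C.t {e} = (hypW C.X e : ℤ) := by
  unfold hypRho hypW
  rw [Finset.card_filter]
  push_cast
  apply Finset.sum_congr rfl
  intro l _
  have ht := C.ht1 l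
  by_cases h : e ∈ C.X l
  · rw [Finset.singleton_inter_of_mem h]
    simp [h]; omega
  · rw [Finset.singleton_inter_of_notMem h]
    simp [h]; omega

lemma sum_w (A : Finset α) :
    ∑ e ∈ A, (hypW C.X e : ℤ) = ∑ l, ((A ∩ C.X l).card : ℤ) := by
  have h1 : ∀ e, (hypW C.X e : ℤ) = ∑ l, (if e ∈ C.X l then (1:ℤ) else 0) := by
    intro e; unfold hypW; rw [Finset.card_filter]; push_cast; rfl
  simp only [h1]
  rw [Finset.sum_comm]
  apply Finset.sum_congr rfl
  intro l _
  rw [Finset.sum_boole, Finset.filter_mem_eq_inter]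

lemma defc_total {A : Finset α} (hA : A ⊆ C.E) :
    ∑ j, C.defc j A = ∑ l, C.excess l A := by
  have h1 : ∑ j, C.defc j A = (∑ e ∈ A, hypRho C.X C.t {e}) - hypRho C.X C.t A := by
    unfold defc
    rw [Finset.sum_sub_distrib, Finset.sum_comm, ← C.hsum A hA]
    congr 1
    apply Finset.sum_congr rfl
    intro e he
    exact (C.hsum {e} (by simpa using hA he)).symm
  rw [h1]
  have h2 : ∀ e ∈ A, hypRho C.X C.t {e} = (hypW C.X e : ℤ) := fun e _ => C.rho_singleton e
  rw [Finset.sum_congr rfl h2, C.sum_w]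
  unfold hypRho excess
  rw [← Finset.sum_sub_distrib]

lemma defc_zero_of_total {A : Finset α} (hA : A ⊆ C.E)
    (h : ∑ l, C.excess l A = 0) : ∀ j, C.defc j A = 0 := by
  have := C.defc_total hA
  rw [h] at this
  intro j
  have hnn : ∀ j ∈ (Finset.univ : Finset (Fin C.k)), 0 ≤ C.defc j A :=
    fun j _ => C.defc_nonneg j hA
  exact (Finset.sum_eq_zero_iff_of_nonneg hnn).1 this j (Finset.mem_univ j)

lemma excess_sum_eq {A : Finset α} (I₀ : Finset (Fin C.n))
    (h : ∀ l ∉ I₀, C.excess l A = 0) :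
    ∑ l, C.excess l A = ∑ l ∈ I₀, C.excess l A :=
  (Finset.sum_subset (Finset.subset_univ I₀) (fun l _ hl => h l hl)).symm

lemma pair_container {x y : α} (hxy : x ≠ y) {l l' : Fin C.n}
    (h1 : x ∈ C.X l) (h2 : y ∈ C.X l) (h3 : x ∈ C.X l') (h4 : y ∈ C.X l') :
    l = l' := by
  by_contra hne
  have hsub : ({x, y} : Finset α) ⊆ C.X l ∩ C.X l' := by
    intro a ha; simp at ha; rcases ha with rfl | rfl <;> simp [h1, h2, h3, h4]
  have := (Finset.card_le_card hsub).trans (C.hH2 l l' hne)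
  rw [Finset.card_pair hxy] at this
  omega

lemma inter_card_le_one {i l : Fin C.n} (hne : l ≠ i) {A : Finset α}
    (hA : A ⊆ C.X i) : (A ∩ C.X l).card ≤ 1 := by
  have hsub : A ∩ C.X l ⊆ C.X i ∩ C.X l :=
    Finset.inter_subset_inter hA (Finset.Subset.refl _)
  exact (Finset.card_le_card hsub).trans (C.hH2 i l (fun h => hne h.symm))

lemma Dloc_edge {i : Fin C.n} {A : Finset α} (hA : A ⊆ C.X i) :
    ∑ l, C.excess l A = max 0 ((A.card : ℤ) - C.t i) := by
  rw [C.excess_sum_eq {i} (by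
    intro l hl
    simp at hl
    apply C.excess_eq_zero
    have := C.inter_card_le_one hl hA
    have := C.ht1 l
    omega)]
  rw [Finset.sum_singleton]
  unfold excess
  rw [Finset.inter_eq_left.2 hA]
  omega

lemma defc_small {i : Fin C.n} {A : Finset α} (hA : A ⊆ C.X i)
    (hcard : (A.card : ℤ) ≤ C.t i) : ∀ j, C.defc j A = 0 := by
  apply C.defc_zero_of_total (hA.trans (C.hXsub i))
  rw [C.Dloc_edge hA]
  omega

lemma rank_small {i : Fin C.n} {A : Finset α} (hA : A ⊆ C.X i)
    (hcard : (A.card : ℤ) ≤ C.t i) (j : Fin C.k) :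
    C.M j A = ∑ e ∈ A, C.M j {e} := by
  have := C.defc_small hA hcard j
  unfold defc at this; omega

/-- `x` and `y` are parallel rank-one elements in matroid `j`. -/
def Par (j : Fin C.k) (x y : α) : Prop :=
  x ≠ y ∧ C.M j {x} = 1 ∧ C.M j {y} = 1 ∧ C.M j {x, y} = 1

lemma Par.symm' {j : Fin C.k} {x y : α} (h : C.Par j x y) : C.Par j y x := by
  obtain ⟨h1, h2, h3, h4⟩ := h
  exact ⟨h1.symm, h3, h2, by rwa [Finset.pair_comm]⟩

lemma defc_pair {j : Fin C.k} {x y : α} (hxy : x ≠ y) :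
    C.defc j {x, y} = C.M j {x} + C.M j {y} - C.M j {x, y} := by
  unfold defc
  rw [Finset.sum_pair hxy]

lemma par_iff {j : Fin C.k} {x y : α} (hxy : x ≠ y) (hx : x ∈ C.E) (hy : y ∈ C.E) :
    C.Par j x y ↔ 1 ≤ C.defc j {x, y} := by
  have hpair : ({x, y} : Finset α) ⊆ C.E := by
    intro a ha; simp at ha; rcases ha with rfl | rfl <;> assumption
  have hxy1 := C.hM01 j hx
  have hxy2 := C.hM01 j hy
  have hmx : C.M j {x} ≤ C.M j {x, y} := by
    apply C.hMmono j _ _ _ hpair; intro a ha; simp at ha; simp [ha]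
  have hmy : C.M j {y} ≤ C.M j {x, y} := by
    apply C.hMmono j _ _ _ hpair; intro a ha; simp at ha; simp [ha]
  rw [C.defc_pair hxy]
  constructor
  · rintro ⟨-, h2, h3, h4⟩; omega
  · intro h
    exact ⟨hxy, by omega, by omega, by omega⟩

lemma par_defc {j : Fin C.k} {x y : α} (h : C.Par j x y) : C.defc j {x, y} = 1 := by
  rw [C.defc_pair h.1, h.2.1, h.2.2.1, h.2.2.2]; norm_num

lemma par_trans {j : Fin C.k} {x y z : α} (hx : x ∈ C.E) (hy : y ∈ C.E) (hz : z ∈ C.E)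
    (h1 : C.Par j x y) (h2 : C.Par j x z) (hyz : y ≠ z) : C.Par j y z := by
  obtain ⟨hxy, hMx, hMy, hMxy⟩ := h1
  obtain ⟨hxz, -, hMz, hMxz⟩ := h2
  have hsub3 : ({x, y, z} : Finset α) ⊆ C.E := by
    intro a ha; simp at ha; rcases ha with rfl | rfl | rfl <;> assumption
  have hU : ({x, y} : Finset α) ∪ {x, z} = {x, y, z} := by
    ext a
    simp only [Finset.mem_union, Finset.mem_insert, Finset.mem_singleton]
    tauto
  have hI : ({x, y} : Finset α) ∩ {x, z} = {x} := by
    ext a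
    simp only [Finset.mem_inter, Finset.mem_insert, Finset.mem_singleton]
    constructor
    · rintro ⟨ha1, ha2⟩
      rcases ha1 with ha1 | ha1
      · exact ha1
      · rcases ha2 with ha2 | ha2
        · exact ha2
        · exact absurd (ha1.symm.trans ha2) hyz
    · intro ha; exact ⟨Or.inl ha, Or.inl ha⟩
  have hsm := C.hMsub j {x, y} {x, z} (by
      intro a ha; simp at ha; rcases ha with rfl | rfl <;> assumption) (by
      intro a ha; simp at ha; rcases ha with rfl | rfl <;> assumption)
  rw [hU, hI] at hsm
  have hmono : C.M j {y, z} ≤ C.M j {x, y, z} := by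
    apply C.hMmono j _ _ _ hsub3
    intro a ha; simp at ha; simp; tauto
  have hmono2 : C.M j {y} ≤ C.M j {y, z} := by
    apply C.hMmono j _ _ _ (by intro a ha; simp at ha; rcases ha with rfl | rfl <;> assumption)
    intro a ha; simp at ha; simp [ha]
  exact ⟨hyz, hMy, hMz, by omega⟩

lemma par_erase {j : Fin C.k} {x y : α} {A : Finset α} (hA : A ⊆ C.E)
    (h : C.Par j x y) (hx : x ∈ A) (hy : y ∈ A) :
    C.M j A = C.M j (A.erase y) ∧ C.defc j A = C.defc j (A.erase y) + 1 := by
  obtain ⟨hxy, hMx, hMy, hMxy⟩ := h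
  have hU : A.erase y ∪ {x, y} = A := by
    apply Finset.Subset.antisymm
    · apply Finset.union_subset (Finset.erase_subset _ _)
      intro a ha; simp at ha; rcases ha with rfl | rfl <;> assumption
    · intro a ha
      by_cases hay : a = y
      · exact Finset.mem_union_right _ (by simp [hay])
      · exact Finset.mem_union_left _ (Finset.mem_erase.2 ⟨hay, ha⟩)
  have hI : A.erase y ∩ {x, y} = {x} := by
    ext a
    simp only [Finset.mem_inter, Finset.mem_erase, Finset.mem_insert, Finset.mem_singleton]
    constructor
    · rintro ⟨⟨hay, -⟩, ha2⟩
      rcases ha2 with ha2 | ha2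
      · exact ha2
      · exact absurd ha2 hay
    · rintro rfl
      exact ⟨⟨hxy, hx⟩, Or.inl rfl⟩
  have hsm := C.hMsub j (A.erase y) {x, y} ((Finset.erase_subset _ _).trans hA) (by
    intro a ha; simp at ha
    rcases ha with rfl | rfl <;> exact hA (by assumption))
  rw [hU, hI] at hsm
  have hmono := C.hMmono j (A.erase y) A (Finset.erase_subset _ _) hA
  have hrank : C.M j A = C.M j (A.erase y) := by omega
  refine ⟨hrank, ?_⟩
  have hsumer : (∑ a ∈ A.erase y, C.M j {a}) + C.M j {y} = ∑ a ∈ A, C.M j {a} :=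
    Finset.sum_erase_add _ _ hy
  unfold defc; omega

lemma rank_one_of_hub (j : Fin C.k) :
    ∀ (m : ℕ) (A : Finset α), A.card = m → A ⊆ C.E → ∀ x ∈ A,
    (∀ y ∈ A, y ≠ x → C.Par j x y) → (∃ y ∈ A, y ≠ x) → C.M j A = 1 := by
  intro m
  induction m using Nat.strong_induction_on with
  | _ m ih =>
    intro A hcard hA x hx hpar ⟨y₀, hy₀, hy₀x⟩
    by_cases hAeq : A = {x, y₀}
    · rw [hAeq]
      exact (hpar y₀ hy₀ hy₀x).2.2.2
    · have hexz : ∃ z ∈ A, z ≠ x ∧ z ≠ y₀ := by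
        by_contra hc
        push_neg at hc
        apply hAeq
        apply Finset.Subset.antisymm
        · intro a ha
          by_cases hax : a = x
          · simp [hax]
          · simp [hc a ha hax]
        · intro a ha; simp at ha; rcases ha with rfl | rfl <;> assumption
      obtain ⟨z, hz, hzx, hzy⟩ := hexz
      have hpz := hpar z hz hzx
      have her := C.par_erase hA hpz hx hz
      rw [her.1]
      apply ih (A.erase z).card (by
        rw [Finset.card_erase_of_mem hz, ← hcard]
        have : 0 < A.card := Finset.card_pos.2 ⟨z, hz⟩
        omega) _ rfl ((Finset.erase_subset _ _).trans hA) x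
        (Finset.mem_erase.2 ⟨(fun h => hzx h.symm : x ≠ z), hx⟩)
      · intro y hy hyx
        exact hpar y (Finset.mem_of_mem_erase hy) hyx
      · exact ⟨y₀, Finset.mem_erase.2 ⟨(fun h => hzy h.symm : y₀ ≠ z), hy₀⟩, hy₀x⟩


lemma sum_singles_eq_card (j : Fin C.k) {A : Finset α}
    (h : ∀ e ∈ A, C.M j {e} = 1) : ∑ e ∈ A, C.M j {e} = (A.card : ℤ) := by
  rw [Finset.sum_congr rfl h]
  simp

lemma sum_defc_pair_le {A : Finset α} (hA : A ⊆ C.E) {j j' : Fin C.k} (hne : j ≠ j') :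
    C.defc j A + C.defc j' A ≤ ∑ l, C.excess l A := by
  rw [← C.defc_total hA]
  have h1 : C.defc j A + C.defc j' A = ∑ x ∈ ({j, j'} : Finset (Fin C.k)), C.defc x A := by
    rw [Finset.sum_pair hne]
  rw [h1]
  apply Finset.sum_le_sum_of_subset_of_nonneg (Finset.subset_univ _)
  intro x _ _
  exact C.defc_nonneg x hA

lemma sum_defc_triple_le {A : Finset α} (hA : A ⊆ C.E) {j j' j'' : Fin C.k}
    (h1 : j ≠ j') (h2 : j ≠ j'') (h3 : j' ≠ j'') :
    C.defc j A + C.defc j' A + C.defc j'' A ≤ ∑ l, C.excess l A := by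
  rw [← C.defc_total hA]
  have he : C.defc j A + C.defc j' A + C.defc j'' A
      = ∑ x ∈ ({j, j', j''} : Finset (Fin C.k)), C.defc x A := by
    rw [Finset.sum_insert (by simp [h1, h2]), Finset.sum_pair h3, add_assoc]
  rw [he]
  apply Finset.sum_le_sum_of_subset_of_nonneg (Finset.subset_univ _)
  intro x _ _
  exact C.defc_nonneg x hA

lemma tplus_card_facts {i : Fin C.n} {S : Finset α} (hS : S ⊆ C.X i)
    (hc : (S.card : ℤ) = C.t i + 1) : 2 ≤ S.card := by
  have := C.ht1 i; omega

/-- swap invariance of the deficient color of `(t+1)`-subsets -/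
lemma swap_color {i : Fin C.n} {S : Finset α} (hS : S ⊆ C.X i)
    (hc : (S.card : ℤ) = C.t i + 1) {j : Fin C.k} (hj : 1 ≤ C.defc j S)
    {f g : α} (hf : f ∈ S) (hg : g ∈ C.X i) (hgS : g ∉ S) :
    1 ≤ C.defc j (insert g (S.erase f)) := by
  set S'' := insert g (S.erase f) with hS''def
  set V := insert g S with hVdef
  have hfx : f ∈ C.X i := hS hf
  have hgf : g ≠ f := fun h => hgS (h ▸ hf)
  have hS''sub : S'' ⊆ C.X i := by
    intro a ha
    rcases Finset.mem_insert.1 ha with rfl | ha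
    · exact hg
    · exact hS (Finset.mem_of_mem_erase ha)
  have hS''card : (S''.card : ℤ) = C.t i + 1 := by
    rw [hS''def, Finset.card_insert_of_notMem (fun h => hgS (Finset.mem_of_mem_erase h)),
      Finset.card_erase_of_mem hf]
    have h2 := C.tplus_card_facts hS hc
    push_cast
    omega
  have hVsub : V ⊆ C.X i := by
    intro a ha
    rcases Finset.mem_insert.1 ha with rfl | ha
    · exact hg
    · exact hS ha
  have hVE : V ⊆ C.E := hVsub.trans (C.hXsub i)
  have hVcard : (V.card : ℤ) = C.t i + 2 := by
    rw [hVdef, Finset.card_insert_of_notMem hgS]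
    push_cast; omega
  have hDV : ∑ l, C.excess l V = 2 := by
    rw [C.Dloc_edge hVsub]; omega
  have hSV : S ⊆ V := Finset.subset_insert _ _
  have hS''V : S'' ⊆ V := by
    intro a ha
    rcases Finset.mem_insert.1 ha with rfl | ha
    · exact Finset.mem_insert_self _ _
    · exact Finset.mem_insert_of_mem (Finset.mem_of_mem_erase ha)
  by_contra hcon
  have hzero : C.defc j S'' = 0 := by
    have := C.defc_nonneg j (hS''sub.trans (C.hXsub i)); omega
  -- the unique deficient color of S''
  have hDS'' : ∑ l, C.excess l S'' = 1 := by
    rw [C.Dloc_edge hS''sub]; omega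
  have hex'' : ∃ j'', 1 ≤ C.defc j'' S'' := by
    by_contra hc2
    push_neg at hc2
    have : ∑ j'', C.defc j'' S'' = 1 := by rw [C.defc_total (hS''sub.trans (C.hXsub i)), hDS'']
    have hzz : ∀ j'' ∈ Finset.univ, C.defc j'' S'' = 0 := by
      intro j'' _
      have := hc2 j''
      have := C.defc_nonneg j'' (hS''sub.trans (C.hXsub i))
      omega
    rw [Finset.sum_congr rfl hzz] at this
    simp at this
  obtain ⟨j'', hj''⟩ := hex''
  have hjj'' : j ≠ j'' := by rintro rfl; omega
  -- h : an element of S.erase f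
  have hef : ∃ h, h ∈ S.erase f := by
    have h2 := C.tplus_card_facts hS hc
    have : 0 < (S.erase f).card := by rw [Finset.card_erase_of_mem hf]; omega
    exact Finset.card_pos.1 this
  obtain ⟨h, hh⟩ := hef
  have hhS : h ∈ S := Finset.mem_of_mem_erase hh
  have hhf : h ≠ f := (Finset.mem_erase.1 hh).1
  have hhg : h ≠ g := fun hq => hgS (hq ▸ hhS)
  have hhV : h ∈ V := hSV hhS
  have hhS'' : h ∈ S'' := Finset.mem_insert_of_mem hh
  set W := V.erase h with hWdef
  have hWsub : W ⊆ C.X i := (Finset.erase_subset _ _).trans hVsub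
  have hWcard : (W.card : ℤ) = C.t i + 1 := by
    rw [hWdef, Finset.card_erase_of_mem hhV]
    have ht := C.ht1 i
    have : 2 ≤ V.card := by omega
    push_cast; omega
  have hDW : ∑ l, C.excess l W = 1 := by rw [C.Dloc_edge hWsub]; omega
  have hexW : ∃ j₃, 1 ≤ C.defc j₃ W := by
    by_contra hc2
    push_neg at hc2
    have : ∑ j₃, C.defc j₃ W = 1 := by rw [C.defc_total (hWsub.trans (C.hXsub i)), hDW]
    have hzz : ∀ j₃ ∈ Finset.univ, C.defc j₃ W = 0 := by
      intro j₃ _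
      have := hc2 j₃
      have := C.defc_nonneg j₃ (hWsub.trans (C.hXsub i))
      omega
    rw [Finset.sum_congr rfl hzz] at this
    simp at this
  obtain ⟨j₃, hj₃⟩ := hexW
  have hWV : W ⊆ V := Finset.erase_subset _ _
  have hmj : C.defc j S ≤ C.defc j V := C.defc_mono j hSV hVE
  have hmj'' : C.defc j'' S'' ≤ C.defc j'' V := C.defc_mono j'' hS''V hVE
  by_cases h3j : j₃ = j
  · -- defc j V ≥ 2 via submodularity with S and W
    subst h3j
    have hUn : S ∪ W = V := by
      apply Finset.Subset.antisymm
      · exact Finset.union_subset hSV hWV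
      · intro a ha
        by_cases hah : a = h
        · exact Finset.mem_union_left _ (hah ▸ hhS)
        · exact Finset.mem_union_right _ (Finset.mem_erase.2 ⟨hah, ha⟩)
    have hIn : S ∩ W = S.erase h := by
      rw [hWdef, Finset.inter_erase, Finset.inter_eq_left.2 hSV]
    have hsm := C.defc_submod j₃ (hS.trans (C.hXsub i)) (hWsub.trans (C.hXsub i))
    rw [hUn, hIn] at hsm
    have hz : C.defc j₃ (S.erase h) = 0 := by
      apply C.defc_small ((Finset.erase_subset _ _).trans hS)
      rw [Finset.card_erase_of_mem hhS]
      have h2 := C.tplus_card_facts hS hc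
      push_cast; omega
    have hpair := C.sum_defc_pair_le hVE hjj''
    rw [hDV] at hpair
    omega
  · by_cases h3j'' : j₃ = j''
    · subst h3j''
      have hUn : S'' ∪ W = V := by
        apply Finset.Subset.antisymm
        · exact Finset.union_subset hS''V hWV
        · intro a ha
          by_cases hah : a = h
          · exact Finset.mem_union_left _ (hah ▸ hhS'')
          · exact Finset.mem_union_right _ (Finset.mem_erase.2 ⟨hah, ha⟩)
      have hIn : S'' ∩ W = S''.erase h := by
        rw [hWdef, Finset.inter_erase, Finset.inter_eq_left.2 hS''V]
      have hsm := C.defc_submod j₃ (hS''sub.trans (C.hXsub i)) (hWsub.trans (C.hXsub i))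
      rw [hUn, hIn] at hsm
      have hz : C.defc j₃ (S''.erase h) = 0 := by
        apply C.defc_small ((Finset.erase_subset _ _).trans hS''sub)
        rw [Finset.card_erase_of_mem hhS'']
        have h2 : 2 ≤ S''.card := C.tplus_card_facts hS''sub hS''card
        push_cast; omega
      have hpair := C.sum_defc_pair_le hVE hjj''
      rw [hDV] at hpair
      omega
    · have hm3 : C.defc j₃ W ≤ C.defc j₃ V := C.defc_mono j₃ hWV hVE
      have htriple := C.sum_defc_triple_le hVE hjj'' (fun hq => h3j hq.symm)
        (fun hq => h3j'' hq.symm)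
      rw [hDV] at htriple
      omega

lemma color_const {i : Fin C.n} :
    ∀ (m : ℕ) {S S' : Finset α} {j j' : Fin C.k}, S ⊆ C.X i → S' ⊆ C.X i →
    (S.card : ℤ) = C.t i + 1 → (S'.card : ℤ) = C.t i + 1 →
    (S \ S').card = m → 1 ≤ C.defc j S → 1 ≤ C.defc j' S' → j = j' := by
  intro m
  induction m using Nat.strong_induction_on with
  | _ m ih =>
    intro S S' j j' hS hS' hc hc' hm hj hj'
    rcases Nat.eq_zero_or_pos m with rfl | hmpos
    · -- S = S'
      have hsub : S ⊆ S' := by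
        intro a ha
        by_contra hc2
        have : a ∈ S \ S' := Finset.mem_sdiff.2 ⟨ha, hc2⟩
        rw [Finset.card_eq_zero.1 hm] at this
        simp at this
      have hSS' : S = S' := Finset.eq_of_subset_of_card_le hsub (by omega)
      subst hSS'
      by_contra hne
      have hpair := C.sum_defc_pair_le (hS.trans (C.hXsub i)) hne
      rw [C.Dloc_edge hS] at hpair
      omega
    · have hfne : ∃ f, f ∈ S \ S' := Finset.card_pos.1 (by omega)
      obtain ⟨f, hf⟩ := hfne
      have hgne : ∃ g, g ∈ S' \ S := by
        apply Finset.card_pos.1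
        rw [← Finset.card_sdiff_comm (by omega : S.card = S'.card)]
        omega
      obtain ⟨g, hg⟩ := hgne
      obtain ⟨hfS, hfS'⟩ := Finset.mem_sdiff.1 hf
      obtain ⟨hgS', hgS⟩ := Finset.mem_sdiff.1 hg
      have hswap := C.swap_color hS hc hj hfS (hS' hgS') hgS
      set S'' := insert g (S.erase f) with hS''def
      have hS''sub : S'' ⊆ C.X i := by
        intro a ha
        rcases Finset.mem_insert.1 ha with rfl | ha
        · exact hS' hgS'
        · exact hS (Finset.mem_of_mem_erase ha)
      have hS''card : (S''.card : ℤ) = C.t i + 1 := by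
        rw [hS''def, Finset.card_insert_of_notMem (fun h => hgS (Finset.mem_of_mem_erase h)),
          Finset.card_erase_of_mem hfS]
        have h2 := C.tplus_card_facts hS hc
        push_cast; omega
      have hsdiff : S'' \ S' ⊆ (S \ S').erase f := by
        intro a ha
        obtain ⟨ha1, ha2⟩ := Finset.mem_sdiff.1 ha
        rcases Finset.mem_insert.1 ha1 with rfl | ha1
        · exact absurd hgS' ha2
        · exact Finset.mem_erase.2 ⟨(Finset.mem_erase.1 ha1).1,
            Finset.mem_sdiff.2 ⟨Finset.mem_of_mem_erase ha1, ha2⟩⟩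
      have hcard : (S'' \ S').card < m := by
        calc (S'' \ S').card ≤ ((S \ S').erase f).card := Finset.card_le_card hsdiff
        _ = m - 1 := by rw [Finset.card_erase_of_mem hf, hm]
        _ < m := by omega
      exact ih _ hcard hS''sub hS' hS''card hc' rfl hswap hj'


lemma tplus_exists {i : Fin C.n} (hbig : C.t i < ((C.X i).card : ℤ)) :
    ∃ S : Finset α, S ⊆ C.X i ∧ (S.card : ℤ) = C.t i + 1 := by
  have ht := C.ht1 i
  obtain ⟨S, hS, hcard⟩ := Finset.exists_subset_card_eq
    (show (C.t i).toNat + 1 ≤ (C.X i).card by omega)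
  exact ⟨S, hS, by rw [hcard]; push_cast; omega⟩

lemma defc_exists_one {i : Fin C.n} {S : Finset α} (hS : S ⊆ C.X i)
    (hc : (S.card : ℤ) = C.t i + 1) : ∃ j, 1 ≤ C.defc j S := by
  by_contra hc2
  push_neg at hc2
  have h1 : ∑ j, C.defc j S = 1 := by
    rw [C.defc_total (hS.trans (C.hXsub i)), C.Dloc_edge hS]; omega
  have hzz : ∀ j ∈ Finset.univ, C.defc j S = 0 := by
    intro j _
    have := hc2 j
    have := C.defc_nonneg j (hS.trans (C.hXsub i))
    omega
  rw [Finset.sum_congr rfl hzz] at h1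
  simp at h1

lemma cEdge_ex (i : Fin C.n) (hbig : C.t i < ((C.X i).card : ℤ)) :
    ∃ j, ∀ S : Finset α, S ⊆ C.X i → (S.card : ℤ) = C.t i + 1 →
      (C.defc j S = 1 ∧ ∀ j', j' ≠ j → C.defc j' S = 0) := by
  obtain ⟨S₀, hS₀, hc₀⟩ := C.tplus_exists hbig
  obtain ⟨j₀, hj₀⟩ := C.defc_exists_one hS₀ hc₀
  refine ⟨j₀, fun S hS hc => ?_⟩
  obtain ⟨jS, hjS⟩ := C.defc_exists_one hS hc
  have hz : jS = j₀ := C.color_const _ hS hS₀ hc hc₀ rfl hjS hj₀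
  subst hz
  have htot : ∑ j, C.defc j S = 1 := by
    rw [C.defc_total (hS.trans (C.hXsub i)), C.Dloc_edge hS]; omega
  have key : ∀ j', j' ≠ jS → C.defc j' S = 0 := by
    intro j' hne
    have hp := C.sum_defc_pair_le (hS.trans (C.hXsub i)) (fun h => hne h.symm)
    rw [C.Dloc_edge hS] at hp
    have := C.defc_nonneg j' (hS.trans (C.hXsub i))
    omega
  have h1 : C.defc jS S = 1 := by
    have h2 : ∑ j, C.defc j S = C.defc jS S + ∑ j ∈ Finset.univ.erase jS, C.defc j S :=
      (Finset.add_sum_erase _ _ (Finset.mem_univ jS)).symm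
    have h3 : ∑ j ∈ Finset.univ.erase jS, C.defc j S = 0 :=
      Finset.sum_eq_zero (fun j hj => key j (Finset.mem_erase.1 hj).1)
    omega
  exact ⟨h1, key⟩

/-- The color of a hyperedge with `t i < |X i|`. -/
noncomputable def cEdge (i : Fin C.n) (hbig : C.t i < ((C.X i).card : ℤ)) : Fin C.k :=
  (C.cEdge_ex i hbig).choose

lemma cEdge_spec {i : Fin C.n} (hbig : C.t i < ((C.X i).card : ℤ)) {S : Finset α}
    (hS : S ⊆ C.X i) (hc : (S.card : ℤ) = C.t i + 1) :
    C.defc (C.cEdge i hbig) S = 1 ∧ ∀ j', j' ≠ C.cEdge i hbig → C.defc j' S = 0 :=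
  (C.cEdge_ex i hbig).choose_spec S hS hc

lemma cEdge_unique {i : Fin C.n} (hbig : C.t i < ((C.X i).card : ℤ)) {S : Finset α}
    (hS : S ⊆ C.X i) (hc : (S.card : ℤ) = C.t i + 1) {j : Fin C.k}
    (hj : 1 ≤ C.defc j S) : j = C.cEdge i hbig := by
  by_contra hne
  have := (C.cEdge_spec hbig hS hc).2 j hne
  omega

lemma cEdge_singles {i : Fin C.n} (hbig : C.t i < ((C.X i).card : ℤ)) {e : α}
    (he : e ∈ C.X i) : C.M (C.cEdge i hbig) {e} = 1 := by
  have ht := C.ht1 i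
  obtain ⟨S₁, hS₁, hc₁⟩ := Finset.exists_subset_card_eq
    (show (C.t i).toNat ≤ ((C.X i).erase e).card by
      rw [Finset.card_erase_of_mem he]; omega)
  have heS₁ : e ∉ S₁ := fun h => (Finset.mem_erase.1 (hS₁ h)).1 rfl
  set S := insert e S₁ with hSdef
  have hSsub : S ⊆ C.X i := by
    intro a ha
    rcases Finset.mem_insert.1 ha with rfl | ha
    · exact he
    · exact Finset.mem_of_mem_erase (hS₁ ha)
  have hScard : (S.card : ℤ) = C.t i + 1 := by
    rw [hSdef, Finset.card_insert_of_notMem heS₁, hc₁]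
    push_cast; omega
  have hspec := (C.cEdge_spec hbig hSsub hScard).1
  rcases C.hM01 (C.cEdge i hbig) (C.hXsub i he) with h0 | h1
  · exfalso
    have her := C.rank_erase_of_zero (C.cEdge i hbig) (hSsub.trans (C.hXsub i))
      (Finset.mem_insert_self e S₁) h0
    have hSe : S.erase e = S₁ := by
      rw [hSdef, Finset.erase_insert heS₁]
    rw [her.2, hSe] at hspec
    have := C.defc_small (fun a ha => Finset.mem_of_mem_erase (hS₁ ha))
      (show ((S₁.card : ℤ) ≤ C.t i) by rw [hc₁]; push_cast; omega) (C.cEdge i hbig)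
    omega
  · exact h1

lemma rank_tplus {i : Fin C.n} (hbig : C.t i < ((C.X i).card : ℤ)) {S : Finset α}
    (hS : S ⊆ C.X i) (hc : (S.card : ℤ) = C.t i + 1) :
    C.M (C.cEdge i hbig) S = C.t i := by
  have h1 := (C.cEdge_spec hbig hS hc).1
  have h2 : ∑ e ∈ S, C.M (C.cEdge i hbig) {e} = (S.card : ℤ) :=
    C.sum_singles_eq_card _ (fun e heS => C.cEdge_singles hbig (hS heS))
  unfold defc at h1
  omega

lemma rank_tsub {i : Fin C.n} (hbig : C.t i < ((C.X i).card : ℤ)) {S : Finset α}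
    (hS : S ⊆ C.X i) (hc : (S.card : ℤ) ≤ C.t i) :
    C.M (C.cEdge i hbig) S = (S.card : ℤ) := by
  rw [C.rank_small hS hc]
  exact C.sum_singles_eq_card _ (fun e heS => C.cEdge_singles hbig (hS heS))

lemma rank_edge_aux {i : Fin C.n} (hbig : C.t i < ((C.X i).card : ℤ)) :
    ∀ (m : ℕ) (A : Finset α), A ⊆ C.X i → (A.card : ℤ) = C.t i + 1 + m →
    C.M (C.cEdge i hbig) A = C.t i := by
  intro m
  induction m with
  | zero =>
    intro A hA hc
    exact C.rank_tplus hbig hA (by omega)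
  | succ m ih =>
    intro A hA hc
    have ht := C.ht1 i
    have hcard2 : 2 ≤ A.card := by omega
    obtain ⟨e', he', e'', he'', hne⟩ := Finset.one_lt_card.1 (show 1 < A.card by omega)
    set U := A.erase e' with hU
    set V := A.erase e'' with hV
    have hUsub : U ⊆ C.X i := (Finset.erase_subset _ _).trans hA
    have hVsub : V ⊆ C.X i := (Finset.erase_subset _ _).trans hA
    have hUcard : (U.card : ℤ) = C.t i + 1 + m := by
      rw [hU, Finset.card_erase_of_mem he']; push_cast; omega
    have hVcard : (V.card : ℤ) = C.t i + 1 + m := by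
      rw [hV, Finset.card_erase_of_mem he'']; push_cast; omega
    have hMU := ih U hUsub hUcard
    have hMV := ih V hVsub hVcard
    have hUV : U ∪ V = A := by
      apply Finset.Subset.antisymm
      · exact Finset.union_subset (Finset.erase_subset _ _) (Finset.erase_subset _ _)
      · intro a ha
        by_cases h1 : a = e'
        · exact Finset.mem_union_right _ (Finset.mem_erase.2 ⟨h1 ▸ hne, ha⟩)
        · exact Finset.mem_union_left _ (Finset.mem_erase.2 ⟨h1, ha⟩)
    have hsm := C.hMsub (C.cEdge i hbig) U V (hUsub.trans (C.hXsub i)) (hVsub.trans (C.hXsub i))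
    rw [hUV] at hsm
    have hIcard : ((U ∩ V).card : ℤ) = C.t i + m := by
      have : U ∩ V = (A.erase e').erase e'' := by
        rw [hU, hV, Finset.erase_inter, Finset.inter_erase,
          Finset.inter_self, Finset.erase_right_comm]
      rw [this, Finset.card_erase_of_mem
        (Finset.mem_erase.2 ⟨fun h => hne h.symm, he''⟩), Finset.card_erase_of_mem he']
      push_cast; omega
    have hIlow : C.t i ≤ C.M (C.cEdge i hbig) (U ∩ V) := by
      rcases Nat.eq_zero_or_pos m with rfl | hm
      · rw [C.rank_tsub hbig ((Finset.inter_subset_left).trans hUsub) (by omega)]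
        omega
      · obtain ⟨S₂, hS₂, hcS₂⟩ := Finset.exists_subset_card_eq
          (show (C.t i).toNat + 1 ≤ (U ∩ V).card by omega)
        calc C.t i = C.M (C.cEdge i hbig) S₂ :=
              (C.rank_tplus hbig (hS₂.trans ((Finset.inter_subset_left).trans hUsub))
                (by rw [hcS₂]; push_cast; omega)).symm
          _ ≤ _ := C.hMmono _ _ _ hS₂ (((Finset.inter_subset_left).trans hUsub).trans (C.hXsub i))
    have hup : C.M (C.cEdge i hbig) A ≤ C.t i := by omega
    have hlow : C.t i ≤ C.M (C.cEdge i hbig) A := by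
      obtain ⟨S₂, hS₂, hcS₂⟩ := Finset.exists_subset_card_eq
        (show (C.t i).toNat + 1 ≤ A.card by omega)
      calc C.t i = C.M (C.cEdge i hbig) S₂ :=
            (C.rank_tplus hbig (hS₂.trans hA) (by rw [hcS₂]; push_cast; omega)).symm
        _ ≤ _ := C.hMmono _ _ _ hS₂ (hA.trans (C.hXsub i))
    omega

lemma rank_edge_big {i : Fin C.n} (hbig : C.t i < ((C.X i).card : ℤ)) {A : Finset α}
    (hA : A ⊆ C.X i) (hc : C.t i + 1 ≤ (A.card : ℤ)) :
    C.M (C.cEdge i hbig) A = C.t i := by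
  have : ∃ m : ℕ, (A.card : ℤ) = C.t i + 1 + m := by
    refine ⟨((A.card : ℤ) - C.t i - 1).toNat, ?_⟩
    have := C.ht1 i
    omega
  obtain ⟨m, hm⟩ := this
  exact C.rank_edge_aux hbig m A hA hm

lemma defc_other {i : Fin C.n} (hbig : C.t i < ((C.X i).card : ℤ)) {j : Fin C.k}
    (hj : j ≠ C.cEdge i hbig) {A : Finset α} (hA : A ⊆ C.X i) : C.defc j A = 0 := by
  have hXi : C.defc (C.cEdge i hbig) (C.X i) = ((C.X i).card : ℤ) - C.t i := by
    unfold defc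
    rw [C.rank_edge_big hbig (Finset.Subset.refl _) (by omega),
      C.sum_singles_eq_card _ (fun e he => C.cEdge_singles hbig he)]
  have htot : ∑ j', C.defc j' (C.X i) = ((C.X i).card : ℤ) - C.t i := by
    rw [C.defc_total (C.hXsub i), C.Dloc_edge (Finset.Subset.refl _)]
    omega
  have hzero : C.defc j (C.X i) = 0 := by
    have hp := C.sum_defc_pair_le (C.hXsub i) hj
    rw [C.Dloc_edge (Finset.Subset.refl _)] at hp
    have := C.defc_nonneg j (C.hXsub i)
    omega
  have hm := C.defc_mono j hA (C.hXsub i)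
  have := C.defc_nonneg j (hA.trans (C.hXsub i))
  omega

lemma rank_other {i : Fin C.n} (hbig : C.t i < ((C.X i).card : ℤ)) {j : Fin C.k}
    (hj : j ≠ C.cEdge i hbig) {A : Finset α} (hA : A ⊆ C.X i) :
    C.M j A = ∑ e ∈ A, C.M j {e} := by
  have := C.defc_other hbig hj hA
  unfold defc at this; omega

lemma line_big {l : Fin C.n} (hl : C.t l = 1) {x y : α} (hx : x ∈ C.X l)
    (hy : y ∈ C.X l) (hxy : x ≠ y) : C.t l < ((C.X l).card : ℤ) := by
  have : ({x, y} : Finset α) ⊆ C.X l := by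
    intro a ha; simp at ha; rcases ha with rfl | rfl <;> assumption
  have := Finset.card_le_card this
  rw [Finset.card_pair hxy] at this
  omega

lemma line_par {l : Fin C.n} (hl : C.t l = 1) {x y : α} (hx : x ∈ C.X l)
    (hy : y ∈ C.X l) (hxy : x ≠ y) :
    C.Par (C.cEdge l (C.line_big hl hx hy hxy)) x y ∧
      ∀ j, C.Par j x y → j = C.cEdge l (C.line_big hl hx hy hxy) := by
  have hpsub : ({x, y} : Finset α) ⊆ C.X l := by
    intro a ha; simp at ha; rcases ha with rfl | rfl <;> assumption
  have hpcard : ((({x, y} : Finset α).card : ℤ)) = C.t l + 1 := by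
    rw [Finset.card_pair hxy]; omega
  have hxE := C.hXsub l hx
  have hyE := C.hXsub l hy
  constructor
  · rw [C.par_iff hxy hxE hyE]
    rw [(C.cEdge_spec (C.line_big hl hx hy hxy) hpsub hpcard).1]
  · intro j hj
    exact C.cEdge_unique (C.line_big hl hx hy hxy) hpsub hpcard
      (by rw [C.par_defc hj])

lemma par_line {j : Fin C.k} {x y : α} (h : C.Par j x y) (hx : x ∈ C.E) (hy : y ∈ C.E) :
    ∃ l, x ∈ C.X l ∧ y ∈ C.X l ∧ C.t l = 1 := by
  by_contra hc
  push_neg at hc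
  have hpsub : ({x, y} : Finset α) ⊆ C.E := by
    intro a ha; simp at ha; rcases ha with rfl | rfl <;> assumption
  have hzero : ∀ l, C.excess l {x, y} = 0 := by
    intro l
    apply C.excess_eq_zero
    have hle : ({x, y} ∩ C.X l).card ≤ 2 := by
      refine le_trans (Finset.card_le_card Finset.inter_subset_left) ?_
      rw [Finset.card_pair h.1]
    have ht := C.ht1 l
    by_cases hmem : x ∈ C.X l ∧ y ∈ C.X l
    · have := hc l hmem.1 hmem.2
      omega
    · have hle1 : ({x, y} ∩ C.X l).card ≤ 1 := by
        rcases not_and_or.1 hmem with hnx | hny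
        · refine le_trans (Finset.card_le_card (fun a ha => ?_)) (Finset.card_singleton y).le
          obtain ⟨ha1, ha2⟩ := Finset.mem_inter.1 ha
          rcases Finset.mem_insert.1 ha1 with rfl | ha1
          · exact absurd ha2 hnx
          · exact ha1
        · refine le_trans (Finset.card_le_card (fun a ha => ?_)) (Finset.card_singleton x).le
          obtain ⟨ha1, ha2⟩ := Finset.mem_inter.1 ha
          rcases Finset.mem_insert.1 ha1 with ha1 | ha1
          · rw [ha1]; exact Finset.mem_singleton_self _
          · rw [Finset.mem_singleton.1 ha1] at ha2
            exact absurd ha2 hny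
      omega
  have htot : ∑ j', C.defc j' {x, y} = 0 := by
    rw [C.defc_total hpsub]
    exact Finset.sum_eq_zero (fun l _ => hzero l)
  have hd := C.par_defc h
  have hp : C.defc j {x, y} ≤ 0 := by
    have h2 : ∑ j', C.defc j' {x, y} = C.defc j {x, y} + ∑ j' ∈ Finset.univ.erase j, C.defc j' {x, y} :=
      (Finset.add_sum_erase _ _ (Finset.mem_univ j)).symm
    have h3 : 0 ≤ ∑ j' ∈ Finset.univ.erase j, C.defc j' {x, y} :=
      Finset.sum_nonneg (fun j' _ => C.defc_nonneg j' hpsub)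
    omega
  omega

lemma no_par_in_big {i : Fin C.n} {x y : α} (hx : x ∈ C.X i) (hy : y ∈ C.X i)
    (h2 : 2 ≤ C.t i) (j : Fin C.k) : ¬ C.Par j x y := by
  intro hp
  obtain ⟨l, hxl, hyl, htl⟩ := C.par_line hp (C.hXsub i hx) (C.hXsub i hy)
  have heq := C.pair_container hp.1 hxl hyl hx hy
  rw [heq] at htl
  omega


lemma excess_zero_of_pairs {A : Finset α} {l : Fin C.n}
    (h : ∀ p ∈ A, ∀ q ∈ A, p ≠ q → ¬(p ∈ C.X l ∧ q ∈ C.X l)) : C.excess l A = 0 := by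
  apply C.excess_eq_zero
  have hcard : (A ∩ C.X l).card ≤ 1 := by
    rw [Finset.card_le_one]
    intro p hp q hq
    obtain ⟨hpA, hpl⟩ := Finset.mem_inter.1 hp
    obtain ⟨hqA, hql⟩ := Finset.mem_inter.1 hq
    by_contra hne
    exact h p hpA q hqA hne ⟨hpl, hql⟩
  have := C.ht1 l
  omega

lemma Dloc_pair {x y : α} (hxy : x ≠ y) {l₀ : Fin C.n} (hx : x ∈ C.X l₀)
    (hy : y ∈ C.X l₀) (ht : C.t l₀ = 1) : ∑ l, C.excess l {x, y} = 1 := by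
  rw [C.excess_sum_eq {l₀} (by
    intro l hl
    simp only [Finset.mem_singleton] at hl
    apply C.excess_zero_of_pairs
    intro p hp q hq hpq hand
    simp only [Finset.mem_insert, Finset.mem_singleton] at hp hq
    obtain ⟨hpl, hql⟩ := hand
    rcases hp with rfl | rfl <;> rcases hq with rfl | rfl
    · exact hpq rfl
    · exact hl (C.pair_container hpq hpl hql hx hy)
    · exact hl (C.pair_container hpq hpl hql hy hx)
    · exact hpq rfl)]
  rw [Finset.sum_singleton]
  unfold excess
  rw [Finset.inter_eq_left.2 (by
    intro q hq; simp only [Finset.mem_insert, Finset.mem_singleton] at hq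
    rcases hq with rfl | rfl <;> assumption)]
  rw [Finset.card_pair hxy]
  omega

lemma defc_pair_other {x y : α} {l₀ : Fin C.n} (hx : x ∈ C.X l₀) (hy : y ∈ C.X l₀)
    (ht : C.t l₀ = 1) {j j₂ : Fin C.k} (hpar : C.Par j x y) (hne : j₂ ≠ j) :
    C.defc j₂ {x, y} = 0 := by
  have hsub : ({x, y} : Finset α) ⊆ C.E := by
    intro q hq; simp only [Finset.mem_insert, Finset.mem_singleton] at hq
    rcases hq with rfl | rfl <;> exact C.hXsub l₀ (by assumption)
  have hDp := C.Dloc_pair hpar.1 hx hy ht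
  have hdj := C.par_defc hpar
  have hle := C.sum_defc_pair_le hsub (fun h => hne h.symm)
  rw [hDp] at hle
  have := C.defc_nonneg j₂ hsub
  omega

lemma Dloc_ztriple {i₀ lu lv : Fin C.n} {z u v : α} (hti : C.t i₀ = 1)
    (hu : u ∈ C.X i₀) (hv : v ∈ C.X i₀) (huv : u ≠ v) (hzX : z ∉ C.X i₀)
    (hzlu : z ∈ C.X lu) (hulu : u ∈ C.X lu) (htlu : C.t lu = 1)
    (hzlv : z ∈ C.X lv) (hvlv : v ∈ C.X lv) (htlv : C.t lv = 1) :
    ∑ l, C.excess l {z, u, v} = 3 := by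
  have hzu : z ≠ u := fun h => hzX (h ▸ hu)
  have hzv : z ≠ v := fun h => hzX (h ▸ hv)
  have hlui : lu ≠ i₀ := fun h => hzX (h ▸ hzlu)
  have hlvi : lv ≠ i₀ := fun h => hzX (h ▸ hzlv)
  have hvlu : v ∉ C.X lu := fun hq => hlui (C.pair_container huv hulu hq hu hv)
  have hulv : u ∉ C.X lv := fun hq => hlvi (C.pair_container huv hq hvlv hu hv)
  have hlulv : lu ≠ lv := fun h => hvlu (h ▸ hvlv)
  have hIuv : ({z, u, v} : Finset α) ∩ C.X i₀ = {u, v} := by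
    ext q
    simp only [Finset.mem_inter, Finset.mem_insert, Finset.mem_singleton]
    constructor
    · rintro ⟨rfl | rfl | rfl, hq2⟩
      · exact absurd hq2 hzX
      · exact Or.inl rfl
      · exact Or.inr rfl
    · rintro (rfl | rfl)
      · exact ⟨Or.inr (Or.inl rfl), hu⟩
      · exact ⟨Or.inr (Or.inr rfl), hv⟩
  have hIlu : ({z, u, v} : Finset α) ∩ C.X lu = {z, u} := by
    ext q
    simp only [Finset.mem_inter, Finset.mem_insert, Finset.mem_singleton]
    constructor
    · rintro ⟨rfl | rfl | rfl, hq2⟩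
      · exact Or.inl rfl
      · exact Or.inr rfl
      · exact absurd hq2 hvlu
    · rintro (rfl | rfl)
      · exact ⟨Or.inl rfl, hzlu⟩
      · exact ⟨Or.inr (Or.inl rfl), hulu⟩
  have hIlv : ({z, u, v} : Finset α) ∩ C.X lv = {z, v} := by
    ext q
    simp only [Finset.mem_inter, Finset.mem_insert, Finset.mem_singleton]
    constructor
    · rintro ⟨rfl | rfl | rfl, hq2⟩
      · exact Or.inl rfl
      · exact absurd hq2 hulv
      · exact Or.inr rfl
    · rintro (rfl | rfl)
      · exact ⟨Or.inl rfl, hzlv⟩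
      · exact ⟨Or.inr (Or.inr rfl), hvlv⟩
  rw [C.excess_sum_eq {i₀, lu, lv} (by
    intro l hl
    simp only [Finset.mem_insert, Finset.mem_singleton] at hl
    push_neg at hl
    obtain ⟨hl1, hl2, hl3⟩ := hl
    apply C.excess_zero_of_pairs
    intro p hp q hq hpq hand
    simp only [Finset.mem_insert, Finset.mem_singleton] at hp hq
    obtain ⟨hpl, hql⟩ := hand
    rcases hp with rfl | rfl | rfl <;> rcases hq with rfl | rfl | rfl
    · exact hpq rfl
    · exact hl2 (C.pair_container hpq hpl hql hzlu hulu)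
    · exact hl3 (C.pair_container hpq hpl hql hzlv hvlv)
    · exact hl2 (C.pair_container hpq hpl hql hulu hzlu)
    · exact hpq rfl
    · exact hl1 (C.pair_container hpq hpl hql hu hv)
    · exact hl3 (C.pair_container hpq hpl hql hvlv hzlv)
    · exact hl1 (C.pair_container hpq hpl hql hv hu)
    · exact hpq rfl)]
  rw [Finset.sum_insert (by simp [Ne.symm hlui, Ne.symm hlvi]),
    Finset.sum_insert (by simp [hlulv]), Finset.sum_singleton]
  unfold excess
  rw [hIuv, hIlu, hIlv, Finset.card_pair huv, Finset.card_pair hzu, Finset.card_pair hzv]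
  omega

lemma Dloc_inedge3 {i₀ : Fin C.n} {u v w : α} (hti : C.t i₀ = 1)
    (hu : u ∈ C.X i₀) (hv : v ∈ C.X i₀) (hw : w ∈ C.X i₀)
    (huv : u ≠ v) (huw : u ≠ w) (hvw : v ≠ w) :
    ∑ l, C.excess l {u, v, w} = 2 := by
  have hsub : ({u, v, w} : Finset α) ⊆ C.X i₀ := by
    intro q hq; simp only [Finset.mem_insert, Finset.mem_singleton] at hq
    rcases hq with rfl | rfl | rfl <;> assumption
  rw [C.Dloc_edge hsub]
  rw [Finset.card_insert_of_notMem (by simp [huv, huw]), Finset.card_pair hvw]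
  omega

lemma exists_second {A : Finset α} (hA : A ⊆ C.E) {j : Fin C.k}
    (h : C.defc j A + 1 ≤ ∑ l, C.excess l A) : ∃ τ, τ ≠ j ∧ 1 ≤ C.defc τ A := by
  by_contra hcon
  push_neg at hcon
  have hz : ∑ j' ∈ Finset.univ.erase j, C.defc j' A = 0 := by
    apply Finset.sum_eq_zero
    intro τ hτ
    have h1 := hcon τ (Finset.mem_erase.1 hτ).1
    have h2 := C.defc_nonneg τ hA
    omega
  have h3 : ∑ j', C.defc j' A = C.defc j A := by
    rw [← Finset.add_sum_erase _ _ (Finset.mem_univ j), hz, add_zero]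
  rw [C.defc_total hA] at h3
  omega

set_option maxHeartbeats 1000000 in
lemma pencil_two {i₀ : Fin C.n} (hti : C.t i₀ = 1) {z a b c : α} {j j₂ : Fin C.k}
    (hz : z ∈ C.E) (hzX : z ∉ C.X i₀)
    (ha : a ∈ C.X i₀) (hb : b ∈ C.X i₀) (hc : c ∈ C.X i₀)
    (hab : a ≠ b) (hac : a ≠ c) (hbc : b ≠ c)
    (hpa : C.Par j z a) (hpb : C.Par j z b) (hpc : C.Par j z c)
    (hj₂ : j₂ ≠ j)
    (hd1 : 1 ≤ C.defc j₂ {z, a, b}) (hd2 : 1 ≤ C.defc j₂ {z, a, c}) : False := by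
  have haE := C.hXsub i₀ ha
  have hbE := C.hXsub i₀ hb
  have hcE := C.hXsub i₀ hc
  have hza : z ≠ a := hpa.1
  have hzb : z ≠ b := hpb.1
  have hzc : z ≠ c := hpc.1
  obtain ⟨la, hzla, hala, htla⟩ := C.par_line hpa hz haE
  obtain ⟨lb, hzlb, hblb, htlb⟩ := C.par_line hpb hz hbE
  obtain ⟨lc, hzlc, hclc, htlc⟩ := C.par_line hpc hz hcE
  have hpab : C.Par j a b := C.par_trans hz haE hbE hpa hpb hab
  have hpac : C.Par j a c := C.par_trans hz haE hcE hpa hpc hac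
  have hpbc : C.Par j b c := C.par_trans hz hbE hcE hpb hpc hbc
  -- subsets
  have hT1sub : ({z, a, b} : Finset α) ⊆ C.E := by
    intro q hq; simp only [Finset.mem_insert, Finset.mem_singleton] at hq
    rcases hq with rfl | rfl | rfl <;> assumption
  have hT2sub : ({z, a, c} : Finset α) ⊆ C.E := by
    intro q hq; simp only [Finset.mem_insert, Finset.mem_singleton] at hq
    rcases hq with rfl | rfl | rfl <;> assumption
  have hRsub : ({a, b, c} : Finset α) ⊆ C.E := by
    intro q hq; simp only [Finset.mem_insert, Finset.mem_singleton] at hq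
    rcases hq with rfl | rfl | rfl <;> assumption
  have hQsub : ({z, a, b, c} : Finset α) ⊆ C.E := by
    intro q hq; simp only [Finset.mem_insert, Finset.mem_singleton] at hq
    rcases hq with rfl | rfl | rfl | rfl <;> assumption
  -- deficiencies of pairs in color j₂ vanish
  have hpz_a : C.defc j₂ {z, a} = 0 := C.defc_pair_other hzla hala htla hpa hj₂
  have hpz_b : C.defc j₂ {z, b} = 0 := C.defc_pair_other hzlb hblb htlb hpb hj₂
  have hpz_c : C.defc j₂ {z, c} = 0 := C.defc_pair_other hzlc hclc htlc hpc hj₂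
  have hpa_b : C.defc j₂ {a, b} = 0 := C.defc_pair_other ha hb hti hpab hj₂
  have hpa_c : C.defc j₂ {a, c} = 0 := C.defc_pair_other ha hc hti hpac hj₂
  have hpb_c : C.defc j₂ {b, c} = 0 := C.defc_pair_other hb hc hti hpbc hj₂
  -- Dloc of the two triples
  have hDT1 : ∑ l, C.excess l {z, a, b} = 3 :=
    C.Dloc_ztriple hti ha hb hab hzX hzla hala htla hzlb hblb htlb
  have hDT2 : ∑ l, C.excess l {z, a, c} = 3 :=
    C.Dloc_ztriple hti ha hc hac hzX hzla hala htla hzlc hclc htlc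
  -- color j deficiency of triples is 2
  have hcardT1 : ({z, a, b} : Finset α).card = 3 := by
    rw [Finset.card_insert_of_notMem (by simp [hza, hzb]), Finset.card_pair hab]
  have hcardT2 : ({z, a, c} : Finset α).card = 3 := by
    rw [Finset.card_insert_of_notMem (by simp [hza, hzc]), Finset.card_pair hac]
  have hMT1 : C.M j {z, a, b} = 1 := by
    apply C.rank_one_of_hub j _ _ rfl hT1sub z (by simp)
    · intro y hy hyz
      simp only [Finset.mem_insert, Finset.mem_singleton] at hy
      rcases hy with rfl | rfl | rfl
      · exact absurd rfl hyz
      · exact hpa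
      · exact hpb
    · exact ⟨a, by simp, fun h => hza h.symm⟩
  have hMT2 : C.M j {z, a, c} = 1 := by
    apply C.rank_one_of_hub j _ _ rfl hT2sub z (by simp)
    · intro y hy hyz
      simp only [Finset.mem_insert, Finset.mem_singleton] at hy
      rcases hy with rfl | rfl | rfl
      · exact absurd rfl hyz
      · exact hpa
      · exact hpc
    · exact ⟨a, by simp, fun h => hza h.symm⟩
  have hsT1 : ∑ e ∈ ({z, a, b} : Finset α), C.M j {e} = 3 := by
    rw [C.sum_singles_eq_card j (by
      intro e he; simp only [Finset.mem_insert, Finset.mem_singleton] at he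
      rcases he with rfl | rfl | rfl
      · exact hpa.2.1
      · exact hpa.2.2.1
      · exact hpb.2.2.1), hcardT1]
    norm_num
  have hsT2 : ∑ e ∈ ({z, a, c} : Finset α), C.M j {e} = 3 := by
    rw [C.sum_singles_eq_card j (by
      intro e he; simp only [Finset.mem_insert, Finset.mem_singleton] at he
      rcases he with rfl | rfl | rfl
      · exact hpa.2.1
      · exact hpa.2.2.1
      · exact hpc.2.2.1), hcardT2]
    norm_num
  have hdjT1 : C.defc j {z, a, b} = 2 := by unfold defc; omega
  have hdjT2 : C.defc j {z, a, c} = 2 := by unfold defc; omega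
  have hd2T1 : C.defc j₂ {z, a, b} = 1 := by
    have hle := C.sum_defc_pair_le hT1sub (fun h : j = j₂ => hj₂ h.symm)
    rw [hDT1] at hle
    omega
  have hd2T2 : C.defc j₂ {z, a, c} = 1 := by
    have hle := C.sum_defc_pair_le hT2sub (fun h : j = j₂ => hj₂ h.symm)
    rw [hDT2] at hle
    omega
  -- singles of j₂ are rank one
  have single_of : ∀ (u v w : α), ({u, v, w} : Finset α) ⊆ C.E → u ≠ v → u ≠ w → v ≠ w →
      C.defc j₂ {u, v, w} = 1 → C.defc j₂ {v, w} = 0 → C.M j₂ {u} = 1 := by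
    intro u v w hsub huv huw hvw hd hp0
    rcases C.hM01 j₂ (hsub (show u ∈ ({u, v, w} : Finset α) by simp)) with h0 | h1
    · exfalso
      have her := C.rank_erase_of_zero j₂ hsub (show u ∈ ({u, v, w} : Finset α) by simp) h0
      have herE : ({u, v, w} : Finset α).erase u = {v, w} := by
        ext q
        simp only [Finset.mem_erase, Finset.mem_insert, Finset.mem_singleton]
        constructor
        · rintro ⟨hqu, rfl | rfl | rfl⟩
          · exact absurd rfl hqu
          · exact Or.inl rfl
          · exact Or.inr rfl
        · rintro (rfl | rfl)
          · exact ⟨fun h => huv h.symm, Or.inr (Or.inl rfl)⟩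
          · exact ⟨fun h => huw h.symm, Or.inr (Or.inr rfl)⟩
      rw [her.2, herE] at hd
      omega
    · exact h1
  have hperm1 : ({z, a, b} : Finset α) = {a, z, b} := by
    ext q; simp only [Finset.mem_insert, Finset.mem_singleton]; tauto
  have hperm2 : ({z, a, b} : Finset α) = {b, z, a} := by
    ext q; simp only [Finset.mem_insert, Finset.mem_singleton]; tauto
  have hperm3 : ({z, a, c} : Finset α) = {c, z, a} := by
    ext q; simp only [Finset.mem_insert, Finset.mem_singleton]; tauto
  have hMz : C.M j₂ {z} = 1 := single_of z a b hT1sub hza hzb hab hd2T1 hpa_b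
  have hMa : C.M j₂ {a} = 1 := by
    apply single_of a z b (by rw [← hperm1]; exact hT1sub) (fun h => hza h.symm) hab hzb
    · rw [← hperm1]; exact hd2T1
    · exact hpz_b
  have hMb : C.M j₂ {b} = 1 := by
    apply single_of b z a (by rw [← hperm2]; exact hT1sub) (fun h => hzb h.symm)
      (fun h => hab h.symm) hza
    · rw [← hperm2]; exact hd2T1
    · exact hpz_a
  have hMc : C.M j₂ {c} = 1 := by
    apply single_of c z a (by rw [← hperm3]; exact hT2sub) (fun h => hzc h.symm)
      (fun h => hac h.symm) hza
    · rw [← hperm3]; exact hd2T2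
    · exact hpz_a
  -- ranks in j₂
  have hMpair : C.M j₂ {z, a} = 2 := by
    have := C.defc_pair (j := j₂) hza
    omega
  have hs2T1 : ∑ e ∈ ({z, a, b} : Finset α), C.M j₂ {e} = 3 := by
    rw [C.sum_singles_eq_card j₂ (by
      intro e he; simp only [Finset.mem_insert, Finset.mem_singleton] at he
      rcases he with rfl | rfl | rfl <;> assumption), hcardT1]
    norm_num
  have hs2T2 : ∑ e ∈ ({z, a, c} : Finset α), C.M j₂ {e} = 3 := by
    rw [C.sum_singles_eq_card j₂ (by
      intro e he; simp only [Finset.mem_insert, Finset.mem_singleton] at he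
      rcases he with rfl | rfl | rfl <;> assumption), hcardT2]
    norm_num
  have hM2T1 : C.M j₂ {z, a, b} = 2 := by
    have : C.defc j₂ {z, a, b} = 1 := hd2T1
    unfold defc at this; omega
  have hM2T2 : C.M j₂ {z, a, c} = 2 := by
    have : C.defc j₂ {z, a, c} = 1 := hd2T2
    unfold defc at this; omega
  -- M j₂ Q ≤ 2
  have hUn : ({z, a, b} : Finset α) ∪ {z, a, c} = {z, a, b, c} := by
    ext q; simp only [Finset.mem_union, Finset.mem_insert, Finset.mem_singleton]; tauto
  have hIn : ({z, a, b} : Finset α) ∩ {z, a, c} = {z, a} := by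
    ext q
    simp only [Finset.mem_inter, Finset.mem_insert, Finset.mem_singleton]
    constructor
    · rintro ⟨rfl | rfl | rfl, hq2⟩
      · exact Or.inl rfl
      · exact Or.inr rfl
      · rcases hq2 with h | h | h
        · exact Or.inl h
        · exact Or.inr h
        · exact absurd h hbc
    · rintro (rfl | rfl)
      · exact ⟨Or.inl rfl, Or.inl rfl⟩
      · exact ⟨Or.inr (Or.inl rfl), Or.inr (Or.inl rfl)⟩
  have hsmQ := C.hMsub j₂ {z, a, b} {z, a, c} hT1sub hT2sub
  rw [hUn, hIn] at hsmQ
  have hMQ : C.M j₂ {z, a, b, c} ≤ 2 := by omega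
  -- R = {a,b,c}
  have hDR : ∑ l, C.excess l {a, b, c} = 2 := C.Dloc_inedge3 hti ha hb hc hab hac hbc
  have hcardR : ({a, b, c} : Finset α).card = 3 := by
    rw [Finset.card_insert_of_notMem (by simp [hab, hac]), Finset.card_pair hbc]
  have hMR : C.M j {a, b, c} = 1 := by
    apply C.rank_one_of_hub j _ _ rfl hRsub a (by simp)
    · intro y hy hya
      simp only [Finset.mem_insert, Finset.mem_singleton] at hy
      rcases hy with rfl | rfl | rfl
      · exact absurd rfl hya
      · exact hpab
      · exact hpac
    · exact ⟨b, by simp, fun h => hab h.symm⟩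
  have hsR : ∑ e ∈ ({a, b, c} : Finset α), C.M j {e} = 3 := by
    rw [C.sum_singles_eq_card j (by
      intro e he; simp only [Finset.mem_insert, Finset.mem_singleton] at he
      rcases he with rfl | rfl | rfl
      · exact hpa.2.2.1
      · exact hpb.2.2.1
      · exact hpc.2.2.1), hcardR]
    norm_num
  have hdjR : C.defc j {a, b, c} = 2 := by unfold defc; omega
  have hd2R : C.defc j₂ {a, b, c} = 0 := by
    have hle := C.sum_defc_pair_le hRsub (fun h : j = j₂ => hj₂ h.symm)
    rw [hDR] at hle
    have := C.defc_nonneg j₂ hRsub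
    omega
  have hs2R : ∑ e ∈ ({a, b, c} : Finset α), C.M j₂ {e} = 3 := by
    rw [C.sum_singles_eq_card j₂ (by
      intro e he; simp only [Finset.mem_insert, Finset.mem_singleton] at he
      rcases he with rfl | rfl | rfl <;> assumption), hcardR]
    norm_num
  have hM2R : C.M j₂ {a, b, c} = 3 := by unfold defc at hd2R; omega
  have hmono : C.M j₂ {a, b, c} ≤ C.M j₂ {z, a, b, c} := by
    apply C.hMmono j₂ _ _ _ hQsub
    intro q hq
    simp only [Finset.mem_insert, Finset.mem_singleton] at hq ⊢
    tauto
  omega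


lemma sum_defc_quad_le {A : Finset α} (hA : A ⊆ C.E) {j1 j2 j3 j4 : Fin C.k}
    (h12 : j1 ≠ j2) (h13 : j1 ≠ j3) (h14 : j1 ≠ j4) (h23 : j2 ≠ j3)
    (h24 : j2 ≠ j4) (h34 : j3 ≠ j4) :
    C.defc j1 A + C.defc j2 A + C.defc j3 A + C.defc j4 A ≤ ∑ l, C.excess l A := by
  rw [← C.defc_total hA]
  have he : C.defc j1 A + C.defc j2 A + C.defc j3 A + C.defc j4 A
      = ∑ x ∈ ({j1, j2, j3, j4} : Finset (Fin C.k)), C.defc x A := by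
    rw [Finset.sum_insert (by simp [h12, h13, h14]),
      Finset.sum_insert (by simp [h23, h24]), Finset.sum_pair h34]
    ring
  rw [he]
  apply Finset.sum_le_sum_of_subset_of_nonneg (Finset.subset_univ _)
  intro x _ _
  exact C.defc_nonneg x hA

set_option maxHeartbeats 1000000 in
lemma Dloc_zquad {i₀ l₁ l₂ l₃ : Fin C.n} {z x₁ x₂ x₃ : α} (hti : C.t i₀ = 1)
    (hm1 : x₁ ∈ C.X i₀) (hm2 : x₂ ∈ C.X i₀) (hm3 : x₃ ∈ C.X i₀)
    (h12 : x₁ ≠ x₂) (h13 : x₁ ≠ x₃) (h23 : x₂ ≠ x₃) (hzX : z ∉ C.X i₀)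
    (hzl₁ : z ∈ C.X l₁) (hx1l₁ : x₁ ∈ C.X l₁) (htl₁ : C.t l₁ = 1)
    (hzl₂ : z ∈ C.X l₂) (hx2l₂ : x₂ ∈ C.X l₂) (htl₂ : C.t l₂ = 1)
    (hzl₃ : z ∈ C.X l₃) (hx3l₃ : x₃ ∈ C.X l₃) (htl₃ : C.t l₃ = 1) :
    ∑ l, C.excess l {z, x₁, x₂, x₃} = 5 := by
  have hz1 : z ≠ x₁ := fun h => hzX (h ▸ hm1)
  have hz2 : z ≠ x₂ := fun h => hzX (h ▸ hm2)
  have hz3 : z ≠ x₃ := fun h => hzX (h ▸ hm3)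
  have hl1i : l₁ ≠ i₀ := fun h => hzX (h ▸ hzl₁)
  have hl2i : l₂ ≠ i₀ := fun h => hzX (h ▸ hzl₂)
  have hl3i : l₃ ≠ i₀ := fun h => hzX (h ▸ hzl₃)
  have h2l₁ : x₂ ∉ C.X l₁ := fun hq => hl1i (C.pair_container h12 hx1l₁ hq hm1 hm2)
  have h3l₁ : x₃ ∉ C.X l₁ := fun hq => hl1i (C.pair_container h13 hx1l₁ hq hm1 hm3)
  have h1l₂ : x₁ ∉ C.X l₂ := fun hq => hl2i (C.pair_container h12 hq hx2l₂ hm1 hm2)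
  have h3l₂ : x₃ ∉ C.X l₂ := fun hq => hl2i (C.pair_container h23 hx2l₂ hq hm2 hm3)
  have h1l₃ : x₁ ∉ C.X l₃ := fun hq => hl3i (C.pair_container h13 hq hx3l₃ hm1 hm3)
  have h2l₃ : x₂ ∉ C.X l₃ := fun hq => hl3i (C.pair_container h23 hq hx3l₃ hm2 hm3)
  have hl12 : l₁ ≠ l₂ := fun h => h1l₂ (h ▸ hx1l₁)
  have hl13 : l₁ ≠ l₃ := fun h => h1l₃ (h ▸ hx1l₁)
  have hl23 : l₂ ≠ l₃ := fun h => h2l₃ (h ▸ hx2l₂)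
  have hIi : ({z, x₁, x₂, x₃} : Finset α) ∩ C.X i₀ = {x₁, x₂, x₃} := by
    ext q
    simp only [Finset.mem_inter, Finset.mem_insert, Finset.mem_singleton]
    constructor
    · rintro ⟨rfl | rfl | rfl | rfl, hq2⟩
      · exact absurd hq2 hzX
      · exact Or.inl rfl
      · exact Or.inr (Or.inl rfl)
      · exact Or.inr (Or.inr rfl)
    · rintro (rfl | rfl | rfl)
      · exact ⟨Or.inr (Or.inl rfl), hm1⟩
      · exact ⟨Or.inr (Or.inr (Or.inl rfl)), hm2⟩
      · exact ⟨Or.inr (Or.inr (Or.inr rfl)), hm3⟩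
  have hI1 : ({z, x₁, x₂, x₃} : Finset α) ∩ C.X l₁ = {z, x₁} := by
    ext q
    simp only [Finset.mem_inter, Finset.mem_insert, Finset.mem_singleton]
    constructor
    · rintro ⟨rfl | rfl | rfl | rfl, hq2⟩
      · exact Or.inl rfl
      · exact Or.inr rfl
      · exact absurd hq2 h2l₁
      · exact absurd hq2 h3l₁
    · rintro (rfl | rfl)
      · exact ⟨Or.inl rfl, hzl₁⟩
      · exact ⟨Or.inr (Or.inl rfl), hx1l₁⟩
  have hI2 : ({z, x₁, x₂, x₃} : Finset α) ∩ C.X l₂ = {z, x₂} := by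
    ext q
    simp only [Finset.mem_inter, Finset.mem_insert, Finset.mem_singleton]
    constructor
    · rintro ⟨rfl | rfl | rfl | rfl, hq2⟩
      · exact Or.inl rfl
      · exact absurd hq2 h1l₂
      · exact Or.inr rfl
      · exact absurd hq2 h3l₂
    · rintro (rfl | rfl)
      · exact ⟨Or.inl rfl, hzl₂⟩
      · exact ⟨Or.inr (Or.inr (Or.inl rfl)), hx2l₂⟩
  have hI3 : ({z, x₁, x₂, x₃} : Finset α) ∩ C.X l₃ = {z, x₃} := by
    ext q
    simp only [Finset.mem_inter, Finset.mem_insert, Finset.mem_singleton]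
    constructor
    · rintro ⟨rfl | rfl | rfl | rfl, hq2⟩
      · exact Or.inl rfl
      · exact absurd hq2 h1l₃
      · exact absurd hq2 h2l₃
      · exact Or.inr rfl
    · rintro (rfl | rfl)
      · exact ⟨Or.inl rfl, hzl₃⟩
      · exact ⟨Or.inr (Or.inr (Or.inr rfl)), hx3l₃⟩
  rw [C.excess_sum_eq {i₀, l₁, l₂, l₃} (by
    intro l hl
    simp only [Finset.mem_insert, Finset.mem_singleton] at hl
    push_neg at hl
    obtain ⟨hli, hll1, hll2, hll3⟩ := hl
    apply C.excess_zero_of_pairs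
    intro p hp q hq hpq hand
    simp only [Finset.mem_insert, Finset.mem_singleton] at hp hq
    obtain ⟨hpl, hql⟩ := hand
    rcases hp with rfl | rfl | rfl | rfl <;> rcases hq with rfl | rfl | rfl | rfl
    · exact hpq rfl
    · exact hll1 (C.pair_container hpq hpl hql hzl₁ hx1l₁)
    · exact hll2 (C.pair_container hpq hpl hql hzl₂ hx2l₂)
    · exact hll3 (C.pair_container hpq hpl hql hzl₃ hx3l₃)
    · exact hll1 (C.pair_container hpq hpl hql hx1l₁ hzl₁)
    · exact hpq rfl
    · exact hli (C.pair_container hpq hpl hql hm1 hm2)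
    · exact hli (C.pair_container hpq hpl hql hm1 hm3)
    · exact hll2 (C.pair_container hpq hpl hql hx2l₂ hzl₂)
    · exact hli (C.pair_container hpq hpl hql hm2 hm1)
    · exact hpq rfl
    · exact hli (C.pair_container hpq hpl hql hm2 hm3)
    · exact hll3 (C.pair_container hpq hpl hql hx3l₃ hzl₃)
    · exact hli (C.pair_container hpq hpl hql hm3 hm1)
    · exact hli (C.pair_container hpq hpl hql hm3 hm2)
    · exact hpq rfl)]
  rw [Finset.sum_insert (by simp [Ne.symm hl1i, Ne.symm hl2i, Ne.symm hl3i]),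
    Finset.sum_insert (by simp [hl12, hl13]),
    Finset.sum_insert (by simp [hl23]), Finset.sum_singleton]
  unfold excess
  rw [hIi, hI1, hI2, hI3,
    Finset.card_insert_of_notMem (by simp [h12, h13]), Finset.card_pair h23,
    Finset.card_pair hz1, Finset.card_pair hz2, Finset.card_pair hz3]
  omega

set_option maxHeartbeats 1600000 in
lemma pencil {i₀ : Fin C.n} (hti : C.t i₀ = 1) {z x₁ x₂ x₃ : α} {j : Fin C.k}
    (hz : z ∈ C.E) (hzX : z ∉ C.X i₀)
    (hm1 : x₁ ∈ C.X i₀) (hm2 : x₂ ∈ C.X i₀) (hm3 : x₃ ∈ C.X i₀)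
    (h12 : x₁ ≠ x₂) (h13 : x₁ ≠ x₃) (h23 : x₂ ≠ x₃)
    (hp1 : C.Par j z x₁) (hp2 : C.Par j z x₂) (hp3 : C.Par j z x₃) : False := by
  have h1E := C.hXsub i₀ hm1
  have h2E := C.hXsub i₀ hm2
  have h3E := C.hXsub i₀ hm3
  have hz1 : z ≠ x₁ := hp1.1
  have hz2 : z ≠ x₂ := hp2.1
  have hz3 : z ≠ x₃ := hp3.1
  obtain ⟨l₁, hzl₁, hx1l₁, htl₁⟩ := C.par_line hp1 hz h1E
  obtain ⟨l₂, hzl₂, hx2l₂, htl₂⟩ := C.par_line hp2 hz h2E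
  obtain ⟨l₃, hzl₃, hx3l₃, htl₃⟩ := C.par_line hp3 hz h3E
  -- triple analysis
  have triple : ∀ (u v : α) (lu lv : Fin C.n), u ∈ C.X i₀ → v ∈ C.X i₀ → u ≠ v →
      C.Par j z u → C.Par j z v →
      z ∈ C.X lu → u ∈ C.X lu → C.t lu = 1 → z ∈ C.X lv → v ∈ C.X lv → C.t lv = 1 →
      ∃ τ, τ ≠ j ∧ 1 ≤ C.defc τ {z, u, v} := by
    intro u v lu lv hu hv huv hpu hpv hzlu hulu htlu hzlv hvlv htlv
    have hzu : z ≠ u := hpu.1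
    have hzv : z ≠ v := hpv.1
    have hTsub : ({z, u, v} : Finset α) ⊆ C.E := by
      intro q hq; simp only [Finset.mem_insert, Finset.mem_singleton] at hq
      rcases hq with rfl | rfl | rfl
      · exact hz
      · exact C.hXsub i₀ hu
      · exact C.hXsub i₀ hv
    have hDT : ∑ l, C.excess l {z, u, v} = 3 :=
      C.Dloc_ztriple hti hu hv huv hzX hzlu hulu htlu hzlv hvlv htlv
    have hMT : C.M j {z, u, v} = 1 := by
      apply C.rank_one_of_hub j _ _ rfl hTsub z (by simp)
      · intro y hy hyz
        simp only [Finset.mem_insert, Finset.mem_singleton] at hy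
        rcases hy with rfl | rfl | rfl
        · exact absurd rfl hyz
        · exact hpu
        · exact hpv
      · exact ⟨u, by simp, fun h => hzu h.symm⟩
    have hcardT : ({z, u, v} : Finset α).card = 3 := by
      rw [Finset.card_insert_of_notMem (by simp [hzu, hzv]), Finset.card_pair huv]
    have hsT : ∑ e ∈ ({z, u, v} : Finset α), C.M j {e} = 3 := by
      rw [C.sum_singles_eq_card j (by
        intro e he; simp only [Finset.mem_insert, Finset.mem_singleton] at he
        rcases he with rfl | rfl | rfl
        · exact hpu.2.1
        · exact hpu.2.2.1
        · exact hpv.2.2.1), hcardT]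
      norm_num
    have hdjT : C.defc j {z, u, v} = 2 := by unfold defc; omega
    exact C.exists_second hTsub (by omega)
  obtain ⟨τ₁₂, hτ₁₂j, hd₁₂⟩ :=
    triple x₁ x₂ l₁ l₂ hm1 hm2 h12 hp1 hp2 hzl₁ hx1l₁ htl₁ hzl₂ hx2l₂ htl₂
  obtain ⟨τ₁₃, hτ₁₃j, hd₁₃⟩ :=
    triple x₁ x₃ l₁ l₃ hm1 hm3 h13 hp1 hp3 hzl₁ hx1l₁ htl₁ hzl₃ hx3l₃ htl₃
  obtain ⟨τ₂₃, hτ₂₃j, hd₂₃⟩ :=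
    triple x₂ x₃ l₂ l₃ hm2 hm3 h23 hp2 hp3 hzl₂ hx2l₂ htl₂ hzl₃ hx3l₃ htl₃
  have hperm21 : ({z, x₂, x₁} : Finset α) = {z, x₁, x₂} := by
    ext q; simp only [Finset.mem_insert, Finset.mem_singleton]; tauto
  have hperm31 : ({z, x₃, x₁} : Finset α) = {z, x₁, x₃} := by
    ext q; simp only [Finset.mem_insert, Finset.mem_singleton]; tauto
  have hperm32 : ({z, x₃, x₂} : Finset α) = {z, x₂, x₃} := by
    ext q; simp only [Finset.mem_insert, Finset.mem_singleton]; tauto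
  by_cases hc1 : τ₁₂ = τ₁₃
  · exact C.pencil_two hti hz hzX hm1 hm2 hm3 h12 h13 h23 hp1 hp2 hp3 hτ₁₂j
      hd₁₂ (hc1 ▸ hd₁₃)
  · by_cases hc2 : τ₁₂ = τ₂₃
    · apply C.pencil_two hti hz hzX hm2 hm1 hm3 (Ne.symm h12) h23 h13 hp2 hp1 hp3 hτ₁₂j
      · rw [hperm21]; exact hd₁₂
      · rw [hc2]; exact hd₂₃
    · by_cases hc3 : τ₁₃ = τ₂₃
      · apply C.pencil_two hti hz hzX hm3 hm1 hm2 (Ne.symm h13) (Ne.symm h23) h12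
          hp3 hp1 hp2 hτ₁₃j
        · rw [hperm31]; exact hd₁₃
        · rw [hperm32, hc3]; exact hd₂₃
      · -- all three distinct: contradiction on the 4-set
        have hQsub : ({z, x₁, x₂, x₃} : Finset α) ⊆ C.E := by
          intro q hq; simp only [Finset.mem_insert, Finset.mem_singleton] at hq
          rcases hq with rfl | rfl | rfl | rfl <;> assumption
        have hDQ : ∑ l, C.excess l {z, x₁, x₂, x₃} = 5 :=
          C.Dloc_zquad hti hm1 hm2 hm3 h12 h13 h23 hzX hzl₁ hx1l₁ htl₁
            hzl₂ hx2l₂ htl₂ hzl₃ hx3l₃ htl₃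
        have hMQ : C.M j {z, x₁, x₂, x₃} = 1 := by
          apply C.rank_one_of_hub j _ _ rfl hQsub z (by simp)
          · intro y hy hyz
            simp only [Finset.mem_insert, Finset.mem_singleton] at hy
            rcases hy with rfl | rfl | rfl | rfl
            · exact absurd rfl hyz
            · exact hp1
            · exact hp2
            · exact hp3
          · exact ⟨x₁, by simp, fun h => hz1 h.symm⟩
        have hcardQ : ({z, x₁, x₂, x₃} : Finset α).card = 4 := by
          rw [Finset.card_insert_of_notMem (by simp [hz1, hz2, hz3]),
            Finset.card_insert_of_notMem (by simp [h12, h13]), Finset.card_pair h23]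
        have hsQ : ∑ e ∈ ({z, x₁, x₂, x₃} : Finset α), C.M j {e} = 4 := by
          rw [C.sum_singles_eq_card j (by
            intro e he; simp only [Finset.mem_insert, Finset.mem_singleton] at he
            rcases he with rfl | rfl | rfl | rfl
            · exact hp1.2.1
            · exact hp1.2.2.1
            · exact hp2.2.2.1
            · exact hp3.2.2.1), hcardQ]
          norm_num
        have hdjQ : C.defc j {z, x₁, x₂, x₃} = 3 := by unfold defc; omega
        have hsub12 : ({z, x₁, x₂} : Finset α) ⊆ {z, x₁, x₂, x₃} := by
          intro q hq; simp only [Finset.mem_insert, Finset.mem_singleton] at hq ⊢; tauto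
        have hsub13 : ({z, x₁, x₃} : Finset α) ⊆ {z, x₁, x₂, x₃} := by
          intro q hq; simp only [Finset.mem_insert, Finset.mem_singleton] at hq ⊢; tauto
        have hsub23 : ({z, x₂, x₃} : Finset α) ⊆ {z, x₁, x₂, x₃} := by
          intro q hq; simp only [Finset.mem_insert, Finset.mem_singleton] at hq ⊢; tauto
        have h1 : 1 ≤ C.defc τ₁₂ {z, x₁, x₂, x₃} :=
          le_trans hd₁₂ (C.defc_mono τ₁₂ hsub12 hQsub)
        have h2 : 1 ≤ C.defc τ₁₃ {z, x₁, x₂, x₃} :=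
          le_trans hd₁₃ (C.defc_mono τ₁₃ hsub13 hQsub)
        have h3 : 1 ≤ C.defc τ₂₃ {z, x₁, x₂, x₃} :=
          le_trans hd₂₃ (C.defc_mono τ₂₃ hsub23 hQsub)
        have hquad := C.sum_defc_quad_le hQsub (Ne.symm hτ₁₂j) (Ne.symm hτ₁₃j)
          (Ne.symm hτ₂₃j) hc1 hc2 hc3
        rw [hDQ] at hquad
        omega


lemma common_unique {i i' : Fin C.n} (hne : i ≠ i') {e : α} (he : e ∈ C.X i)
    (he' : e ∈ C.X i') : ∀ f, f ∈ C.X i → f ∈ C.X i' → f = e := by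
  intro f hf hf'
  by_contra hfe
  exact hne (C.pair_container hfe hf he hf' he')

lemma card3_elem {i : Fin C.n} {e y : α} (he : e ∈ C.X i) (hy : y ∈ C.X i)
    (hye : y ≠ e) (h3 : 3 ≤ (C.X i).card) : ∃ w, w ∈ C.X i ∧ w ≠ e ∧ w ≠ y := by
  have : 0 < (((C.X i).erase e).erase y).card := by
    rw [Finset.card_erase_of_mem (Finset.mem_erase.2 ⟨hye, hy⟩), Finset.card_erase_of_mem he]
    omega
  obtain ⟨w, hw⟩ := Finset.card_pos.1 this
  obtain ⟨hwy, hw2⟩ := Finset.mem_erase.1 hw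
  obtain ⟨hwe, hw3⟩ := Finset.mem_erase.1 hw2
  exact ⟨w, hw3, hwe, hwy⟩

lemma pencil_apply {i₀ : Fin C.n} {j : Fin C.k} {e y z : α} (hti : C.t i₀ = 1)
    (he : e ∈ C.X i₀) (hy : y ∈ C.X i₀) (hye : y ≠ e)
    (hzX : z ∉ C.X i₀) (hzE : z ∈ C.E) (h3 : 3 ≤ (C.X i₀).card)
    (hcol : ∀ u v, u ∈ C.X i₀ → v ∈ C.X i₀ → u ≠ v → C.Par j u v)
    (hPez : C.Par j e z) : False := by
  obtain ⟨y₂, hy₂, hy₂e, hy₂y⟩ := C.card3_elem he hy hye h3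
  have heE := C.hXsub i₀ he
  have hyE := C.hXsub i₀ hy
  have hy₂E := C.hXsub i₀ hy₂
  have hzy : z ≠ y := fun h => hzX (h ▸ hy)
  have hzy₂ : z ≠ y₂ := fun h => hzX (h ▸ hy₂)
  have hze : z ≠ e := fun h => hzX (h ▸ he)
  have hPze : C.Par j z e := hPez.symm'
  have hPzy : C.Par j z y :=
    C.par_trans heE hzE hyE hPez (hcol e y he hy (fun h => hye h.symm)) hzy
  have hPzy₂ : C.Par j z y₂ :=
    C.par_trans heE hzE hy₂E hPez (hcol e y₂ he hy₂ (fun h => hy₂e h.symm)) hzy₂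
  exact C.pencil hti hzE hzX he hy hy₂ (fun h => hye h.symm) (fun h => hy₂e h.symm)
    (fun h => hy₂y h.symm) hPze hPzy hPzy₂

lemma prop_one_one {i i' : Fin C.n} (hne : i ≠ i')
    (hbig : C.t i < ((C.X i).card : ℤ)) (hbig' : C.t i' < ((C.X i').card : ℤ))
    (hti : C.t i = 1) (hti' : C.t i' = 1) {e : α} (he : e ∈ C.X i) (he' : e ∈ C.X i')
    (heq : C.cEdge i hbig = C.cEdge i' hbig') : False := by
  set j := C.cEdge i hbig with hj
  -- all pairs in X i and X i' are parallel in color j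
  have hcol : ∀ u v, u ∈ C.X i → v ∈ C.X i → u ≠ v → C.Par j u v := by
    intro u v hu hv huv
    have := (C.line_par hti hu hv huv).1
    exact this
  have hcol' : ∀ u v, u ∈ C.X i' → v ∈ C.X i' → u ≠ v → C.Par j u v := by
    intro u v hu hv huv
    have := (C.line_par hti' hu hv huv).1
    rw [← heq] at this
    exact this
  -- choose y and z
  have hy : ∃ y, y ∈ C.X i ∧ y ≠ e := by
    have : 0 < ((C.X i).erase e).card := by
      rw [Finset.card_erase_of_mem he]; omega
    obtain ⟨y, hy⟩ := Finset.card_pos.1 this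
    exact ⟨y, Finset.mem_of_mem_erase hy, (Finset.mem_erase.1 hy).1⟩
  obtain ⟨y, hyi, hye⟩ := hy
  have hz : ∃ z, z ∈ C.X i' ∧ z ≠ e := by
    have : 0 < ((C.X i').erase e).card := by
      rw [Finset.card_erase_of_mem he']; omega
    obtain ⟨z, hz⟩ := Finset.card_pos.1 this
    exact ⟨z, Finset.mem_of_mem_erase hz, (Finset.mem_erase.1 hz).1⟩
  obtain ⟨z, hzi', hze⟩ := hz
  have hyE := C.hXsub i hyi
  have hzE := C.hXsub i' hzi'
  have heE := C.hXsub i he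
  have hyXi' : y ∉ C.X i' := fun h => hye (C.common_unique hne he he' y hyi h)
  have hzXi : z ∉ C.X i := fun h => hze (C.common_unique hne he he' z h hzi')
  have hyz : y ≠ z := fun h => hyXi' (h ▸ hzi')
  have hPey : C.Par j e y := hcol e y he hyi (fun h => hye h.symm)
  have hPez : C.Par j e z := hcol' e z he' hzi' (fun h => hze h.symm)
  -- case analysis on sizes
  by_cases h3i : 3 ≤ (C.X i).card
  · exact C.pencil_apply hti he hyi hye hzXi hzE h3i hcol hPez
  · by_cases h3i' : 3 ≤ (C.X i').card
    · exact C.pencil_apply hti' he' hzi' hze hyXi' hyE h3i' hcol' hPey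
    · -- both have exactly two elements
      have hXi : C.X i = {e, y} := by
        apply (Finset.eq_of_subset_of_card_le (by
          intro q hq; simp only [Finset.mem_insert, Finset.mem_singleton] at hq
          rcases hq with rfl | rfl <;> assumption) (by
          rw [Finset.card_pair (fun h => hye h.symm)]; omega)).symm
      have hXi' : C.X i' = {e, z} := by
        apply (Finset.eq_of_subset_of_card_le (by
          intro q hq; simp only [Finset.mem_insert, Finset.mem_singleton] at hq
          rcases hq with rfl | rfl <;> assumption) (by
          rw [Finset.card_pair (fun h => hze h.symm)]; omega)).symm
      -- the line through y and z
      have hPyz : C.Par j y z := C.par_trans heE hyE hzE hPey hPez hyz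
      obtain ⟨l, hyl, hzl, htl⟩ := C.par_line hPyz hyE hzE
      have hli : l ≠ i := fun h => hzXi (h ▸ hzl)
      have hli' : l ≠ i' := fun h => hyXi' (h ▸ hyl)
      have hel : e ∉ C.X l := fun h => hli (C.pair_container hye hyl h hyi he)
      by_cases h3l : 3 ≤ (C.X l).card
      · -- X l has a third point w; pencil at l with outside point e
        obtain ⟨w, hwl, hwy, hwz⟩ := C.card3_elem hyl hzl (fun h => hyz h.symm) h3l
        have hcoll : ∀ u v, u ∈ C.X l → v ∈ C.X l → u ≠ v → C.Par j u v := by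
          intro u v hu hv huv
          have h1 := (C.line_par htl hu hv huv).1
          have h2 := (C.line_par htl hyl hzl hyz).2 j hPyz
          rw [← h2] at h1
          exact h1
        exact C.pencil_apply htl hyl hzl (fun h => hyz h.symm) hel heE h3l hcoll
          (hPey.symm' : C.Par j y e)
      · -- X l = {y, z} : contradiction with H3
        have hXl : C.X l = {y, z} := by
          apply (Finset.eq_of_subset_of_card_le (by
            intro q hq; simp only [Finset.mem_insert, Finset.mem_singleton] at hq
            rcases hq with rfl | rfl <;> assumption) (by
            rw [Finset.card_pair hyz]; omega)).symm
        exact C.hH3 ⟨e, y, z, i, i', l, fun h => hye h.symm, fun h => hze h.symm, hyz,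
          hXi, hXi', hXl⟩


lemma disjpar (j : Fin C.k) (F : Finset (Fin C.n)) :
    ∀ (A : Finset α), A ⊆ C.E → ∀ (x y : Fin C.n → α),
    (∀ l ∈ F, C.Par j (x l) (y l) ∧ x l ∈ A ∧ y l ∈ A) →
    (∀ l ∈ F, ∀ l' ∈ F, l ≠ l' → y l ≠ y l' ∧ y l ≠ x l' ∧ x l ≠ y l') →
    (F.card : ℤ) ≤ C.defc j A := by
  induction F using Finset.induction with
  | empty => intro A hA x y _ _; simpa using C.defc_nonneg j hA
  | @insert l F hl ihF =>
    intro A hA x y hmem hdisj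
    obtain ⟨hpar, hxA, hyA⟩ := hmem l (Finset.mem_insert_self _ _)
    have her := C.par_erase hA hpar hxA hyA
    have hsub : A.erase (y l) ⊆ C.E := (Finset.erase_subset _ _).trans hA
    have hrec : (F.card : ℤ) ≤ C.defc j (A.erase (y l)) := by
      apply ihF (A.erase (y l)) hsub x y
      · intro l' hl'
        have hl'mem := hmem l' (Finset.mem_insert_of_mem hl')
        have hne : l ≠ l' := fun h => hl (h ▸ hl')
        have hd := hdisj l (Finset.mem_insert_self _ _) l' (Finset.mem_insert_of_mem hl') hne
        exact ⟨hl'mem.1, Finset.mem_erase.2 ⟨Ne.symm hd.2.1, hl'mem.2.1⟩,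
          Finset.mem_erase.2 ⟨Ne.symm hd.1, hl'mem.2.2⟩⟩
      · intro l1 hl1 l2 hl2 hne12
        exact hdisj l1 (Finset.mem_insert_of_mem hl1) l2 (Finset.mem_insert_of_mem hl2) hne12
    rw [Finset.card_insert_of_notMem hl]
    push_cast
    omega

set_option maxHeartbeats 4000000 in
lemma prop_master_aux : ∀ (N : ℕ), ∀ {i i' : Fin C.n}, (C.t i + C.t i').toNat = N →
    i ≠ i' → C.t i ≤ C.t i' →
    ∀ (hbig : C.t i < ((C.X i).card : ℤ)) (hbig' : C.t i' < ((C.X i').card : ℤ)),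
    ∀ {e : α}, e ∈ C.X i → e ∈ C.X i' →
    C.cEdge i hbig = C.cEdge i' hbig' → False := by
  intro N
  induction N using Nat.strong_induction_on with
  | _ N ih =>
    intro i i' hN hne hord hbig hbig' e he he' heq
    have ht1i := C.ht1 i
    have ht1i' := C.ht1 i'
    by_cases hti' : C.t i' = 1
    · exact C.prop_one_one hne hbig hbig' (by omega) hti' he he' heq
    · have hti'2 : 2 ≤ C.t i' := by omega
      set j := C.cEdge i hbig with hjdef
      have heq2 : C.cEdge i hbig = C.cEdge i' hbig' := heq
      have heE := C.hXsub i he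
      have hcommon := C.common_unique hne he he'
      have hMXi : C.M j (C.X i) = C.t i :=
        C.rank_edge_big hbig (Finset.Subset.refl _) (by omega)
      have hMXi' : C.M j (C.X i') = C.t i' := by
        rw [hjdef, heq2]; exact C.rank_edge_big hbig' (Finset.Subset.refl _) (by omega)
      have hMe : C.M j {e} = 1 := C.cEdge_singles hbig he
      have hIee : C.X i ∩ C.X i' = {e} := by
        ext q
        simp only [Finset.mem_inter, Finset.mem_singleton]
        constructor
        · rintro ⟨hq1, hq2⟩; exact hcommon q hq1 hq2
        · rintro rfl; exact ⟨he, he'⟩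
      have hsmU := C.hMsub j (C.X i) (C.X i') (C.hXsub i) (C.hXsub i')
      rw [hIee] at hsmU
      set A₀ := (C.X i ∪ C.X i').erase e with hA₀def
      have hUsubE : C.X i ∪ C.X i' ⊆ C.E := Finset.union_subset (C.hXsub i) (C.hXsub i')
      have hA₀sub : A₀ ⊆ C.E := (Finset.erase_subset _ _).trans hUsubE
      have hMA₀ : C.M j A₀ ≤ C.t i + C.t i' - 1 := by
        have := C.hMmono j A₀ (C.X i ∪ C.X i') (Finset.erase_subset _ _) hUsubE
        omega
      have hsingles : ∀ a ∈ A₀, C.M j {a} = 1 := by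
        intro a ha
        rcases Finset.mem_union.1 (Finset.mem_of_mem_erase ha) with h | h
        · exact C.cEdge_singles hbig h
        · rw [hjdef, heq2]; exact C.cEdge_singles hbig' h
      have heU : e ∈ C.X i ∪ C.X i' := Finset.mem_union_left _ he
      have hcardU : (C.X i ∪ C.X i').card + ({e} : Finset α).card
          = (C.X i).card + (C.X i').card := by
        rw [← hIee]; exact Finset.card_union_add_card_inter _ _
      have hcardA₀ : (A₀.card : ℤ) = ((C.X i).card : ℤ) + ((C.X i').card : ℤ) - 2 := by
        rw [hA₀def, Finset.card_erase_of_mem heU]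
        simp only [Finset.card_singleton] at hcardU
        have : 1 ≤ (C.X i ∪ C.X i').card := Finset.card_pos.2 ⟨e, heU⟩
        push_cast
        omega
      have hdefcA₀ : ((C.X i).card : ℤ) + ((C.X i').card : ℤ) - 2 - (C.t i + C.t i' - 1)
          ≤ C.defc j A₀ := by
        unfold defc
        rw [C.sum_singles_eq_card j hsingles]
        omega
      -- the family of crossing lines
      set F := Finset.univ.filter (fun l => l ≠ i ∧ l ≠ i' ∧ C.t l = 1 ∧
        (A₀ ∩ C.X l).card = 2) with hFdef
      have hFmem : ∀ l, l ∈ F ↔ (l ≠ i ∧ l ≠ i' ∧ C.t l = 1 ∧ (A₀ ∩ C.X l).card = 2) := by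
        intro l
        rw [hFdef, Finset.mem_filter]
        simp
      have hsideA₀ : ∀ a ∈ A₀, (a ∈ C.X i ∨ a ∈ C.X i') ∧ a ≠ e := by
        intro a ha
        exact ⟨Finset.mem_union.1 (Finset.mem_of_mem_erase ha), (Finset.mem_erase.1 ha).1⟩
      have hmemA₀ : ∀ a, a ≠ e → (a ∈ C.X i ∨ a ∈ C.X i') → a ∈ A₀ := by
        intro a hae hmem
        refine Finset.mem_erase.2 ⟨hae, ?_⟩
        rcases hmem with h | h
        · exact Finset.mem_union_left _ h
        · exact Finset.mem_union_right _ h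
      have hFdata : ∀ l ∈ F, ∃ x y, x ∈ C.X i ∧ x ≠ e ∧ y ∈ C.X i' ∧ y ≠ e ∧ x ≠ y ∧
          x ∈ C.X l ∧ y ∈ C.X l := by
        intro l hlF
        rw [hFmem] at hlF
        obtain ⟨hli, hli', htl, hcard2⟩ := hlF
        obtain ⟨p, q, hpq, hpqeq⟩ := Finset.card_eq_two.1 hcard2
        have hp : p ∈ A₀ ∩ C.X l := by rw [hpqeq]; simp
        have hq : q ∈ A₀ ∩ C.X l := by rw [hpqeq]; simp
        obtain ⟨hpA, hpl⟩ := Finset.mem_inter.1 hp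
        obtain ⟨hqA, hql⟩ := Finset.mem_inter.1 hq
        obtain ⟨hpU, hpe⟩ := hsideA₀ p hpA
        obtain ⟨hqU, hqe⟩ := hsideA₀ q hqA
        rcases hpU with hpXi | hpXi'
        · rcases hqU with hqXi | hqXi'
          · exact absurd (C.pair_container hpq hpl hql hpXi hqXi) hli
          · exact ⟨p, q, hpXi, hpe, hqXi', hqe, hpq, hpl, hql⟩
        · rcases hqU with hqXi | hqXi'
          · exact ⟨q, p, hqXi, hqe, hpXi', hpe, Ne.symm hpq, hql, hpl⟩
          · exact absurd (C.pair_container hpq hpl hql hpXi' hqXi') hli'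
      choose xf yf hP using hFdata
      have hFt : ∀ l (h : l ∈ F), C.t l = 1 := fun l h => ((hFmem l).1 h).2.2.1
      classical
      set x' : Fin C.n → α := fun l => if h : l ∈ F then xf l h else e with hx'def
      set y' : Fin C.n → α := fun l => if h : l ∈ F then yf l h else e with hy'def
      set gcol : Fin C.n → Fin C.k := fun l =>
        if h : l ∈ F then C.cEdge l (C.line_big (hFt l h) (hP l h).2.2.2.2.2.1
          (hP l h).2.2.2.2.2.2 (hP l h).2.2.2.2.1) else j with hgdef
      have hx'eq : ∀ l (h : l ∈ F), x' l = xf l h := by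
        intro l h; rw [hx'def]; simp [h]
      have hy'eq : ∀ l (h : l ∈ F), y' l = yf l h := by
        intro l h; rw [hy'def]; simp [h]
      have hgPar : ∀ l (h : l ∈ F), C.Par (gcol l) (x' l) (y' l) := by
        intro l h
        rw [hx'eq l h, hy'eq l h, hgdef]
        simp only [dif_pos h]
        exact (C.line_par (hFt l h) (hP l h).2.2.2.2.2.1 (hP l h).2.2.2.2.2.2
          (hP l h).2.2.2.2.1).1
      have hgU : ∀ l (h : l ∈ F) (j'' : Fin C.k), C.Par j'' (x' l) (y' l) → j'' = gcol l := by
        intro l h j'' hp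
        rw [hx'eq l h, hy'eq l h] at hp
        rw [hgdef]
        simp only [dif_pos h]
        exact (C.line_par (hFt l h) (hP l h).2.2.2.2.2.1 (hP l h).2.2.2.2.2.2
          (hP l h).2.2.2.2.1).2 j'' hp
      -- crossing lines never have color j
      have hgne : ∀ l (h : l ∈ F), gcol l ≠ j := by
        intro l h hgj
        have hbigl : C.t l < ((C.X l).card : ℤ) :=
          C.line_big (hFt l h) (hP l h).2.2.2.2.2.1 (hP l h).2.2.2.2.2.2 (hP l h).2.2.2.2.1
        have hgeq : C.cEdge l hbigl = j := by
          rw [← hgj, hgdef]; simp only [dif_pos h]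
        have hli : l ≠ i := ((hFmem l).1 h).1
        by_cases hti : C.t i = 1
        · exact C.prop_one_one hli hbigl hbig (hFt l h) hti (hP l h).2.2.2.2.2.1
            (hP l h).1 hgeq
        · apply ih (C.t l + C.t i).toNat (by
            have := C.ht1 l
            rw [hFt l h]
            omega) (i := l) (i' := i) rfl hli (by rw [hFt l h]; omega) hbigl hbig
            (hP l h).2.2.2.2.2.1 (hP l h).1
          rw [hgeq, hjdef]

      -- Dloc of A₀
      have hIA₀i : A₀ ∩ C.X i = (C.X i).erase e := by
        ext q
        simp only [Finset.mem_inter, Finset.mem_erase]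
        constructor
        · rintro ⟨hq1, hq2⟩
          exact ⟨(Finset.mem_erase.1 hq1).1, hq2⟩
        · rintro ⟨hq1, hq2⟩
          exact ⟨Finset.mem_erase.2 ⟨hq1, Finset.mem_union_left _ hq2⟩, hq2⟩
      have hIA₀i' : A₀ ∩ C.X i' = (C.X i').erase e := by
        ext q
        simp only [Finset.mem_inter, Finset.mem_erase]
        constructor
        · rintro ⟨hq1, hq2⟩
          exact ⟨(Finset.mem_erase.1 hq1).1, hq2⟩
        · rintro ⟨hq1, hq2⟩
          exact ⟨Finset.mem_erase.2 ⟨hq1, Finset.mem_union_right _ hq2⟩, hq2⟩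
      have hA₀interbound : ∀ l, l ≠ i → l ≠ i' → (A₀ ∩ C.X l).card ≤ 2 := by
        intro l hli hli'
        have hsub2 : A₀ ∩ C.X l ⊆ (C.X i ∩ C.X l) ∪ (C.X i' ∩ C.X l) := by
          intro a ha
          obtain ⟨haA, hal⟩ := Finset.mem_inter.1 ha
          rcases (hsideA₀ a haA).1 with h | h
          · exact Finset.mem_union_left _ (Finset.mem_inter.2 ⟨h, hal⟩)
          · exact Finset.mem_union_right _ (Finset.mem_inter.2 ⟨h, hal⟩)
        calc (A₀ ∩ C.X l).card ≤ _ := Finset.card_le_card hsub2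
          _ ≤ (C.X i ∩ C.X l).card + (C.X i' ∩ C.X l).card := Finset.card_union_le _ _
          _ ≤ 2 := by
            have h1 := C.hH2 i l (fun hq => hli hq.symm)
            have h2 := C.hH2 i' l (fun hq => hli' hq.symm)
            omega
      have hiF : i ∉ F := by rw [hFmem]; tauto
      have hi'F : i' ∉ F := by rw [hFmem]; tauto
      have hiins : i ∉ insert i' F := by
        intro hq
        rcases Finset.mem_insert.1 hq with h | h
        · exact hne h
        · exact hiF h
      have hDA₀ : ∑ l, C.excess l A₀ =
          (((C.X i).card : ℤ) - 1 - C.t i) + ((((C.X i').card : ℤ) - 1 - C.t i')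
            + (F.card : ℤ)) := by
        rw [C.excess_sum_eq (insert i (insert i' F)) (by
          intro l hl
          simp only [Finset.mem_insert] at hl
          push_neg at hl
          obtain ⟨hli, hli', hlF⟩ := hl
          apply C.excess_eq_zero
          have hb := hA₀interbound l hli hli'
          have htl := C.ht1 l
          rcases Nat.lt_or_ge (A₀ ∩ C.X l).card 2 with hlt | hge
          · omega
          · have hcard2 : (A₀ ∩ C.X l).card = 2 := by omega
            have hnotl : ¬ C.t l = 1 := by
              intro htl1
              exact hlF ((hFmem l).2 ⟨hli, hli', htl1, hcard2⟩)
            omega)]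
        rw [Finset.sum_insert hiins, Finset.sum_insert hi'F]
        have hex_i : C.excess i A₀ = ((C.X i).card : ℤ) - 1 - C.t i := by
          unfold excess
          rw [hIA₀i, Finset.card_erase_of_mem he]
          have hic : 1 ≤ (C.X i).card := Finset.card_pos.2 ⟨e, he⟩
          omega
        have hex_i' : C.excess i' A₀ = ((C.X i').card : ℤ) - 1 - C.t i' := by
          unfold excess
          rw [hIA₀i', Finset.card_erase_of_mem he']
          have hic : 1 ≤ (C.X i').card := Finset.card_pos.2 ⟨e, he'⟩
          omega
        have hex_F : ∑ l ∈ F, C.excess l A₀ = (F.card : ℤ) := by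
          have hone : ∀ l ∈ F, C.excess l A₀ = 1 := by
            intro l hl
            unfold excess
            rw [((hFmem l).1 hl).2.2.2, hFt l hl]
            norm_num
          rw [Finset.sum_congr rfl hone, Finset.sum_const, nsmul_eq_mul, mul_one]
        rw [hex_i, hex_i', hex_F]
      -- counting the deficiency of the other colors
      have hcount : ∀ j'', j'' ≠ j →
          (((F.filter (fun l => gcol l = j'')).card : ℤ)) ≤ C.defc j'' A₀ := by
        intro j'' hj''
        apply C.disjpar j'' _ A₀ hA₀sub x' y'
        · intro l hl
          obtain ⟨hlF, hgl⟩ := Finset.mem_filter.1 hl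
          refine ⟨hgl ▸ hgPar l hlF, ?_, ?_⟩
          · rw [hx'eq l hlF]
            exact hmemA₀ _ (hP l hlF).2.1 (Or.inl (hP l hlF).1)
          · rw [hy'eq l hlF]
            exact hmemA₀ _ (hP l hlF).2.2.2.1 (Or.inr (hP l hlF).2.2.1)
        · intro l1 hl1 l2 hl2 hne12
          obtain ⟨hl1F, hg1⟩ := Finset.mem_filter.1 hl1
          obtain ⟨hl2F, hg2⟩ := Finset.mem_filter.1 hl2
          have hp1 := hP l1 hl1F
          have hp2 := hP l2 hl2F
          rw [hx'eq l1 hl1F, hy'eq l1 hl1F, hx'eq l2 hl2F, hy'eq l2 hl2F]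
          refine ⟨?_, ?_, ?_⟩
          · intro hyy
            by_cases hxx : xf l1 hl1F = xf l2 hl2F
            · apply hne12
              exact C.pair_container hp1.2.2.2.2.1 hp1.2.2.2.2.2.1 hp1.2.2.2.2.2.2
                (hxx.symm ▸ hp2.2.2.2.2.2.1) (hyy.symm ▸ hp2.2.2.2.2.2.2)
            · have hpar1 : C.Par j'' (xf l1 hl1F) (yf l1 hl1F) := by
                have hq := hgPar l1 hl1F
                rw [hx'eq l1 hl1F, hy'eq l1 hl1F, hg1] at hq
                exact hq
              have hpar2 : C.Par j'' (xf l2 hl2F) (yf l1 hl1F) := by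
                have hq := hgPar l2 hl2F
                rw [hx'eq l2 hl2F, hy'eq l2 hl2F, hg2, ← hyy] at hq
                exact hq
              have hyE : yf l1 hl1F ∈ C.E := C.hXsub i' hp1.2.2.1
              have hx1E : xf l1 hl1F ∈ C.E := C.hXsub i hp1.1
              have hx2E : xf l2 hl2F ∈ C.E := C.hXsub i hp2.1
              have htrans : C.Par j'' (xf l1 hl1F) (xf l2 hl2F) :=
                C.par_trans hyE hx1E hx2E hpar1.symm' hpar2.symm' hxx
              by_cases hti : C.t i = 1
              · exact hj'' ((C.line_par hti hp1.1 hp2.1 hxx).2 j'' htrans)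
              · exact C.no_par_in_big hp1.1 hp2.1 (by omega) j'' htrans
          · intro hyx
            exact hp2.2.1 (hcommon _ hp2.1 (hyx ▸ hp1.2.2.1))
          · intro hxy
            exact hp1.2.1 (hcommon _ hp1.1 (hxy ▸ hp2.2.2.1))
      have hfibj : (F.filter (fun l => gcol l = j)) = ∅ := by
        rw [Finset.filter_eq_empty_iff]
        intro l hl
        exact hgne l hl
      have hpart : F.card = ∑ j'', (F.filter (fun l => gcol l = j'')).card :=
        Finset.card_eq_sum_card_fiberwise (fun l _ => Finset.mem_univ (gcol l))
      have h1 : ∑ j'', ((F.filter (fun l => gcol l = j'')).card) =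
          (F.filter (fun l => gcol l = j)).card
            + ∑ j'' ∈ Finset.univ.erase j, (F.filter (fun l => gcol l = j'')).card :=
        (Finset.add_sum_erase _ _ (Finset.mem_univ j)).symm
      rw [hfibj] at h1
      simp only [Finset.card_empty, Nat.zero_add] at h1
      have h3 : F.card = ∑ j'' ∈ Finset.univ.erase j, (F.filter (fun l => gcol l = j'')).card := by
        rw [hpart, h1]
      have h4 : (F.card : ℤ)
          = ∑ j'' ∈ Finset.univ.erase j, ((F.filter (fun l => gcol l = j'')).card : ℤ) := by
        rw [h3]
        push_cast
        rfl
      have hsum_erase : (F.card : ℤ) ≤ ∑ j'' ∈ Finset.univ.erase j, C.defc j'' A₀ := by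
        rw [h4]
        exact Finset.sum_le_sum (fun j'' hj'' => hcount j'' (Finset.mem_erase.1 hj'').1)
      have htotal := C.defc_total hA₀sub
      have hsplit : ∑ j'', C.defc j'' A₀
          = C.defc j A₀ + ∑ j'' ∈ Finset.univ.erase j, C.defc j'' A₀ :=
        (Finset.add_sum_erase _ _ (Finset.mem_univ j)).symm
      rw [hDA₀, hsplit] at htotal
      omega


lemma prop_master {i i' : Fin C.n} (hne : i ≠ i')
    (hbig : C.t i < ((C.X i).card : ℤ)) (hbig' : C.t i' < ((C.X i').card : ℤ))
    {e : α} (he : e ∈ C.X i) (he' : e ∈ C.X i') :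
    C.cEdge i hbig ≠ C.cEdge i' hbig' := by
  intro heq
  rcases le_total (C.t i) (C.t i') with h | h
  · exact C.prop_master_aux _ rfl hne h hbig hbig' he he' heq
  · exact C.prop_master_aux _ rfl hne.symm h hbig' hbig he' he heq.symm

lemma not_big {i : Fin C.n} (h : ¬ (C.t i < ((C.X i).card : ℤ))) :
    C.t i = 1 ∧ C.X i = {(C.hXne i).choose} := by
  have h2 := C.ht2 i
  have h3 := C.ht1 i
  rcases C.hT i with h1 | ⟨-, h4⟩
  · have hcard : (C.X i).card = 1 := by omega
    have hone := Finset.card_le_one.1 hcard.le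
    exact ⟨h1, Finset.eq_singleton_iff_unique_mem.2 ⟨(C.hXne i).choose_spec,
      fun b hb => hone b hb _ (C.hXne i).choose_spec⟩⟩
  · exact absurd h4 h

/-- the set of colors in which `e` is not a loop -/
def K (e : α) : Finset (Fin C.k) := Finset.univ.filter (fun j => C.M j {e} = 1)

lemma K_card {e : α} (he : e ∈ C.E) : ((C.K e).card : ℤ) = (hypW C.X e : ℤ) := by
  have h1 : (hypW C.X e : ℤ) = ∑ j, C.M j {e} := by
    rw [← C.rho_singleton e]
    exact C.hsum {e} (by simpa using he)
  have h2 : ∀ j, C.M j {e} = if C.M j {e} = 1 then (1 : ℤ) else 0 := by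
    intro j
    rcases C.hM01 j he with h | h <;> simp [h]
  rw [h1, Finset.sum_congr rfl (fun j _ => h2 j), Finset.sum_boole]
  rfl

def edgesAt (e : α) : Finset (Fin C.n) := Finset.univ.filter (fun i => e ∈ C.X i)

lemma edgesAt_card (e : α) : (C.edgesAt e).card = hypW C.X e := rfl

lemma col_small_mem {i : Fin C.n} (h : ¬ (C.t i < ((C.X i).card : ℤ))) {e : α}
    (he : e ∈ C.X i) : e = (C.hXne i).choose := by
  have hXi := (C.not_big h).2
  have := hXi ▸ he
  rwa [Finset.mem_singleton] at this

lemma leftover_ex (i : Fin C.n) (hnb : ¬ (C.t i < ((C.X i).card : ℤ))) :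
    ∃ j, C.M j {(C.hXne i).choose} = 1 ∧
      ∀ (i' : Fin C.n) (hbig' : C.t i' < ((C.X i').card : ℤ)),
        (C.hXne i).choose ∈ C.X i' → C.cEdge i' hbig' ≠ j := by
  classical
  set e := (C.hXne i).choose with hedef
  have he : e ∈ C.X i := (C.hXne i).choose_spec
  have heE : e ∈ C.E := C.hXsub i he
  have hwpos : 1 ≤ hypW C.X e := by
    have : 0 < (C.edgesAt e).card := Finset.card_pos.2 ⟨i, by simp [edgesAt, he]⟩
    rw [C.edgesAt_card] at this
    omega
  have hKcard := C.K_card heE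
  have hKpos : 0 < (C.K e).card := by omega
  obtain ⟨j₀, hj₀⟩ := Finset.card_pos.1 hKpos
  set B := Finset.univ.filter (fun i' => e ∈ C.X i' ∧ C.t i' < ((C.X i').card : ℤ)) with hBdef
  have hiB : i ∉ B := by
    rw [hBdef]; simp only [Finset.mem_filter, Finset.mem_univ, true_and]
    tauto
  have hedges : C.edgesAt e = insert i B := by
    ext i''
    simp only [edgesAt, hBdef, Finset.mem_filter, Finset.mem_univ, true_and,
      Finset.mem_insert]
    constructor
    · intro hmem
      by_cases hbig'' : C.t i'' < ((C.X i'').card : ℤ)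
      · exact Or.inr ⟨hmem, hbig''⟩
      · left
        have hXi'' := (C.not_big hbig'').2
        have hXi := (C.not_big hnb).2
        have h1 : e = (C.hXne i'').choose := C.col_small_mem hbig'' hmem
        have h2 : e = (C.hXne i).choose := C.col_small_mem hnb he
        apply C.hXinj
        rw [hXi'', hXi, ← h1, ← h2]
    · rintro (rfl | ⟨hmem, -⟩)
      · exact he
      · exact hmem
  have hBcard : B.card + 1 = hypW C.X e := by
    rw [← C.edgesAt_card e, hedges, Finset.card_insert_of_notMem hiB]
  set ψ : Fin C.n → Fin C.k := fun i' =>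
    if h' : C.t i' < ((C.X i').card : ℤ) then C.cEdge i' h' else j₀ with hψ
  have himg : ∃ j ∈ C.K e, j ∉ B.image ψ := by
    by_contra hcon
    push_neg at hcon
    have hsub : C.K e ⊆ B.image ψ := hcon
    have := Finset.card_le_card hsub
    have := Finset.card_image_le (f := ψ) (s := B)
    omega
  obtain ⟨j, hjK, hjimg⟩ := himg
  refine ⟨j, ?_, ?_⟩
  · have := Finset.mem_filter.1 hjK
    exact this.2
  · intro i' hbig' hei' hceq
    apply hjimg
    rw [Finset.mem_image]
    refine ⟨i', ?_, ?_⟩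
    · rw [hBdef]; simp only [Finset.mem_filter, Finset.mem_univ, true_and]
      exact ⟨hei', hbig'⟩
    · rw [hψ]
      simp only [dif_pos hbig']
      exact hceq

/-- The coloring extracted from a decomposition. -/
noncomputable def col (i : Fin C.n) : Fin C.k :=
  if h : C.t i < ((C.X i).card : ℤ) then C.cEdge i h
  else (C.leftover_ex i h).choose

lemma col_big {i : Fin C.n} (h : C.t i < ((C.X i).card : ℤ)) :
    C.col i = C.cEdge i h := dif_pos h

lemma col_singles {i : Fin C.n} {e : α} (he : e ∈ C.X i) :
    C.M (C.col i) {e} = 1 := by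
  unfold col
  by_cases h : C.t i < ((C.X i).card : ℤ)
  · rw [dif_pos h]
    exact C.cEdge_singles h he
  · rw [dif_neg h]
    rw [C.col_small_mem h he]
    exact (C.leftover_ex i h).choose_spec.1

lemma col_proper {i i' : Fin C.n} (hne : i ≠ i') {e : α} (he : e ∈ C.X i)
    (he' : e ∈ C.X i') : C.col i ≠ C.col i' := by
  unfold col
  by_cases h : C.t i < ((C.X i).card : ℤ) <;>
    by_cases h' : C.t i' < ((C.X i').card : ℤ)
  · rw [dif_pos h, dif_pos h']
    exact C.prop_master hne h h' he he'
  · rw [dif_pos h, dif_neg h']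
    intro heqq
    exact (C.leftover_ex i' h').choose_spec.2 i h
      (C.col_small_mem h' he' ▸ he) heqq
  · rw [dif_neg h, dif_pos h']
    intro heqq
    exact (C.leftover_ex i h).choose_spec.2 i' h'
      (C.col_small_mem h he ▸ he') heqq.symm
  · exfalso
    apply hne
    apply C.hXinj
    rw [(C.not_big h).2, (C.not_big h').2, ← C.col_small_mem h he,
      ← C.col_small_mem h' he']

lemma col_surj {e : α} (he : e ∈ C.E) {j : Fin C.k} (hj : C.M j {e} = 1) :
    ∃ i, C.col i = j ∧ e ∈ C.X i := by
  classical
  have hinj : ∀ (a₁ a₂ : Fin C.n), a₁ ∈ C.edgesAt e → a₂ ∈ C.edgesAt e →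
      C.col a₁ = C.col a₂ → a₁ = a₂ := by
    intro a₁ a₂ ha₁ ha₂ hca
    by_contra hne
    exact C.col_proper hne (Finset.mem_filter.1 ha₁).2 (Finset.mem_filter.1 ha₂).2 hca
  have hmaps : ∀ (a : Fin C.n), a ∈ C.edgesAt e → C.col a ∈ C.K e := by
    intro a ha
    rw [K, Finset.mem_filter]
    exact ⟨Finset.mem_univ _, C.col_singles (Finset.mem_filter.1 ha).2⟩
  have hcards : (C.K e).card ≤ (C.edgesAt e).card := by
    have := C.K_card he
    rw [C.edgesAt_card]
    omega
  have hsurj := Finset.surj_on_of_inj_on_of_card_le (fun a _ => C.col a) hmaps hinj hcards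
  obtain ⟨a, ha, hja⟩ := hsurj j (by rw [K, Finset.mem_filter]; exact ⟨Finset.mem_univ _, hj⟩)
  exact ⟨a, hja.symm, (Finset.mem_filter.1 ha).2⟩

set_option maxHeartbeats 2000000 in
lemma main_eq : ∀ (m : ℕ) (A : Finset α), A.card = m → A ⊆ C.E → ∀ j,
    C.M j A = phi C.X C.t C.col j A := by
  intro m
  induction m using Nat.strong_induction_on with
  | _ m ihm =>
    intro A hm hA j₀
    -- first: ≤ for every color, with equality when some class edge overflows
    have key : ∀ j, C.M j A ≤ phi C.X C.t C.col j A ∧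
        ((∃ i, C.col i = j ∧ C.t i + 1 ≤ ((A ∩ C.X i).card : ℤ)) →
          C.M j A = phi C.X C.t C.col j A) := by
      intro j
      by_cases hex : ∃ i, C.col i = j ∧ C.t i + 1 ≤ ((A ∩ C.X i).card : ℤ)
      · obtain ⟨i, hci, hcard⟩ := hex
        have ht := C.ht1 i
        have hbig : C.t i < ((C.X i).card : ℤ) := by
          have := Finset.card_le_card (Finset.inter_subset_right (s₁ := A) (s₂ := C.X i))
          omega
        obtain ⟨S, hS, hScard⟩ := Finset.exists_subset_card_eq
          (show (C.t i).toNat + 1 ≤ (A ∩ C.X i).card by omega)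
        have hScardZ : ((S.card : ℤ)) = C.t i + 1 := by rw [hScard]; push_cast; omega
        have hSXi : S ⊆ C.X i := hS.trans Finset.inter_subset_right
        have hSA : S ⊆ A := hS.trans Finset.inter_subset_left
        obtain ⟨e, heS⟩ := Finset.card_pos.1 (show 0 < S.card by omega)
        have heA : e ∈ A := hSA heS
        have heXi : e ∈ C.X i := hSXi heS
        have hMS : C.M j S = C.t i := by
          rw [← hci, C.col_big hbig]
          exact C.rank_tplus hbig hSXi hScardZ
        have hMSe : C.M j (S.erase e) = C.t i := by
          rw [← hci, C.col_big hbig]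
          rw [C.rank_tsub hbig ((Finset.erase_subset _ _).trans hSXi) (by
            rw [Finset.card_erase_of_mem heS]
            push_cast
            omega)]
          rw [Finset.card_erase_of_mem heS]
          push_cast
          omega
        have hUn : (A.erase e) ∪ S = A := by
          apply Finset.Subset.antisymm
          · exact Finset.union_subset (Finset.erase_subset _ _) hSA
          · intro q hq
            by_cases hqe : q = e
            · exact Finset.mem_union_right _ (hqe ▸ heS)
            · exact Finset.mem_union_left _ (Finset.mem_erase.2 ⟨hqe, hq⟩)
        have hIn : (A.erase e) ∩ S = S.erase e := by
          ext q
          simp only [Finset.mem_inter, Finset.mem_erase]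
          constructor
          · rintro ⟨⟨hqe, -⟩, hqS⟩
            exact ⟨hqe, hqS⟩
          · rintro ⟨hqe, hqS⟩
            exact ⟨⟨hqe, hSA hqS⟩, hqS⟩
        have hsm := C.hMsub j (A.erase e) S ((Finset.erase_subset _ _).trans hA)
          (hSXi.trans (C.hXsub i))
        rw [hUn, hIn] at hsm
        have hmono := C.hMmono j (A.erase e) A (Finset.erase_subset _ _) hA
        have hMA : C.M j A = C.M j (A.erase e) := by omega
        have hm1 : 1 ≤ m := by
          rw [← hm]
          exact Finset.card_pos.2 ⟨e, heA⟩
        have hcardx : (A.erase e).card = m - 1 := by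
          rw [Finset.card_erase_of_mem heA, hm]
        have hIH := ihm (m - 1) (by omega) (A.erase e) hcardx
          ((Finset.erase_subset _ _).trans hA) j
        have hphi : phi C.X C.t C.col j (A.erase e) = phi C.X C.t C.col j A := by
          unfold phi
          apply Finset.sum_congr rfl
          intro i'' hi''
          rw [Finset.mem_filter] at hi''
          by_cases hieq : i'' = i
          · subst hieq
            have h1 : (A.erase e) ∩ C.X i'' = (A ∩ C.X i'').erase e := by
              ext q
              simp only [Finset.mem_inter, Finset.mem_erase]
              tauto
            rw [h1, Finset.card_erase_of_mem (Finset.mem_inter.2 ⟨heA, heXi⟩)]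
            omega
          · have henotin : e ∉ C.X i'' := by
              intro hmem
              exact C.col_proper hieq hmem heXi (hi''.2.trans hci.symm)
            have h2 : (A.erase e) ∩ C.X i'' = A ∩ C.X i'' := by
              ext q
              simp only [Finset.mem_inter, Finset.mem_erase]
              constructor
              · rintro ⟨⟨-, hq⟩, hq2⟩
                exact ⟨hq, hq2⟩
              · rintro ⟨hq, hq2⟩
                exact ⟨⟨fun hqe => henotin (hqe ▸ hq2), hq⟩, hq2⟩
            rw [h2]
        constructor
        · rw [hMA, hIH, hphi]
        · intro _
          rw [hMA, hIH, hphi]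
      · have hex0 := hex
        push_neg at hex
        have hub : C.M j A ≤ ∑ e ∈ A, C.M j {e} := C.subadd j A hA
        set B := A.filter (fun a => C.M j {a} = 1) with hBdef
        have hsumB : ∑ e ∈ A, C.M j {e} = (B.card : ℤ) := by
          have h2 : ∀ a ∈ A, C.M j {a} = if C.M j {a} = 1 then (1:ℤ) else 0 := by
            intro a ha
            rcases C.hM01 j (hA ha) with h | h <;> simp [h]
          rw [Finset.sum_congr rfl h2, Finset.sum_boole, hBdef]
        have hBbi : B = (Finset.univ.filter (fun i => C.col i = j)).biUnion
            (fun i => A ∩ C.X i) := by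
          ext a
          simp only [hBdef, Finset.mem_filter, Finset.mem_biUnion, Finset.mem_univ,
            true_and, Finset.mem_inter]
          constructor
          · rintro ⟨haA, haM⟩
            obtain ⟨i, hci, hai⟩ := C.col_surj (hA haA) haM
            exact ⟨i, hci, haA, hai⟩
          · rintro ⟨i, hci, haA, hai⟩
            exact ⟨haA, hci ▸ C.col_singles hai⟩
        have hdisj : ∀ i1 ∈ Finset.univ.filter (fun i => C.col i = j),
            ∀ i2 ∈ Finset.univ.filter (fun i => C.col i = j), i1 ≠ i2 →
            Disjoint (A ∩ C.X i1) (A ∩ C.X i2) := by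
          intro i1 h1 i2 h2 hne12
          rw [Finset.disjoint_left]
          intro a ha1 ha2
          exact C.col_proper hne12 (Finset.mem_inter.1 ha1).2 (Finset.mem_inter.1 ha2).2
            ((Finset.mem_filter.1 h1).2.trans (Finset.mem_filter.1 h2).2.symm)
        have hcardB : B.card = ∑ i ∈ Finset.univ.filter (fun i => C.col i = j),
            (A ∩ C.X i).card := by
          rw [hBbi]
          exact Finset.card_biUnion hdisj
        have hphiA : phi C.X C.t C.col j A = (B.card : ℤ) := by
          unfold phi
          have hterm : ∀ i ∈ Finset.univ.filter (fun i => C.col i = j),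
              min (((A ∩ C.X i).card : ℤ)) (C.t i) = ((A ∩ C.X i).card : ℤ) := by
            intro i hi
            have := hex i (Finset.mem_filter.1 hi).2
            omega
          rw [Finset.sum_congr rfl hterm, hcardB]
          push_cast
          rfl
        exact ⟨by omega, fun hcon => absurd hcon hex0⟩
    have hsum1 : ∑ j, C.M j A = ∑ j, phi C.X C.t C.col j A := by
      rw [← C.hsum A hA, phi_sum]
    have hzero : ∑ j, (phi C.X C.t C.col j A - C.M j A) = 0 := by
      rw [Finset.sum_sub_distrib]
      omega
    have hall := (Finset.sum_eq_zero_iff_of_nonneg (fun j _ => by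
      have := (key j).1
      omega)).1 hzero j₀ (Finset.mem_univ j₀)
    omega


lemma full_conclusion : ∃ c : Fin C.n → Fin C.k,
    (∀ i i', i ≠ i' → (C.X i ∩ C.X i').Nonempty → c i ≠ c i') ∧
    ∀ (j : Fin C.k) (A : Finset α), A ⊆ C.E → phi C.X C.t c j A = C.M j A :=
  ⟨C.col, fun i i' hne hint => by
      obtain ⟨e, he⟩ := hint
      rw [Finset.mem_inter] at he
      exact C.col_proper hne he.1 he.2,
    fun j A hA => (C.main_eq A.card A rfl hA j).symm⟩

end DCtx

section Assembly

variable [DecidableEq α] {n k : ℕ}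

lemma proper_iff (X : Fin n → Finset α) (c : Fin n → Fin k) :
    ProperColoring (lineGraph X) c ↔
      ∀ i i', i ≠ i' → (X i ∩ X i').Nonempty → c i ≠ c i' :=
  ⟨fun h i i' h1 h2 => h i i' ⟨h1, h2⟩, fun h i i' hadj => h i i' hadj.1 hadj.2⟩

variable {E : Finset α} {X : Fin n → Finset α} {t : Fin n → ℤ}

lemma phi_canon (hXsub : ∀ i, X i ⊆ E) (c : Fin n → Fin k) (j : Fin k) (A : Finset α) :
    phi X t c j A = phi X t c j (A ∩ E) := by
  unfold phi
  apply Finset.sum_congr rfl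
  intro i _
  have h1 : A ∩ X i = (A ∩ E) ∩ X i := by
    ext a
    simp only [Finset.mem_inter]
    constructor
    · rintro ⟨ha, hx⟩
      exact ⟨⟨ha, hXsub i hx⟩, hx⟩
    · rintro ⟨⟨ha, -⟩, hx⟩
      exact ⟨ha, hx⟩
  rw [h1]

lemma phi_singleton_le (ht1 : ∀ i, 1 ≤ t i) {c : Fin n → Fin k}
    (hc : ∀ i i', i ≠ i' → (X i ∩ X i').Nonempty → c i ≠ c i') (j : Fin k) (e : α) :
    phi X t c j {e} ≤ 1 := by
  unfold phi
  have hterm : ∀ i ∈ Finset.univ.filter (fun i => c i = j),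
      min ((({e} : Finset α) ∩ X i).card : ℤ) (t i) = if e ∈ X i then 1 else 0 := by
    intro i _
    have := ht1 i
    by_cases h : e ∈ X i
    · rw [Finset.singleton_inter_of_mem h]
      simp only [Finset.card_singleton, Nat.cast_one, if_pos h]
      omega
    · rw [Finset.singleton_inter_of_notMem h]
      simp only [Finset.card_empty, Nat.cast_zero, if_neg h]
      omega
  rw [Finset.sum_congr rfl hterm, Finset.sum_boole]
  have hle : ((Finset.univ.filter (fun i => c i = j)).filter (fun i => e ∈ X i)).card ≤ 1 := by
    rw [Finset.card_le_one]
    intro i1 h1 i2 h2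
    simp only [Finset.mem_filter, Finset.mem_univ, true_and] at h1 h2
    by_contra hne
    exact hc i1 i2 hne ⟨e, Finset.mem_inter.2 ⟨h1.2, h2.2⟩⟩ (h1.1.trans h2.1.symm)
  exact_mod_cast hle

lemma phi_mem_Delta (hXsub : ∀ i, X i ⊆ E) (ht1 : ∀ i, 1 ≤ t i)
    {c : Fin n → Fin k} (hc : ProperColoring (lineGraph X) c) :
    (fun j A => phi X t c j A) ∈ Delta k E (hypRho X t) := by
  have hc' := (proper_iff X c).1 hc
  refine ⟨?_, ?_, ?_⟩
  · intro j
    refine ⟨⟨?_, ?_, ?_⟩, ?_⟩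
    · apply Finset.sum_eq_zero
      intro i _
      have := ht1 i
      rw [Finset.empty_inter]
      simp only [Finset.card_empty, Nat.cast_zero]
      omega
    · intro A B hAB _
      apply Finset.sum_le_sum
      intro i _
      have hcard : (A ∩ X i).card ≤ (B ∩ X i).card :=
        Finset.card_le_card (Finset.inter_subset_inter hAB (Finset.Subset.refl _))
      have hcard' : ((A ∩ X i).card : ℤ) ≤ ((B ∩ X i).card : ℤ) := by exact_mod_cast hcard
      omega
    · intro A B _ _
      unfold phi
      rw [← Finset.sum_add_distrib, ← Finset.sum_add_distrib]
      apply Finset.sum_le_sum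
      intro i _
      have h1 : (A ∪ B) ∩ X i = (A ∩ X i) ∪ (B ∩ X i) := Finset.union_inter_distrib_right _ _ _
      have h2 : (A ∩ B) ∩ X i = (A ∩ X i) ∩ (B ∩ X i) := by
        ext a
        simp only [Finset.mem_inter]
        tauto
      have h3 := Finset.card_union_add_card_inter (A ∩ X i) (B ∩ X i)
      have h4 : (A ∩ X i).card ≤ ((A ∪ B) ∩ X i).card :=
        Finset.card_le_card (Finset.inter_subset_inter Finset.subset_union_left
          (Finset.Subset.refl _))
      have h5 : (B ∩ X i).card ≤ ((A ∪ B) ∩ X i).card :=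
        Finset.card_le_card (Finset.inter_subset_inter Finset.subset_union_right
          (Finset.Subset.refl _))
      rw [h1, h2] at *
      push_cast [← h3]
      push_cast at h4 h5
      omega
    · intro e _
      exact phi_singleton_le ht1 hc' j e
  · intro j A
    exact phi_canon hXsub c j A
  · intro A _
    exact (phi_sum X t c A).symm

lemma phi_pos_witness (ht1 : ∀ i, 1 ≤ t i) {c : Fin n → Fin k} {j : Fin k} {e : α}
    (h : 1 ≤ phi X t c j {e}) : ∃ i, c i = j ∧ e ∈ X i := by
  by_contra hcon
  push_neg at hcon
  have : phi X t c j {e} = 0 := by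
    apply Finset.sum_eq_zero
    intro i hi
    rw [Finset.mem_filter] at hi
    have hnot := hcon i hi.2
    rw [Finset.singleton_inter_of_notMem hnot]
    have := ht1 i
    simp only [Finset.card_empty, Nat.cast_zero]
    omega
  omega

lemma phi_term_nonneg (ht1 : ∀ i, 1 ≤ t i) (c : Fin n → Fin k) (j : Fin k) (A : Finset α)
    (i : Fin n) : (0 : ℤ) ≤ min (((A ∩ X i).card : ℤ)) (t i) := by
  have := ht1 i
  have : (0:ℤ) ≤ ((A ∩ X i).card : ℤ) := Int.natCast_nonneg _
  omega

lemma phi_singleton_ge (ht1 : ∀ i, 1 ≤ t i) {c : Fin n → Fin k} {j : Fin k} {e : α}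
    {i : Fin n} (hci : c i = j) (hei : e ∈ X i) : 1 ≤ phi X t c j {e} := by
  unfold phi
  have hmem : i ∈ Finset.univ.filter (fun i => c i = j) := by
    simp [hci]
  have h1 : (1 : ℤ) ≤ min ((({e} : Finset α) ∩ X i).card : ℤ) (t i) := by
    rw [Finset.singleton_inter_of_mem hei]
    have := ht1 i
    simp only [Finset.card_singleton, Nat.cast_one]
    omega
  calc (1 : ℤ) ≤ min ((({e} : Finset α) ∩ X i).card : ℤ) (t i) := h1
    _ ≤ _ := Finset.single_le_sum (fun i _ => phi_term_nonneg ht1 c j {e} i) hmem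

lemma phi_self (ht1 : ∀ i, 1 ≤ t i) (ht2 : ∀ i, t i ≤ ((X i).card : ℤ))
    {c : Fin n → Fin k} (hc : ∀ i i', i ≠ i' → (X i ∩ X i').Nonempty → c i ≠ c i')
    (i₀ : Fin n) : phi X t c (c i₀) (X i₀) = t i₀ := by
  unfold phi
  rw [Finset.sum_eq_single_of_mem i₀ (by simp)]
  · rw [Finset.inter_self]
    have := ht2 i₀
    omega
  · intro i hi hne
    rw [Finset.mem_filter] at hi
    have hdisj : X i₀ ∩ X i = ∅ := by
      rw [← Finset.not_nonempty_iff_eq_empty]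
      intro hne2
      rw [Finset.inter_comm] at hne2
      exact hc i i₀ hne hne2 hi.2
    rw [hdisj]
    have := ht1 i
    simp only [Finset.card_empty, Nat.cast_zero]
    omega


lemma inj_core (hXsub : ∀ i, X i ⊆ E) (ht1 : ∀ i, 1 ≤ t i)
    (ht2 : ∀ i, t i ≤ ((X i).card : ℤ))
    (hH2 : ∀ i j, i ≠ j → (X i ∩ X j).card ≤ 1)
    (hT : ∀ i, t i = 1 ∨
      ((∃ e ∈ X i, (hypW X e : ℤ) ≤ t i) ∧ t i < ((X i).card : ℤ)))
    {c c' : Fin n → Fin k}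
    (hc : ∀ i i', i ≠ i' → (X i ∩ X i').Nonempty → c i ≠ c i')
    (hc' : ∀ i i', i ≠ i' → (X i ∩ X i').Nonempty → c' i ≠ c' i')
    (hphi : ∀ j A, phi X t c j A = phi X t c' j A)
    {i₀ : Fin n} (hne : c i₀ ≠ c' i₀) :
    ∃ e i₁, X i₀ = {e} ∧ i₁ ≠ i₀ ∧ c' i₁ = c i₀ ∧ e ∈ X i₁ ∧ c i₁ ≠ c i₀ := by
  classical
  have hself : phi X t c (c i₀) (X i₀) = t i₀ := phi_self ht1 ht2 hc i₀
  have hwit : ∀ e ∈ X i₀, ∃ i, c' i = c i₀ ∧ e ∈ X i := by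
    intro e he
    apply phi_pos_witness ht1 (c := c')
    rw [← hphi]
    exact phi_singleton_ge ht1 rfl he
  choose g hg1 hg2 using hwit
  have hgne : ∀ e (he : e ∈ X i₀), g e he ≠ i₀ := by
    intro e he hq
    have h1 := hg1 e he
    rw [hq] at h1
    exact hne h1.symm
  have hginj : ∀ e (he : e ∈ X i₀) f (hf : f ∈ X i₀), g e he = g f hf → e = f := by
    intro e he f hf hgef
    by_contra hef
    have hpair : ({e, f} : Finset α) ⊆ X (g e he) ∩ X i₀ := by
      intro q hq
      simp only [Finset.mem_insert, Finset.mem_singleton] at hq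
      rcases hq with hq | hq
      · rw [hq]; exact Finset.mem_inter.2 ⟨hg2 e he, he⟩
      · rw [hq]; exact Finset.mem_inter.2 ⟨hgef ▸ hg2 f hf, hf⟩
    have hcb := (Finset.card_le_card hpair).trans (hH2 _ _ (hgne e he))
    rw [Finset.card_pair hef] at hcb
    omega
  have himg : ((X i₀).card : ℤ) ≤ t i₀ := by
    set img := (X i₀).attach.image (fun x => g x.1 x.2) with himgdef
    have himage : img.card = (X i₀).card := by
      rw [himgdef, Finset.card_image_of_injOn, Finset.card_attach]
      intro x _ y _ hxy
      exact Subtype.ext (hginj _ _ _ _ hxy)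
    have hsub : img ⊆ Finset.univ.filter (fun i => c' i = c i₀) := by
      intro i hi
      rw [himgdef, Finset.mem_image] at hi
      obtain ⟨x, -, rfl⟩ := hi
      simp [hg1]
    have hterm : ∀ i ∈ img, (1 : ℤ) ≤ min (((X i₀ ∩ X i).card : ℤ)) (t i) := by
      intro i hi
      rw [himgdef, Finset.mem_image] at hi
      obtain ⟨x, -, rfl⟩ := hi
      have hx : x.1 ∈ X i₀ ∩ X (g x.1 x.2) := Finset.mem_inter.2 ⟨x.2, hg2 _ _⟩
      have hpos : 0 < (X i₀ ∩ X (g x.1 x.2)).card := Finset.card_pos.2 ⟨x.1, hx⟩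
      have hposZ : (1 : ℤ) ≤ ((X i₀ ∩ X (g x.1 x.2)).card : ℤ) := by exact_mod_cast hpos
      have := ht1 (g x.1 x.2)
      omega
    calc ((X i₀).card : ℤ) = (img.card : ℤ) := by rw [himage]
      _ = ∑ _i ∈ img, (1 : ℤ) := by rw [Finset.sum_const, nsmul_eq_mul, mul_one]
      _ ≤ ∑ i ∈ img, min (((X i₀ ∩ X i).card : ℤ)) (t i) := Finset.sum_le_sum hterm
      _ ≤ ∑ i ∈ Finset.univ.filter (fun i => c' i = c i₀),
            min (((X i₀ ∩ X i).card : ℤ)) (t i) :=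
          Finset.sum_le_sum_of_subset_of_nonneg hsub
            (fun i _ _ => phi_term_nonneg ht1 c' (c i₀) (X i₀) i)
      _ = phi X t c' (c i₀) (X i₀) := rfl
      _ = phi X t c (c i₀) (X i₀) := (hphi _ _).symm
      _ = t i₀ := hself
  have ht2i := ht2 i₀
  have ht1i : t i₀ = 1 := by
    rcases hT i₀ with h | ⟨-, h⟩
    · exact h
    · omega
  have hcard1 : (X i₀).card = 1 := by omega
  obtain ⟨e, hXe⟩ := Finset.card_eq_one.1 hcard1
  have hei₀ : e ∈ X i₀ := by rw [hXe]; exact Finset.mem_singleton_self e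
  refine ⟨e, g e hei₀, hXe, hgne e hei₀, hg1 e hei₀, hg2 e hei₀, ?_⟩
  intro hq
  exact hc (g e hei₀) i₀ (hgne e hei₀)
    ⟨e, Finset.mem_inter.2 ⟨hg2 e hei₀, hei₀⟩⟩ hq

lemma phi_inj (hXsub : ∀ i, X i ⊆ E) (hXne : ∀ i, (X i).Nonempty)
    (hXinj : Function.Injective X) (ht1 : ∀ i, 1 ≤ t i)
    (ht2 : ∀ i, t i ≤ ((X i).card : ℤ))
    (hH2 : ∀ i j, i ≠ j → (X i ∩ X j).card ≤ 1)
    (hT : ∀ i, t i = 1 ∨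
      ((∃ e ∈ X i, (hypW X e : ℤ) ≤ t i) ∧ t i < ((X i).card : ℤ)))
    {c c' : Fin n → Fin k}
    (hc : ProperColoring (lineGraph X) c) (hc' : ProperColoring (lineGraph X) c')
    (hphi : ∀ j A, phi X t c j A = phi X t c' j A) : c = c' := by
  have hcp := (proper_iff X c).1 hc
  have hcp' := (proper_iff X c').1 hc'
  funext i₀
  by_contra hne
  obtain ⟨e, i₁, hXe, hne₁, hc'i₁, hei₁, hci₁⟩ :=
    inj_core hXsub ht1 ht2 hH2 hT hcp hcp' hphi hne
  have hne' : c' i₁ ≠ c i₁ := by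
    rw [hc'i₁]
    exact fun h => hci₁ h.symm
  obtain ⟨e', i₂, hXe', -, -, -, -⟩ :=
    inj_core hXsub ht1 ht2 hH2 hT hcp' hcp (fun j A => (hphi j A).symm) hne'
  have hee : e = e' := by
    rw [hXe'] at hei₁
    exact Finset.mem_singleton.1 hei₁
  apply hne₁
  apply hXinj
  rw [hXe', ← hee, ← hXe]

lemma delta_surj (hXsub : ∀ i, X i ⊆ E) (hXne : ∀ i, (X i).Nonempty)
    (hXinj : Function.Injective X)
    (ht2 : ∀ i, t i ≤ ((X i).card : ℤ))
    (hH2 : ∀ i j, i ≠ j → (X i ∩ X j).card ≤ 1)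
    (hH3 : ¬ ∃ (a b c : α) (i j l : Fin n),
      a ≠ b ∧ a ≠ c ∧ b ≠ c ∧ X i = {a, b} ∧ X j = {a, c} ∧ X l = {b, c})
    (hT : ∀ i, t i = 1 ∨
      ((∃ e ∈ X i, (hypW X e : ℤ) ≤ t i) ∧ t i < ((X i).card : ℤ)))
    {M : Fin k → Finset α → ℤ} (hM : M ∈ Delta k E (hypRho X t)) :
    ∃ c : Fin n → Fin k, ProperColoring (lineGraph X) c ∧
      (fun j A => phi X t c j A) = M := by
  obtain ⟨hMat, hcanon, hsum⟩ := hM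
  obtain ⟨c, hprop, heq⟩ := DCtx.full_conclusion
    ⟨n, E, X, t, k, M, hXsub, hXne, hXinj, ht2, hH2, hH3, hT,
      fun j => (hMat j).1.1, fun j => (hMat j).1.2.1, fun j => (hMat j).1.2.2,
      fun j e he => (hMat j).2 e he, hsum⟩
  refine ⟨c, (proper_iff X c).2 hprop, ?_⟩
  funext j A
  calc phi X t c j A = phi X t c j (A ∩ E) := phi_canon hXsub c j A
    _ = M j (A ∩ E) := heq j (A ∩ E) Finset.inter_subset_right
    _ = M j A := (hcanon j A).symm

end Assembly
end HypDev

open HypDev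

theorem stmt0 [DecidableEq α] {n : ℕ} (E : Finset α)
    (X : Fin n → Finset α)
    (hXsub : ∀ i, X i ⊆ E) (hXne : ∀ i, (X i).Nonempty)
    (hXinj : Function.Injective X)
    (t : Fin n → ℤ) (ht : ∀ i, 0 ≤ t i ∧ t i ≤ ((X i).card : ℤ))
    (hH2 : ∀ i j, i ≠ j → (X i ∩ X j).card ≤ 1)
    (hH3 : ¬ ∃ (a b c : α) (i j l : Fin n),
      a ≠ b ∧ a ≠ c ∧ b ≠ c ∧ X i = {a, b} ∧ X j = {a, c} ∧ X l = {b, c})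
    (hT : ∀ i, t i = 1 ∨
      ((∃ e ∈ X i, (hypW X e : ℤ) ≤ t i) ∧ t i < ((X i).card : ℤ))) :
    (∀ k : ℕ, 0 < k →
      Nonempty ({c : Fin n → Fin k // ProperColoring (lineGraph X) c} ≃
        ↥(Delta k E (hypRho X t)))) ∧
    (∀ m : ℕ,
      IsLeast {k : ℕ | 0 < k ∧ KDecomposable k E (hypRho X t)} m ↔
      IsLeast {k : ℕ | 0 < k ∧
        ∃ c : Fin n → Fin k, ProperColoring (lineGraph X) c} m) ∧
    (∀ k : ℕ, 0 < k →
      (Delta k E (hypRho X t)).ncard =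
        {c : Fin n → Fin k | ProperColoring (lineGraph X) c}.ncard) := by
  classical
  have ht1 : ∀ i, 1 ≤ t i := by
    intro i
    rcases hT i with h | ⟨⟨e, he, hw⟩, -⟩
    · omega
    · refine le_trans ?_ hw
      have : 0 < hypW X e := Finset.card_pos.2 ⟨i, by simp [hypW, he]⟩
      exact_mod_cast this
  have ht2 : ∀ i, t i ≤ ((X i).card : ℤ) := fun i => (ht i).2
  have hequiv : ∀ k : ℕ,
      Nonempty ({c : Fin n → Fin k // ProperColoring (lineGraph X) c} ≃
        ↥(Delta k E (hypRho X t))) := by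
    intro k
    have hbij : Function.Bijective
        (fun cp : {c : Fin n → Fin k // ProperColoring (lineGraph X) c} =>
          (⟨fun j A => phi X t cp.1 j A, phi_mem_Delta hXsub ht1 cp.2⟩ :
            ↥(Delta k E (hypRho X t)))) := by
      constructor
      · intro cp cp' h
        apply Subtype.ext
        apply phi_inj hXsub hXne hXinj ht1 ht2 hH2 hT cp.2 cp'.2
        intro j A
        exact congrFun (congrFun (congrArg Subtype.val h) j) A
      · intro Mp
        obtain ⟨c, hcprop, hceq⟩ :=
          delta_surj hXsub hXne hXinj ht2 hH2 hH3 hT Mp.2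
        exact ⟨⟨c, hcprop⟩, Subtype.ext hceq⟩
    exact ⟨Equiv.ofBijective _ hbij⟩
  have hKD : ∀ k : ℕ, KDecomposable k E (hypRho X t) ↔
      ∃ c : Fin n → Fin k, ProperColoring (lineGraph X) c := by
    intro k
    constructor
    · rintro ⟨M, hMat, hsum⟩
      have hmem : (fun i A => M i (A ∩ E)) ∈ Delta k E (hypRho X t) := by
        refine ⟨?_, ?_, ?_⟩
        · intro i
          obtain ⟨⟨h0, hmono, hsub⟩, h1⟩ := hMat i
          refine ⟨⟨?_, ?_, ?_⟩, ?_⟩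
          · show M i (∅ ∩ E) = 0
            rw [Finset.empty_inter]
            exact h0
          · intro A B hAB hBE
            show M i (A ∩ E) ≤ M i (B ∩ E)
            rw [Finset.inter_eq_left.2 (hAB.trans hBE), Finset.inter_eq_left.2 hBE]
            exact hmono A B hAB hBE
          · intro A B hAE hBE
            show M i ((A ∪ B) ∩ E) + M i ((A ∩ B) ∩ E) ≤ M i (A ∩ E) + M i (B ∩ E)
            rw [Finset.inter_eq_left.2 (Finset.union_subset hAE hBE),
              Finset.inter_eq_left.2 ((Finset.inter_subset_left).trans hAE),
              Finset.inter_eq_left.2 hAE, Finset.inter_eq_left.2 hBE]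
            exact hsub A B hAE hBE
          · intro e he
            show M i ({e} ∩ E) ≤ 1
            rw [Finset.inter_eq_left.2 (by simpa using he)]
            exact h1 e he
        · intro i A
          show M i (A ∩ E) = M i ((A ∩ E) ∩ E)
          rw [Finset.inter_assoc, Finset.inter_self]
        · intro A hAE
          rw [hsum A hAE]
          apply Finset.sum_congr rfl
          intro i _
          show M i A = M i (A ∩ E)
          rw [Finset.inter_eq_left.2 hAE]
      obtain ⟨F⟩ := hequiv k
      exact ⟨(F.symm ⟨_, hmem⟩).1, (F.symm ⟨_, hmem⟩).2⟩
    · rintro ⟨c, hcprop⟩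
      have hmem := phi_mem_Delta (t := t) hXsub ht1 hcprop
      exact ⟨fun j A => phi X t c j A, hmem.1, fun Xs hXs => hmem.2.2 Xs hXs⟩
  refine ⟨fun k _ => hequiv k, ?_, ?_⟩
  · intro m
    have hset : {k : ℕ | 0 < k ∧ KDecomposable k E (hypRho X t)}
        = {k : ℕ | 0 < k ∧ ∃ c : Fin n → Fin k, ProperColoring (lineGraph X) c} := by
      ext k
      simp only [Set.mem_setOf_eq]
      exact and_congr_right (fun _ => hKD k)
    rw [hset]
  · intro k _
    obtain ⟨F⟩ := hequiv k
    exact (Nat.card_congr F).symm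
end

section
/- Let (M_1, …, M_k) be a k-tuple of matroids on E with ρ(X) = r_{M_1}(X)+⋯+r_{M_k}(X) for all X ⊆ E, and let X be an incidence set of the polymatroid ρ. Then there is exactly one index i ∈ {1,…,k} such that every two distinct elements of X are parallel in M_i, and for every j ≠ i no two distinct elements of X are parallel in M_j. If moreover ρ(X) = 1 + Σ_{e∈X}(ρ({e})−1), then for every j ≠ i the only circuits of M_j contained in X are single-element circuits (loops). -/
variable {α : Type*}

/-- `e` and `f` are parallel elements of the matroid with rank function `r`:
distinct, neither is a loop, and `{e, f}` has rank one. -/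
def ParallelIn [DecidableEq α] (r : Finset α → ℤ) (e f : α) : Prop :=
  e ≠ f ∧ r {e} = 1 ∧ r {f} = 1 ∧ r ({e, f} : Finset α) = 1

/-- `C` is a circuit of the matroid with rank function `r`: a minimal dependent set. -/
def IsCircuitOf [DecidableEq α] (r : Finset α → ℤ) (C : Finset α) : Prop :=
  C.Nonempty ∧ r C < (C.card : ℤ) ∧
    ∀ e ∈ C, r (C.erase e) = ((C.erase e).card : ℤ)

section Aux
variable [DecidableEq α]

/-- The "drop" of a set: sum of singleton ranks minus the rank. -/
def pdrop (r : Finset α → ℤ) (A : Finset α) : ℤ := (∑ e ∈ A, r {e}) - r A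

theorem poly_subadd {E : Finset α} {r : Finset α → ℤ} (h : IsPolymatroidOn E r)
    {A B : Finset α} (hA : A ⊆ E) (hB : B ⊆ E) (hd : A ∩ B = ∅) :
    r (A ∪ B) ≤ r A + r B := by
  have h2 := h.2.2 A B hA hB
  rw [hd, h.1] at h2
  linarith

theorem pdrop_insert_le {E : Finset α} {r : Finset α → ℤ} (h : IsPolymatroidOn E r)
    {A : Finset α} {a : α} (ha : a ∉ A) (hE : insert a A ⊆ E) :
    pdrop r A ≤ pdrop r (insert a A) := by
  have haE : ({a} : Finset α) ⊆ E := by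
    simp only [Finset.singleton_subset_iff]
    exact hE (Finset.mem_insert_self a A)
  have hAE : A ⊆ E := (Finset.subset_insert a A).trans hE
  have hint : ({a} : Finset α) ∩ A = ∅ := Finset.singleton_inter_of_notMem ha
  have hs : r (insert a A) ≤ r {a} + r A := by
    have := poly_subadd h haE hAE hint
    rwa [← Finset.insert_eq] at this
  have hsum : (∑ e ∈ insert a A, r {e}) = r {a} + ∑ e ∈ A, r {e} :=
    Finset.sum_insert ha
  simp only [pdrop, hsum]
  linarith

theorem pdrop_union_mono {E : Finset α} {r : Finset α → ℤ} (h : IsPolymatroidOn E r) :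
    ∀ (S A : Finset α), A ∪ S ⊆ E → pdrop r A ≤ pdrop r (A ∪ S) := by
  intro S
  induction S using Finset.induction_on with
  | empty => intro A _; simp
  | @insert a S ha ih =>
    intro A hE
    by_cases hm : a ∈ A ∪ S
    · have heq : A ∪ insert a S = A ∪ S := by
        rw [Finset.union_insert, Finset.insert_eq_self.mpr hm]
      rw [heq]
      exact ih A (heq ▸ hE)
    · have h1 : A ∪ insert a S = insert a (A ∪ S) := Finset.union_insert a A S
      rw [h1]
      have hE' : insert a (A ∪ S) ⊆ E := h1 ▸ hE
      calc pdrop r A ≤ pdrop r (A ∪ S) :=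
            ih A ((Finset.subset_insert a (A ∪ S)).trans hE')
        _ ≤ pdrop r (insert a (A ∪ S)) := pdrop_insert_le h hm hE'

theorem pdrop_mono {E : Finset α} {r : Finset α → ℤ} (h : IsPolymatroidOn E r)
    {A B : Finset α} (hAB : A ⊆ B) (hBE : B ⊆ E) : pdrop r A ≤ pdrop r B := by
  have := pdrop_union_mono h (B \ A) A
    (by rw [Finset.union_sdiff_of_subset hAB]; exact hBE)
  rwa [Finset.union_sdiff_of_subset hAB] at this

theorem pdrop_nonneg {E : Finset α} {r : Finset α → ℤ} (h : IsPolymatroidOn E r)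
    {A : Finset α} (hA : A ⊆ E) : 0 ≤ pdrop r A := by
  have := pdrop_mono h (Finset.empty_subset A) hA
  simpa [pdrop, h.1] using this

theorem rank_nonneg {E : Finset α} {r : Finset α → ℤ} (h : IsPolymatroidOn E r)
    {A : Finset α} (hA : A ⊆ E) : 0 ≤ r A := by
  have := h.2.1 ∅ A (Finset.empty_subset A) hA
  rwa [h.1] at this

theorem pair_parallel_iff {E : Finset α} {r : Finset α → ℤ} (h : IsMatroidRankOn E r)
    {e f : α} (he : e ∈ E) (hf : f ∈ E) (hef : e ≠ f) :
    pdrop r {e, f} = 1 ↔ ParallelIn r e f := by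
  have hpe : ({e} : Finset α) ⊆ E := Finset.singleton_subset_iff.mpr he
  have hpf : ({f} : Finset α) ⊆ E := Finset.singleton_subset_iff.mpr hf
  have hpef : ({e, f} : Finset α) ⊆ E := by
    rw [Finset.insert_subset_iff]; exact ⟨he, hpf⟩
  have h1 : r {e} ≤ r {e, f} := h.1.2.1 {e} {e, f} (by simp) hpef
  have h2 : r {f} ≤ r {e, f} := h.1.2.1 {f} {e, f} (by simp) hpef
  have h3 : r {e} ≤ 1 := h.2 e he
  have h4 : r {f} ≤ 1 := h.2 f hf
  have h5 : 0 ≤ r {e} := rank_nonneg h.1 hpe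
  have h6 : 0 ≤ r {f} := rank_nonneg h.1 hpf
  have hsum : pdrop r {e, f} = r {e} + r {f} - r {e, f} := by
    simp only [pdrop, Finset.sum_pair hef]
  rw [hsum]
  constructor
  · intro hd
    exact ⟨hef, by omega, by omega, by omega⟩
  · rintro ⟨-, a, b, c⟩
    omega

theorem sum_eq_one_unique {k : ℕ} (s : Fin k → ℤ) (h0 : ∀ m, 0 ≤ s m)
    (h1 : ∑ m, s m = 1) : ∃ i, s i = 1 ∧ ∀ j, j ≠ i → s j = 0 := by
  have hex : ∃ i ∈ Finset.univ, (0 : ℤ) < s i := by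
    by_contra hc
    push_neg at hc
    have : ∑ m, s m ≤ 0 := Finset.sum_nonpos (fun m hm => hc m hm)
    omega
  obtain ⟨i, -, hi⟩ := hex
  have hsplit : s i + ∑ j ∈ Finset.univ.erase i, s j = ∑ m, s m :=
    Finset.add_sum_erase _ s (Finset.mem_univ i)
  have hrest0 : 0 ≤ ∑ j ∈ Finset.univ.erase i, s j :=
    Finset.sum_nonneg (fun j _ => h0 j)
  have hsi : s i = 1 := by omega
  have hrest : ∑ j ∈ Finset.univ.erase i, s j = 0 := by omega
  refine ⟨i, hsi, fun j hj => ?_⟩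
  have := (Finset.sum_eq_zero_iff_of_nonneg (fun j _ => h0 j)).mp hrest j
    (Finset.mem_erase.mpr ⟨hj, Finset.mem_univ j⟩)
  exact this

theorem pair_le_sum {k : ℕ} (s : Fin k → ℤ) (h0 : ∀ m, 0 ≤ s m)
    {i j : Fin k} (hij : i ≠ j) : s i + s j ≤ ∑ m, s m := by
  have h1 : ∑ m ∈ ({i, j} : Finset (Fin k)), s m = s i + s j := Finset.sum_pair hij
  calc s i + s j = ∑ m ∈ ({i, j} : Finset (Fin k)), s m := h1.symm
    _ ≤ ∑ m, s m := Finset.sum_le_sum_of_subset_of_nonneg (Finset.subset_univ _)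
        (fun m _ _ => h0 m)

theorem triple_le_sum {k : ℕ} (s : Fin k → ℤ) (h0 : ∀ m, 0 ≤ s m)
    {i j l : Fin k} (hij : i ≠ j) (hil : i ≠ l) (hjl : j ≠ l) :
    s i + s j + s l ≤ ∑ m, s m := by
  have h1 : ∑ m ∈ ({i, j, l} : Finset (Fin k)), s m = s i + (s j + s l) := by
    rw [Finset.sum_insert (by simp [hij, hil]), Finset.sum_pair hjl]
  calc s i + s j + s l = ∑ m ∈ ({i, j, l} : Finset (Fin k)), s m := by rw [h1]; ring
    _ ≤ ∑ m, s m := Finset.sum_le_sum_of_subset_of_nonneg (Finset.subset_univ _)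
        (fun m _ _ => h0 m)

end Aux

section Aux2
variable [DecidableEq α]

theorem rank_le_one_of_parallel {E : Finset α} {r : Finset α → ℤ} (h : IsMatroidRankOn E r)
    {X : Finset α} (hXE : X ⊆ E) {e0 : α} (he0 : e0 ∈ X)
    (hpar : ∀ f ∈ X, f ≠ e0 → r {e0, f} = 1) (h1 : r {e0} = 1) : r X ≤ 1 := by
  have he0E : e0 ∈ E := hXE he0
  have key : ∀ S : Finset α, S ⊆ X → r (insert e0 S) ≤ 1 := by
    intro S
    induction S using Finset.induction_on with
    | empty => intro _; simpa using le_of_eq h1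
    | @insert a S ha ih =>
      intro hsub
      have hSX : S ⊆ X := (Finset.subset_insert a S).trans hsub
      have haX : a ∈ X := hsub (Finset.mem_insert_self a S)
      by_cases hmem : a ∈ insert e0 S
      · have heq : insert e0 (insert a S) = insert e0 S := by
          rw [Finset.insert_comm, Finset.insert_eq_self.mpr hmem]
        rw [heq]
        exact ih hSX
      · have hae0 : a ≠ e0 := fun hh => hmem (hh ▸ Finset.mem_insert_self e0 S)
        have hpa : r {e0, a} = 1 := hpar a haX hae0
        have hA : insert e0 S ⊆ E := by
          rw [Finset.insert_subset_iff]
          exact ⟨he0E, hSX.trans hXE⟩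
        have hB : ({e0, a} : Finset α) ⊆ E := by
          rw [Finset.insert_subset_iff, Finset.singleton_subset_iff]
          exact ⟨he0E, hXE haX⟩
        have hsm := h.1.2.2 (insert e0 S) {e0, a} hA hB
        have haS : a ∉ S := fun hh => hmem (Finset.mem_insert_of_mem hh)
        have hun : insert e0 S ∪ {e0, a} = insert e0 (insert a S) := by
          ext x
          simp only [Finset.mem_union, Finset.mem_insert, Finset.mem_singleton]
          tauto
        have hin : insert e0 S ∩ {e0, a} = {e0} := by
          ext x
          simp only [Finset.mem_inter, Finset.mem_insert, Finset.mem_singleton]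
          constructor
          · rintro ⟨hx1, hx2⟩
            rcases hx2 with rfl | rfl
            · rfl
            · rcases hx1 with rfl | hx1
              · exact absurd rfl hae0
              · exact absurd hx1 haS
          · rintro rfl; exact ⟨Or.inl rfl, Or.inl rfl⟩
        rw [hun, hin] at hsm
        have := ih hSX
        omega
  have hX : insert e0 X = X := Finset.insert_eq_self.mpr he0
  have := key X (le_refl X)
  rwa [hX] at this

theorem circuit_singleton_of_pdrop_zero {E : Finset α} {r : Finset α → ℤ}
    (h : IsMatroidRankOn E r) {X C : Finset α} (hXE : X ⊆ E) (hCX : C ⊆ X)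
    (hdrop : pdrop r X = 0) (hC : IsCircuitOf r C) : ∃ e, C = {e} := by
  have hCE : C ⊆ E := hCX.trans hXE
  have hdC : pdrop r C = 0 :=
    le_antisymm (hdrop ▸ pdrop_mono h.1 hCX hXE) (pdrop_nonneg h.1 hCE)
  have hrC : r C = ∑ e ∈ C, r {e} := by
    simp only [pdrop] at hdC; omega
  have hcard1 : 1 ≤ C.card := Finset.card_pos.mpr hC.1
  suffices hcc : C.card = 1 by
    obtain ⟨e, he⟩ := Finset.card_eq_one.mp hcc
    exact ⟨e, he⟩
  by_contra hne
  have hc2 : 2 ≤ C.card := by omega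
  have hsingles : ∀ f ∈ C, r {f} = 1 := by
    intro f hf
    obtain ⟨e, he, hef⟩ := Finset.exists_mem_ne (s := C) (by omega) f
    have hfE : f ∈ C.erase e := Finset.mem_erase.mpr ⟨fun hh => hef (hh ▸ rfl), hf⟩
    have hre := hC.2.2 e he
    have hWE : C.erase e ⊆ E := (Finset.erase_subset e C).trans hCE
    have hd0 : 0 ≤ pdrop r (C.erase e) := pdrop_nonneg h.1 hWE
    have hub : ∑ g ∈ C.erase e, r {g} ≤ ((C.erase e).card : ℤ) := by
      calc ∑ g ∈ C.erase e, r {g} ≤ ∑ _g ∈ C.erase e, (1 : ℤ) :=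
            Finset.sum_le_sum (fun g hg => h.2 g (hWE hg))
        _ = ((C.erase e).card : ℤ) := by simp
    have hsum_eq : ∑ g ∈ C.erase e, r {g} = ((C.erase e).card : ℤ) := by
      simp only [pdrop, hre] at hd0; omega
    have hzero : ∑ g ∈ C.erase e, (1 - r {g}) = 0 := by
      rw [Finset.sum_sub_distrib, hsum_eq]; simp
    have := (Finset.sum_eq_zero_iff_of_nonneg
      (fun g hg => by have := h.2 g (hWE hg); omega)).mp hzero f hfE
    omega
  have : r C = (C.card : ℤ) := by
    rw [hrC]
    calc ∑ e ∈ C, r {e} = ∑ _e ∈ C, (1 : ℤ) :=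
          Finset.sum_congr rfl (fun e he => hsingles e he)
      _ = (C.card : ℤ) := by simp
  have := hC.2.1
  omega

end Aux2

theorem stmt1 [DecidableEq α] {k : ℕ} (E : Finset α) (ρ : Finset α → ℤ)
    (M : Fin k → Finset α → ℤ)
    (hM : ∀ i, IsMatroidRankOn E (M i))
    (hsum : ∀ A ⊆ E, ρ A = ∑ i, M i A)
    (X : Finset α) (hXE : X ⊆ E) (hX2 : 2 ≤ X.card)
    (hinc : ∀ Y ⊆ X, 1 ≤ Y.card → Y.card ≤ 3 →
      ρ Y = 1 + ∑ e ∈ Y, (ρ {e} - 1)) :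
    ∃ i : Fin k,
      (∀ e ∈ X, ∀ f ∈ X, e ≠ f → ParallelIn (M i) e f) ∧
      (∀ j, j ≠ i → ∀ e ∈ X, ∀ f ∈ X, e ≠ f → ¬ ParallelIn (M j) e f) ∧
      ((ρ X = 1 + ∑ e ∈ X, (ρ {e} - 1)) →
        ∀ j, j ≠ i → ∀ C ⊆ X, IsCircuitOf (M j) C → ∃ e, C = {e}) := by
  classical
  -- the drop of any set distributes over the matroids
  have hdsum : ∀ A ⊆ E, pdrop ρ A = ∑ m, pdrop (M m) A := by
    intro A hA
    have h1 : ∑ e ∈ A, ρ {e} = ∑ m, ∑ e ∈ A, M m {e} := by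
      rw [← Finset.sum_comm]
      exact Finset.sum_congr rfl
        (fun e he => hsum {e} (Finset.singleton_subset_iff.mpr (hA he)))
    simp only [pdrop]
    rw [hsum A hA, h1, Finset.sum_sub_distrib]
  have hpairE : ∀ e ∈ X, ∀ f ∈ X, ({e, f} : Finset α) ⊆ E := by
    intro e he f hf
    rw [Finset.insert_subset_iff, Finset.singleton_subset_iff]
    exact ⟨hXE he, hXE hf⟩
  -- drop of a pair inside X is 1
  have hpair : ∀ e ∈ X, ∀ f ∈ X, e ≠ f → pdrop ρ {e, f} = 1 := by
    intro e he f hf hef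
    have hYX : ({e, f} : Finset α) ⊆ X := by
      rw [Finset.insert_subset_iff, Finset.singleton_subset_iff]; exact ⟨he, hf⟩
    have hcard : ({e, f} : Finset α).card = 2 := Finset.card_pair hef
    have := hinc {e, f} hYX (by omega) (by omega)
    rw [Finset.sum_pair hef] at this
    simp only [pdrop, Finset.sum_pair hef]
    omega
  -- drop of a triple inside X is 2
  have htrip : ∀ e ∈ X, ∀ f ∈ X, ∀ g ∈ X, e ≠ f → e ≠ g → f ≠ g →
      pdrop ρ {e, f, g} = 2 := by
    intro e he f hf g hg hef heg hfg
    have hYX : ({e, f, g} : Finset α) ⊆ X := by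
      rw [Finset.insert_subset_iff, Finset.insert_subset_iff,
        Finset.singleton_subset_iff]
      exact ⟨he, hf, hg⟩
    have hnm : e ∉ ({f, g} : Finset α) := by simp [hef, heg]
    have hcard : ({e, f, g} : Finset α).card = 3 := by
      rw [Finset.card_insert_of_notMem hnm, Finset.card_pair hfg]
    have := hinc {e, f, g} hYX (by omega) (by omega)
    rw [Finset.sum_insert hnm, Finset.sum_pair hfg] at this
    simp only [pdrop, Finset.sum_insert hnm, Finset.sum_pair hfg]
    omega
  -- for each pair in X there is a unique matroid with drop one, others zero
  have hpidx : ∀ e ∈ X, ∀ f ∈ X, e ≠ f →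
      ∃ i, pdrop (M i) {e, f} = 1 ∧ ∀ j, j ≠ i → pdrop (M j) {e, f} = 0 := by
    intro e he f hf hef
    exact sum_eq_one_unique (fun m => pdrop (M m) {e, f})
      (fun m => pdrop_nonneg (hM m).1 (hpairE e he f hf))
      (by rw [← hdsum {e, f} (hpairE e he f hf)]; exact hpair e he f hf hef)
  have huniq : ∀ e ∈ X, ∀ f ∈ X, e ≠ f → ∀ p q,
      pdrop (M p) {e, f} = 1 → pdrop (M q) {e, f} = 1 → p = q := by
    intro e he f hf hef p q hp hq
    by_contra hpq
    have hsum1 : ∑ m, pdrop (M m) {e, f} = 1 := by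
      rw [← hdsum {e, f} (hpairE e he f hf)]; exact hpair e he f hf hef
    have := pair_le_sum (fun m => pdrop (M m) {e, f})
      (fun m => pdrop_nonneg (hM m).1 (hpairE e he f hf)) hpq
    simp only [hp, hq] at this
    omega
  -- the triple argument: two pairs sharing an element drop in the same matroid
  have htri : ∀ e ∈ X, ∀ f ∈ X, ∀ g ∈ X, e ≠ f → e ≠ g → f ≠ g → ∀ p q,
      pdrop (M p) {e, f} = 1 → pdrop (M q) {e, g} = 1 → p = q := by
    intro e he f hf g hg hef heg hfg p q hp hq
    by_contra hpq
    have hYE : ({e, f, g} : Finset α) ⊆ E := by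
      rw [Finset.insert_subset_iff, Finset.insert_subset_iff,
        Finset.singleton_subset_iff]
      exact ⟨hXE he, hXE hf, hXE hg⟩
    have h0 : ∀ m, 0 ≤ pdrop (M m) ({e, f, g} : Finset α) :=
      fun m => pdrop_nonneg (hM m).1 hYE
    have hsY : ∑ m, pdrop (M m) ({e, f, g} : Finset α) = 2 := by
      rw [← hdsum {e, f, g} hYE]
      exact htrip e he f hf g hg hef heg hfg
    have hefY : ({e, f} : Finset α) ⊆ {e, f, g} := by
      intro x hx
      simp only [Finset.mem_insert, Finset.mem_singleton] at hx ⊢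
      tauto
    have hegY : ({e, g} : Finset α) ⊆ {e, f, g} := by
      intro x hx
      simp only [Finset.mem_insert, Finset.mem_singleton] at hx ⊢
      tauto
    have hfgY : ({f, g} : Finset α) ⊆ {e, f, g} := by
      intro x hx
      simp only [Finset.mem_insert, Finset.mem_singleton] at hx ⊢
      tauto
    have hp1 : 1 ≤ pdrop (M p) ({e, f, g} : Finset α) := by
      have := pdrop_mono (hM p).1 hefY hYE; omega
    have hq1 : 1 ≤ pdrop (M q) ({e, f, g} : Finset α) := by
      have := pdrop_mono (hM q).1 hegY hYE; omega
    obtain ⟨l, hl, -⟩ := hpidx f hf g hg hfg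
    have hsumsY : ∑ x ∈ ({e, f, g} : Finset α), (fun m => M m) p {x} =
        M p {e} + (M p {f} + M p {g}) := by
      rw [Finset.sum_insert (by simp [hef, heg]), Finset.sum_pair hfg]
    by_cases hlp : l = p
    · subst hlp
      -- in M l : e ∥ f and f ∥ g
      have pef := (pair_parallel_iff (hM l) (hXE he) (hXE hf) hef).mp hp
      have pfg := (pair_parallel_iff (hM l) (hXE hf) (hXE hg) hfg).mp hl
      have hun : ({e, f} : Finset α) ∪ {f, g} = {e, f, g} := by
        ext x
        simp only [Finset.mem_union, Finset.mem_insert, Finset.mem_singleton]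
        tauto
      have hin : ({e, f} : Finset α) ∩ {f, g} = {f} := by
        ext x
        simp only [Finset.mem_inter, Finset.mem_insert, Finset.mem_singleton]
        constructor
        · rintro ⟨h1, h2⟩
          rcases h2 with rfl | rfl
          · rfl
          · rcases h1 with rfl | rfl
            · exact absurd rfl heg
            · exact absurd rfl hfg
        · rintro rfl; exact ⟨Or.inr rfl, Or.inl rfl⟩
      have hsm := (hM l).1.2.2 {e, f} {f, g} (hpairE e he f hf) (hpairE f hf g hg)
      rw [hun, hin] at hsm
      have hdl : 2 ≤ pdrop (M l) ({e, f, g} : Finset α) := by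
        have hse : ∑ x ∈ ({e, f, g} : Finset α), M l {x} =
            M l {e} + (M l {f} + M l {g}) := by
          rw [Finset.sum_insert (by simp [hef, heg]), Finset.sum_pair hfg]
        simp only [pdrop, hse]
        have h1 := pef.2.1
        have h2 := pef.2.2.1
        have h3 := pfg.2.2.1
        have h4 := pef.2.2.2
        have h5 := pfg.2.2.2
        omega
      have := pair_le_sum (fun m => pdrop (M m) ({e, f, g} : Finset α)) h0 hpq
      omega
    · by_cases hlq : l = q
      · subst hlq
        -- in M l : e ∥ g and f ∥ g
        have peg := (pair_parallel_iff (hM l) (hXE he) (hXE hg) heg).mp hq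
        have pfg := (pair_parallel_iff (hM l) (hXE hf) (hXE hg) hfg).mp hl
        have hun : ({e, g} : Finset α) ∪ {f, g} = {e, f, g} := by
          ext x
          simp only [Finset.mem_union, Finset.mem_insert, Finset.mem_singleton]
          tauto
        have hin : ({e, g} : Finset α) ∩ {f, g} = {g} := by
          ext x
          simp only [Finset.mem_inter, Finset.mem_insert, Finset.mem_singleton]
          constructor
          · rintro ⟨h1, h2⟩
            rcases h2 with rfl | rfl
            · rcases h1 with rfl | rfl
              · exact absurd rfl hef
              · exact absurd rfl (Ne.symm hfg)
            · rfl
          · rintro rfl; exact ⟨Or.inr rfl, Or.inr rfl⟩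
        have hsm := (hM l).1.2.2 {e, g} {f, g} (hpairE e he g hg) (hpairE f hf g hg)
        rw [hun, hin] at hsm
        have hdl : 2 ≤ pdrop (M l) ({e, f, g} : Finset α) := by
          have hse : ∑ x ∈ ({e, f, g} : Finset α), M l {x} =
              M l {e} + (M l {f} + M l {g}) := by
            rw [Finset.sum_insert (by simp [hef, heg]), Finset.sum_pair hfg]
          simp only [pdrop, hse]
          have h1 := peg.2.1
          have h2 := pfg.2.1
          have h3 := peg.2.2.1
          have h4 := peg.2.2.2
          have h5 := pfg.2.2.2
          omega
        have := pair_le_sum (fun m => pdrop (M m) ({e, f, g} : Finset α)) h0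
          (Ne.symm hpq)
        omega
      · -- three distinct matroids each with drop at least one
        have hl1 : 1 ≤ pdrop (M l) ({e, f, g} : Finset α) := by
          have := pdrop_mono (hM l).1 hfgY hYE; omega
        have := triple_le_sum (fun m => pdrop (M m) ({e, f, g} : Finset α)) h0
          hpq (fun h => hlp h.symm) (fun h => hlq h.symm)
        omega
  -- pick a reference pair and its matroid
  obtain ⟨e0, he0, f0, hf0, hne⟩ := Finset.one_lt_card.mp
    (by omega : 1 < X.card)
  obtain ⟨i, hi, -⟩ := hpidx e0 he0 f0 hf0 hne
  -- any two pairs drop in the same matroid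
  have hlink : ∀ a ∈ X, ∀ b ∈ X, ∀ c ∈ X, ∀ d ∈ X, a ≠ b → c ≠ d → ∀ p q,
      pdrop (M p) {a, b} = 1 → pdrop (M q) {c, d} = 1 → p = q := by
    intro a ha b hb c hc d hd hab hcd p q hp hq
    by_cases hac : a = c
    · subst hac
      by_cases hbd : b = d
      · subst hbd; exact huniq a ha b hb hab p q hp hq
      · exact htri a ha b hb d hd hab hcd hbd p q hp hq
    · by_cases had : a = d
      · subst had
        rw [Finset.pair_comm] at hq
        by_cases hbc : b = c
        · subst hbc; exact huniq a ha b hb hab p q hp hq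
        · exact htri a ha b hb c hc hab hac hbc p q hp hq
      · by_cases hbc : b = c
        · subst hbc
          rw [Finset.pair_comm] at hp
          by_cases had' : a = d
          · exact absurd had' had
          · exact htri b hb a ha d hd (Ne.symm hab) hcd had' p q hp hq
        · by_cases hbd : b = d
          · subst hbd
            rw [Finset.pair_comm] at hp hq
            exact htri b hb a ha c hc (Ne.symm hab) (Ne.symm hcd) hac p q hp hq
          · obtain ⟨l, hl, -⟩ := hpidx a ha c hc hac
            have h1 : p = l := htri a ha b hb c hc hab hac hbc p l hp hl
            have h2 : q = l := by
              rw [Finset.pair_comm] at hl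
              exact htri c hc d hd a ha hcd (fun h => hac h.symm)
                (fun h => had h.symm) q l hq hl
            rw [h1, h2]
  have hall : ∀ e ∈ X, ∀ f ∈ X, e ≠ f →
      pdrop (M i) {e, f} = 1 ∧ ∀ j, j ≠ i → pdrop (M j) {e, f} = 0 := by
    intro e he f hf hef
    obtain ⟨j, hj, hjo⟩ := hpidx e he f hf hef
    have hji : j = i := hlink e he f hf e0 he0 f0 hf0 hef hne j i hj hi
    subst hji
    exact ⟨hj, hjo⟩
  have hpar : ∀ e ∈ X, ∀ f ∈ X, e ≠ f → ParallelIn (M i) e f := by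
    intro e he f hf hef
    exact (pair_parallel_iff (hM i) (hXE he) (hXE hf) hef).mp
      (hall e he f hf hef).1
  refine ⟨i, hpar, ?_, ?_⟩
  · intro j hji e he f hf hef hpar'
    have h1 := (pair_parallel_iff (hM j) (hXE he) (hXE hf) hef).mpr hpar'
    have h2 := (hall e he f hf hef).2 j hji
    omega
  · intro hXd j hji C hCX hC
    -- all singletons of X have rank 1 in M i
    have hone : ∀ e ∈ X, M i {e} = 1 := by
      intro e he
      by_cases h : e = e0
      · subst h; exact (hpar e he f0 hf0 hne).2.1
      · exact (hpar e he e0 he0 h).2.1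
    have hpairone : ∀ f ∈ X, f ≠ e0 → M i {e0, f} = 1 :=
      fun f hf hfe0 => (hpar e0 he0 f hf (fun h => hfe0 h.symm)).2.2.2
    have hrle : M i X ≤ 1 :=
      rank_le_one_of_parallel (hM i) hXE he0 hpairone (hone e0 he0)
    have hsX : ∑ e ∈ X, ρ {e} - (X.card : ℤ) = ∑ e ∈ X, (ρ {e} - 1) := by
      rw [Finset.sum_sub_distrib]; simp
    have hdX : pdrop ρ X = (X.card : ℤ) - 1 := by
      simp only [pdrop]
      omega
    have hsumX : ∑ m, pdrop (M m) X = (X.card : ℤ) - 1 := by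
      rw [← hdsum X hXE, hdX]
    have hdiX : (X.card : ℤ) - 1 ≤ pdrop (M i) X := by
      have hse : ∑ e ∈ X, M i {e} = (X.card : ℤ) := by
        calc ∑ e ∈ X, M i {e} = ∑ _e ∈ X, (1 : ℤ) :=
              Finset.sum_congr rfl (fun e he => hone e he)
          _ = (X.card : ℤ) := by simp
      simp only [pdrop, hse]
      omega
    have h0X : ∀ m, 0 ≤ pdrop (M m) X := fun m => pdrop_nonneg (hM m).1 hXE
    have hj0 : pdrop (M j) X = 0 := by
      have := pair_le_sum (fun m => pdrop (M m) X) h0X (Ne.symm hji)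
      have := h0X j
      omega
    exact circuit_singleton_of_pdrop_zero (hM j) hXE hCX hj0 hC
end

section
/- Let (M_1, …, M_k) be a k-tuple of matroids on E with ρ(X) = r_{M_1}(X)+⋯+r_{M_k}(X) for all X ⊆ E. Let X and Y be incidence sets of ρ, and suppose there are elements a ∈ X and b ∈ Y with ρ({a,b}) = ρ({a}) + ρ({b}). If X ∩ Y ≠ ∅, then |X ∩ Y| = 1, and the unique index i ∈ {1,…,k} such that every two distinct elements of X are parallel in M_i is different from the unique index j ∈ {1,…,k} such that every two distinct elements of Y are parallel in M_j. -/
variable {α : Type*}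

/-- `X` is an incidence set of the polymatroid `ρ`. -/
def IsIncidenceSet [DecidableEq α] (ρ : Finset α → ℤ) (X : Finset α) : Prop :=
  2 ≤ X.card ∧
  ∀ Y ⊆ X, 1 ≤ Y.card → Y.card ≤ 3 → ρ Y = 1 + ∑ e ∈ Y, (ρ {e} - 1)


section Helpers
variable [DecidableEq α]

lemma sum_termwise_eq {ι : Type*} {s : Finset ι} {f g : ι → ℤ}
    (hle : ∀ l ∈ s, f l ≤ g l) (hs : ∑ l ∈ s, f l = ∑ l ∈ s, g l) :
    ∀ l ∈ s, f l = g l := by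
  intro l hl
  by_contra hne
  exact absurd hs (ne_of_lt (Finset.sum_lt_sum hle ⟨l, hl, lt_of_le_of_ne (hle l hl) hne⟩))

lemma exists_eq_one {n : ℕ} {g : Fin n → ℤ} (h0 : ∀ l, 0 ≤ g l)
    (h1 : ∑ l, g l = 1) : ∃ l, g l = 1 := by
  by_contra h
  push_neg at h
  have hz : ∀ l, g l = 0 := by
    intro l
    have hle : g l ≤ 1 := by
      calc g l ≤ ∑ l, g l := Finset.single_le_sum (fun i _ => h0 i) (Finset.mem_univ l)
        _ = 1 := h1
    have h2 := h l; have h3 := h0 l; omega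
  rw [Finset.sum_congr rfl (fun l _ => hz l)] at h1
  simp at h1

variable {E : Finset α} {ρ r : Finset α → ℤ}

lemma mat_nonneg (hr : IsMatroidRankOn E r) {A : Finset α} (hA : A ⊆ E) : 0 ≤ r A := by
  have h := hr.1.2.1 ∅ A (Finset.empty_subset A) hA
  rw [hr.1.1] at h
  exact h

lemma submod_bound (hr : IsMatroidRankOn E r) {A B C D : Finset α}
    (hA : A ⊆ E) (hB : B ⊆ E) (hC : C ⊆ A ∪ B) (hD : D ⊆ A ∩ B) :
    r C + r D ≤ r A + r B := by
  have h := hr.1.2.2 A B hA hB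
  have h1 : r C ≤ r (A ∪ B) := hr.1.2.1 _ _ hC (Finset.union_subset hA hB)
  have h2 : r D ≤ r (A ∩ B) :=
    hr.1.2.1 _ _ hD (subset_trans Finset.inter_subset_left hA)
  linarith

lemma pair_submod (hr : IsMatroidRankOn E r) {e f : α} (he : e ∈ E) (hf : f ∈ E) :
    r {e, f} ≤ r {e} + r {f} := by
  have hC : ({e, f} : Finset α) ⊆ {e} ∪ {f} := by
    rw [← Finset.insert_eq]
  have h := submod_bound hr (Finset.singleton_subset_iff.mpr he)
    (Finset.singleton_subset_iff.mpr hf) hC (Finset.empty_subset _)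
  rw [hr.1.1] at h
  linarith

lemma parallel_of_deficit (hr : IsMatroidRankOn E r) {e f : α}
    (he : e ∈ E) (hf : f ∈ E) (hne : e ≠ f)
    (h1 : r {e} + r {f} - r {e, f} = 1) : ParallelIn r e f := by
  have hpE : ({e, f} : Finset α) ⊆ E :=
    Finset.insert_subset he (Finset.singleton_subset_iff.mpr hf)
  have me : r {e} ≤ r {e, f} := hr.1.2.1 _ _ (by simp) hpE
  have mf : r {f} ≤ r {e, f} := hr.1.2.1 _ _ (by simp) hpE
  have ue : r {e} ≤ 1 := hr.2 e he
  have uf : r {f} ≤ 1 := hr.2 f hf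
  exact ⟨hne, by linarith, by linarith, by linarith⟩

lemma pair_le_one (hr : IsMatroidRankOn E r) {a b c : α}
    (ha : a ∈ E) (hb : b ∈ E) (hc : c ∈ E)
    (h1 : ParallelIn r c a) (h2 : ParallelIn r c b) : r {a, b} ≤ 1 := by
  have hA : ({c, a} : Finset α) ⊆ E :=
    Finset.insert_subset hc (Finset.singleton_subset_iff.mpr ha)
  have hB : ({c, b} : Finset α) ⊆ E :=
    Finset.insert_subset hc (Finset.singleton_subset_iff.mpr hb)
  have hC : ({a, b} : Finset α) ⊆ {c, a} ∪ {c, b} := by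
    intro x hx
    simp only [Finset.mem_insert, Finset.mem_singleton] at hx
    simp only [Finset.mem_union, Finset.mem_insert, Finset.mem_singleton]
    tauto
  have hD : ({c} : Finset α) ⊆ ({c, a} : Finset α) ∩ {c, b} := by
    simp
  have h := submod_bound hr hA hB hC hD
  rw [h1.2.2.2, h2.2.2.2, h2.2.1] at h
  linarith

lemma pair_exists {n : ℕ} {M : Fin n → Finset α → ℤ}
    (hM : ∀ i, IsMatroidRankOn E (M i)) {e f : α}
    (he : e ∈ E) (hf : f ∈ E) (hne : e ≠ f)
    (hval : ∑ l, M l {e, f} = ∑ l, M l {e} + ∑ l, M l {f} - 1) :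
    ∃ l, ParallelIn (M l) e f := by
  have h0 : ∀ l, 0 ≤ M l {e} + M l {f} - M l {e, f} := fun l => by
    have h := pair_submod (hM l) he hf; linarith
  have h1 : ∑ l, (M l {e} + M l {f} - M l {e, f}) = 1 := by
    rw [Finset.sum_sub_distrib, Finset.sum_add_distrib]
    linarith
  obtain ⟨l, hl⟩ := exists_eq_one h0 h1
  exact ⟨l, parallel_of_deficit (hM l) he hf hne hl⟩

lemma triple_par {n : ℕ} {M : Fin n → Finset α → ℤ}
    (hM : ∀ i, IsMatroidRankOn E (M i)) {e f g : α}
    (he : e ∈ E) (hf : f ∈ E) (hg : g ∈ E)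
    (heg : e ≠ g) (hfg : f ≠ g)
    (vef : ∑ l, M l {e, f} = ∑ l, M l {e} + ∑ l, M l {f} - 1)
    (vfg : ∑ l, M l {f, g} = ∑ l, M l {f} + ∑ l, M l {g} - 1)
    (veg : ∑ l, M l {e, g} = ∑ l, M l {e} + ∑ l, M l {g} - 1)
    (vtr : ∑ l, M l {e, f, g} = ∑ l, M l {e} + ∑ l, M l {f} + ∑ l, M l {g} - 2)
    {l : Fin n} (hl : ParallelIn (M l) e f) :
    ParallelIn (M l) e g ∧ ParallelIn (M l) f g := by
  set def_ef : Fin n → ℤ := fun l => M l {e} + M l {f} - M l {e, f} with hdef_ef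
  set def_fg : Fin n → ℤ := fun l => M l {f} + M l {g} - M l {f, g} with hdef_fg
  set def_eg : Fin n → ℤ := fun l => M l {e} + M l {g} - M l {e, g} with hdef_eg
  set T : Fin n → ℤ := fun l => M l {e} + M l {f} + M l {g} - M l {e, f, g} with hT
  have hefE : ({e, f} : Finset α) ⊆ E :=
    Finset.insert_subset he (Finset.singleton_subset_iff.mpr hf)
  have hfgE : ({f, g} : Finset α) ⊆ E :=
    Finset.insert_subset hf (Finset.singleton_subset_iff.mpr hg)
  have hegE : ({e, g} : Finset α) ⊆ E :=
    Finset.insert_subset he (Finset.singleton_subset_iff.mpr hg)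
  -- submodular bounds with common element e, f, g respectively
  have s_e : ∀ l, def_ef l + def_eg l ≤ T l := by
    intro l
    have hC : ({e, f, g} : Finset α) ⊆ {e, f} ∪ {e, g} := by
      intro x hx
      simp only [Finset.mem_insert, Finset.mem_singleton] at hx
      simp only [Finset.mem_union, Finset.mem_insert, Finset.mem_singleton]
      tauto
    have hD : ({e} : Finset α) ⊆ ({e, f} : Finset α) ∩ {e, g} := by simp
    have h := submod_bound (hM l) hefE hegE hC hD
    simp only [hdef_ef, hdef_eg, hT]
    linarith
  have s_f : ∀ l, def_ef l + def_fg l ≤ T l := by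
    intro l
    have hC : ({e, f, g} : Finset α) ⊆ {e, f} ∪ {f, g} := by
      intro x hx
      simp only [Finset.mem_insert, Finset.mem_singleton] at hx
      simp only [Finset.mem_union, Finset.mem_insert, Finset.mem_singleton]
      tauto
    have hD : ({f} : Finset α) ⊆ ({e, f} : Finset α) ∩ {f, g} := by simp
    have h := submod_bound (hM l) hefE hfgE hC hD
    simp only [hdef_ef, hdef_fg, hT]
    linarith
  have s_g : ∀ l, def_eg l + def_fg l ≤ T l := by
    intro l
    have hC : ({e, f, g} : Finset α) ⊆ {e, g} ∪ {f, g} := by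
      intro x hx
      simp only [Finset.mem_insert, Finset.mem_singleton] at hx
      simp only [Finset.mem_union, Finset.mem_insert, Finset.mem_singleton]
      tauto
    have hD : ({g} : Finset α) ⊆ ({e, g} : Finset α) ∩ {f, g} := by simp
    have h := submod_bound (hM l) hegE hfgE hC hD
    simp only [hdef_eg, hdef_fg, hT]
    linarith
  -- sums
  have sum_ef : ∑ l, def_ef l = 1 := by
    simp only [hdef_ef]
    rw [Finset.sum_sub_distrib, Finset.sum_add_distrib]
    linarith
  have sum_fg : ∑ l, def_fg l = 1 := by
    simp only [hdef_fg]
    rw [Finset.sum_sub_distrib, Finset.sum_add_distrib]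
    linarith
  have sum_eg : ∑ l, def_eg l = 1 := by
    simp only [hdef_eg]
    rw [Finset.sum_sub_distrib, Finset.sum_add_distrib]
    linarith
  have sum_T : ∑ l, T l = 2 := by
    simp only [hT]
    rw [Finset.sum_sub_distrib, Finset.sum_add_distrib, Finset.sum_add_distrib]
    linarith
  have eq_e : ∀ l, def_ef l + def_eg l = T l := by
    intro l
    refine sum_termwise_eq (f := fun l => def_ef l + def_eg l) (g := T)
      (fun l _ => s_e l) ?_ l (Finset.mem_univ l)
    rw [Finset.sum_add_distrib, sum_ef, sum_eg, sum_T]; norm_num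
  have eq_f : ∀ l, def_ef l + def_fg l = T l := by
    intro l
    refine sum_termwise_eq (f := fun l => def_ef l + def_fg l) (g := T)
      (fun l _ => s_f l) ?_ l (Finset.mem_univ l)
    rw [Finset.sum_add_distrib, sum_ef, sum_fg, sum_T]; norm_num
  have eq_g : ∀ l, def_eg l + def_fg l = T l := by
    intro l
    refine sum_termwise_eq (f := fun l => def_eg l + def_fg l) (g := T)
      (fun l _ => s_g l) ?_ l (Finset.mem_univ l)
    rw [Finset.sum_add_distrib, sum_eg, sum_fg, sum_T]; norm_num
  have def_ef_l : def_ef l = 1 := by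
    simp only [hdef_ef]
    rw [hl.2.1, hl.2.2.1, hl.2.2.2]
    norm_num
  have def_fg_l : def_fg l = 1 := by
    have h1 := eq_e l; have h2 := eq_g l; linarith
  have def_eg_l : def_eg l = 1 := by
    have h1 := eq_f l; have h2 := eq_g l; linarith
  exact ⟨parallel_of_deficit (hM l) he hg heg def_eg_l,
    parallel_of_deficit (hM l) hf hg hfg def_fg_l⟩

lemma inc_pair {X : Finset α} (h : IsIncidenceSet ρ X) {e f : α}
    (he : e ∈ X) (hf : f ∈ X) (hne : e ≠ f) :
    ρ {e, f} = ρ {e} + ρ {f} - 1 := by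
  have hsub : ({e, f} : Finset α) ⊆ X :=
    Finset.insert_subset he (Finset.singleton_subset_iff.mpr hf)
  have hc : ({e, f} : Finset α).card = 2 := Finset.card_pair hne
  have hval := h.2 {e, f} hsub (by omega) (by omega)
  rw [Finset.sum_pair hne] at hval
  linarith

lemma inc_triple {X : Finset α} (h : IsIncidenceSet ρ X) {e f g : α}
    (he : e ∈ X) (hf : f ∈ X) (hg : g ∈ X)
    (hef : e ≠ f) (heg : e ≠ g) (hfg : f ≠ g) :
    ρ {e, f, g} = ρ {e} + ρ {f} + ρ {g} - 2 := by
  have hsub : ({e, f, g} : Finset α) ⊆ X :=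
    Finset.insert_subset he (Finset.insert_subset hf (Finset.singleton_subset_iff.mpr hg))
  have hnm : e ∉ ({f, g} : Finset α) := by simp [hef, heg]
  have hc : ({e, f, g} : Finset α).card = 3 := by
    rw [Finset.card_insert_of_notMem hnm, Finset.card_pair hfg]
  have hval := h.2 {e, f, g} hsub (by omega) (by omega)
  rw [Finset.sum_insert hnm, Finset.sum_pair hfg] at hval
  linarith

end Helpers

theorem stmt2 [DecidableEq α] {k : ℕ} (E : Finset α) (ρ : Finset α → ℤ)
    (M : Fin k → Finset α → ℤ)
    (hM : ∀ i, IsMatroidRankOn E (M i))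
    (hsum : ∀ A ⊆ E, ρ A = ∑ i, M i A)
    (X Y : Finset α) (hXE : X ⊆ E) (hYE : Y ⊆ E)
    (hX : IsIncidenceSet ρ X) (hY : IsIncidenceSet ρ Y)
    (a b : α) (ha : a ∈ X) (hb : b ∈ Y)
    (hab : ρ ({a, b} : Finset α) = ρ {a} + ρ {b})
    (hXY : (X ∩ Y).Nonempty) :
    (X ∩ Y).card = 1 ∧
    ∀ i j : Fin k,
      (∀ e ∈ X, ∀ f ∈ X, e ≠ f → ParallelIn (M i) e f) →
      (∀ e ∈ Y, ∀ f ∈ Y, e ≠ f → ParallelIn (M j) e f) →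
      i ≠ j := by
  obtain ⟨c, hcmem⟩ := hXY
  rw [Finset.mem_inter] at hcmem
  obtain ⟨hcX, hcY⟩ := hcmem
  have haE : a ∈ E := hXE ha
  have hbE : b ∈ E := hYE hb
  have hcE : c ∈ E := hXE hcX
  have haE' : ({a} : Finset α) ⊆ E := Finset.singleton_subset_iff.mpr haE
  have hbE' : ({b} : Finset α) ⊆ E := Finset.singleton_subset_iff.mpr hbE
  -- a ≠ b
  have hab_ne : a ≠ b := by
    rintro rfl
    have hpair : ({a, a} : Finset α) = {a} := by simp
    rw [hpair] at hab
    have h0 : ρ {a} = 0 := by linarith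
    obtain ⟨e, heX, hea⟩ := Finset.exists_mem_ne (s := X) (by have := hX.1; omega) a
    have heE : e ∈ E := hXE heX
    have hpe := inc_pair hX ha heX (Ne.symm hea)
    have hsubae : ({a, e} : Finset α) ⊆ E :=
      Finset.insert_subset haE (Finset.singleton_subset_iff.mpr heE)
    have hmono : ρ {e} ≤ ρ {a, e} := by
      rw [hsum _ (Finset.singleton_subset_iff.mpr heE), hsum _ hsubae]
      exact Finset.sum_le_sum (fun l _ => (hM l).1.2.1 {e} {a, e} (by simp) hsubae)
    linarith
  -- key exclusions
  have haY : a ∉ Y := by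
    intro haY
    have h := inc_pair hY haY hb hab_ne
    linarith
  have hbX : b ∉ X := by
    intro hbX'
    have h := inc_pair hX ha hbX' hab_ne
    linarith
  have habE : ({a, b} : Finset α) ⊆ E :=
    Finset.insert_subset haE (Finset.singleton_subset_iff.mpr hbE)
  -- termwise equality for the pair {a, b}
  have hterm : ∀ l, M l ({a, b} : Finset α) = M l {a} + M l {b} := by
    intro l
    refine sum_termwise_eq (f := fun l => M l ({a, b} : Finset α))
      (g := fun l => M l {a} + M l {b})
      (fun l _ => pair_submod (hM l) haE hbE) ?_ l (Finset.mem_univ l)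
    rw [Finset.sum_add_distrib, ← hsum _ habE, ← hsum _ haE', ← hsum _ hbE']
    exact hab
  -- helpers to convert incidence values to sum form
  have valpair : ∀ {Z : Finset α}, Z ⊆ E → IsIncidenceSet ρ Z → ∀ {u v : α}, u ∈ Z → v ∈ Z → u ≠ v →
      ∑ l, M l ({u, v} : Finset α) = ∑ l, M l {u} + ∑ l, M l {v} - 1 := by
    intro Z hZE hZ u v hu hv huv
    have huE := hZE hu
    have hvE := hZE hv
    rw [← hsum _ (Finset.insert_subset huE (Finset.singleton_subset_iff.mpr hvE)),
      ← hsum _ (Finset.singleton_subset_iff.mpr huE),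
      ← hsum _ (Finset.singleton_subset_iff.mpr hvE)]
    exact inc_pair hZ hu hv huv
  have valtriple : ∀ {Z : Finset α}, Z ⊆ E → IsIncidenceSet ρ Z →
      ∀ {u v w : α}, u ∈ Z → v ∈ Z → w ∈ Z → u ≠ v → u ≠ w → v ≠ w →
      ∑ l, M l ({u, v, w} : Finset α) =
        ∑ l, M l {u} + ∑ l, M l {v} + ∑ l, M l {w} - 2 := by
    intro Z hZE hZ u v w hu hv hw huv huw hvw
    have huE := hZE hu
    have hvE := hZE hv
    have hwE := hZE hw
    rw [← hsum _ (Finset.insert_subset huE (Finset.insert_subset hvE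
        (Finset.singleton_subset_iff.mpr hwE))),
      ← hsum _ (Finset.singleton_subset_iff.mpr huE),
      ← hsum _ (Finset.singleton_subset_iff.mpr hvE),
      ← hsum _ (Finset.singleton_subset_iff.mpr hwE)]
    exact inc_triple hZ hu hv hw huv huw hvw
  refine ⟨?_, ?_⟩
  · -- |X ∩ Y| = 1
    by_contra hcard
    have h1 : 0 < (X ∩ Y).card :=
      Finset.card_pos.mpr ⟨c, Finset.mem_inter.mpr ⟨hcX, hcY⟩⟩
    have h2 : 1 < (X ∩ Y).card := by omega
    obtain ⟨u, hu, v, hv, huv⟩ := Finset.one_lt_card.mp h2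
    rw [Finset.mem_inter] at hu hv
    obtain ⟨huX, huY⟩ := hu
    obtain ⟨hvX, hvY⟩ := hv
    have huE : u ∈ E := hXE huX
    have hvE : v ∈ E := hXE hvX
    have hua : u ≠ a := fun h => haY (h ▸ huY)
    have hva : v ≠ a := fun h => haY (h ▸ hvY)
    have hub : u ≠ b := fun h => hbX (h ▸ huX)
    have hvb : v ≠ b := fun h => hbX (h ▸ hvX)
    obtain ⟨l, hluv⟩ := pair_exists hM huE hvE huv (valpair hXE hX huX hvX huv)
    obtain ⟨hua_par, hva_par⟩ := triple_par hM huE hvE haE hua hva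
      (valpair hXE hX huX hvX huv) (valpair hXE hX hvX ha hva)
      (valpair hXE hX huX ha hua)
      (valtriple hXE hX huX hvX ha huv hua hva) hluv
    obtain ⟨hub_par, hvb_par⟩ := triple_par hM huE hvE hbE hub hvb
      (valpair hYE hY huY hvY huv) (valpair hYE hY hvY hb hvb)
      (valpair hYE hY huY hb hub)
      (valtriple hYE hY huY hvY hb huv hub hvb) hluv
    have hle1 : M l ({a, b} : Finset α) ≤ 1 :=
      pair_le_one (hM l) haE hbE huE hua_par hub_par
    have h2' := hterm l
    have hMa : M l {a} = 1 := hua_par.2.2.1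
    have hMb : M l {b} = 1 := hub_par.2.2.1
    linarith
  · intro i j hi hj heq
    subst heq
    have hac : a ≠ c := fun h => haY (h ▸ hcY)
    have hbc : b ≠ c := fun h => hbX (h ▸ hcX)
    have p1 := hi c hcX a ha (Ne.symm hac)
    have p2 := hj c hcY b hb (Ne.symm hbc)
    have hle1 : M i ({a, b} : Finset α) ≤ 1 :=
      pair_le_one (hM i) haE hbE hcE p1 p2
    have h2' := hterm i
    linarith [p1.2.2.1, p2.2.2.1]
end
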